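/- arXiv:1001.2719 — 6 statements merged into one kernel-verified Lean document; each statement's English description precedes it below -/
import Mathlib

section
/- For every real number q with 0 < q < 1 and every real number u with 0 < |u| < min(2π, log(1/q)), one has the convergent identity −2·log( sin(u/2)/(u/2) ) + Σ_{n=1}^∞ [ 4·log(1−qⁿ) − 2·log(1 − 2cos(u)·qⁿ + q^{2n}) ] = Σ_{g=1}^∞ u^{2g} · ((−1)^{g+1} B_{2g} / (g·(2g)!)) · E_{2g}(q), where both infinite series converge absolutely. (This is the logarithmic identity proved in the paper's derivation of Corollary 2, expressing log( Δ(q) / (S(u)²·Δ(e^{iu},q)) ) as an Eisenstein series expansion; note 1 − 2cos(u)qⁿ + q^{2n} = |1 − e^{iu}qⁿ|² > 0.) -/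
set_option maxHeartbeats 2000000

open Filter Topology


/-- Real part of the log series: `∑ rⁿcos(nu)/n = -½ log(1-2cos u r + r²)`. -/
lemma aux_logre (r u : ℝ) (hr0 : 0 ≤ r) (hr1 : r < 1) :
    HasSum (fun n : ℕ => r ^ n * Real.cos (n * u) / n)
      (-(Real.log (1 - 2 * Real.cos u * r + r ^ 2) / 2)) := by
  set z : ℂ := (r : ℂ) * Complex.exp (u * Complex.I) with hz
  have hnz : ‖z‖ < 1 := by
    rw [hz, norm_mul, Complex.norm_exp_ofReal_mul_I]
    simpa [Complex.norm_real, _root_.abs_of_nonneg hr0] using hr1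
  have h := (Complex.hasSum_taylorSeries_neg_log hnz).mapL Complex.reCLM
  have hterm : ∀ n : ℕ, Complex.reCLM (z ^ n / n) = r ^ n * Real.cos (n * u) / n := by
    intro n
    have hzn : z ^ n = ((r ^ n : ℝ) : ℂ) * Complex.exp ((n * u : ℝ) * Complex.I) := by
      rw [hz, mul_pow, ← Complex.exp_nat_mul]
      push_cast
      ring_nf
    have : z ^ n / n = ((r ^ n / n : ℝ) : ℂ) * Complex.exp ((n * u : ℝ) * Complex.I) := by
      rw [hzn]; push_cast; ring
    rw [Complex.reCLM_apply, this, Complex.re_ofReal_mul, Complex.exp_ofReal_mul_I_re]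
    ring
  have hsum : Complex.reCLM (-Complex.log (1 - z)) =
      -(Real.log (1 - 2 * Real.cos u * r + r ^ 2) / 2) := by
    rw [Complex.reCLM_apply, Complex.neg_re, Complex.log_re]
    have habs : ‖1 - z‖ = Real.sqrt (1 - 2 * Real.cos u * r + r ^ 2) := by
      rw [Complex.norm_def]
      congr 1
      rw [Complex.normSq_apply]
      have hre : (1 - z).re = 1 - r * Real.cos u := by
        simp [hz, Complex.sub_re, Complex.re_ofReal_mul, Complex.exp_ofReal_mul_I_re]
      have him : (1 - z).im = -(r * Real.sin u) := by
        simp [hz, Complex.sub_im, Complex.im_ofReal_mul, Complex.exp_ofReal_mul_I_im]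
      rw [hre, him]
      nlinarith [Real.sin_sq_add_cos_sq u]
    have hpos : (0:ℝ) ≤ 1 - 2 * Real.cos u * r + r ^ 2 := by
      nlinarith [Real.neg_one_le_cos u, Real.cos_le_one u]
    rw [habs, Real.log_sqrt hpos]
  rw [hsum] at h
  exact h.congr_fun fun n => (hterm n).symm

/-- `∑ rⁿ/n = -log(1-r)` for `0 ≤ r < 1`. -/
lemma aux_log_one_sub (r : ℝ) (hr0 : 0 ≤ r) (hr1 : r < 1) :
    HasSum (fun n : ℕ => r ^ n / n) (-Real.log (1 - r)) := by
  have h := aux_logre r 0 hr0 hr1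
  have hval : -(Real.log (1 - 2 * Real.cos 0 * r + r ^ 2) / 2) = -Real.log (1 - r) := by
    rw [Real.cos_zero]
    have : 1 - 2 * 1 * r + r ^ 2 = (1 - r) ^ 2 := by ring
    rw [this, Real.log_pow]
    push_cast; ring
  rw [hval] at h
  refine h.congr_fun fun n => ?_
  rw [mul_zero, Real.cos_zero, mul_one]

/-- Key expansion of a single `n`-term of the `q`-series. -/
lemma logExpand (u r : ℝ) (hr0 : 0 ≤ r) (hr1 : r < 1) :
    HasSum (fun k : ℕ => -4 * (1 - Real.cos (((k : ℝ) + 1) * u)) * r ^ (k + 1) / ((k : ℝ) + 1))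
      (4 * Real.log (1 - r) - 2 * Real.log (1 - 2 * Real.cos u * r + r ^ 2)) := by
  have hA := (aux_logre r u hr0 hr1).mul_left 4
  have hB := (aux_log_one_sub r hr0 hr1).mul_left 4
  have h := hA.sub hB
  have hval : 4 * -(Real.log (1 - 2 * Real.cos u * r + r ^ 2) / 2) - 4 * -Real.log (1 - r)
      = 4 * Real.log (1 - r) - 2 * Real.log (1 - 2 * Real.cos u * r + r ^ 2) := by ring
  rw [hval] at h
  have h' := (hasSum_nat_add_iff (f := fun n : ℕ =>
      4 * (r ^ n * Real.cos (n * u) / n) - 4 * (r ^ n / n)) 1).mpr (by simpa using h)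
  refine h'.congr_fun fun k => ?_
  push_cast
  have hk : ((k : ℝ) + 1) ≠ 0 := by positivity
  field_simp
  ring

lemma lemA (u : ℝ) (hu0 : u ≠ 0) (hu2 : |u| < 2 * Real.pi) :
    HasSum (fun g : ℕ => u ^ (2 * (g + 1)) *
        ((-1 : ℝ) ^ (g + 1 + 1) * ((bernoulli (2 * (g + 1)) : ℚ) : ℝ) /
          (((g : ℝ) + 1) * ((Nat.factorial (2 * (g + 1)) : ℕ) : ℝ))))
      ((-2) * Real.log (Real.sin (u / 2) / (u / 2))) := by
  have hπ := Real.pi_pos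
  set x : ℝ := u / (2 * Real.pi) with hxdef
  have hx0 : x ≠ 0 := div_ne_zero hu0 (by positivity)
  have hxabs : |x| < 1 := by
    rw [hxdef, abs_div, abs_of_pos (by positivity : (0:ℝ) < 2 * Real.pi)]
    exact (div_lt_one (by positivity)).2 hu2
  have hx1 : x ^ 2 < 1 := by
    have := sq_abs x
    nlinarith [abs_nonneg x]
  have hx2pos : 0 < x ^ 2 := by positivity
  set t : ℕ → ℝ := fun j => x ^ 2 / ((j : ℝ) + 1) ^ 2 with ht
  have htpos : ∀ j, 0 < t j := fun j => by rw [ht]; positivity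
  have htle : ∀ j, t j ≤ x ^ 2 := by
    intro j
    rw [ht]
    have h1 : (1 : ℝ) ≤ ((j : ℝ) + 1) ^ 2 := by nlinarith [Nat.cast_nonneg (α := ℝ) j]
    exact div_le_self hx2pos.le h1
  have htlt : ∀ j, t j < 1 := fun j => lt_of_le_of_lt (htle j) hx1
  have hapos : ∀ j, 0 < 1 - t j := fun j => by linarith [htlt j]
  have hsin : 0 < Real.sin (u / 2) / (u / 2) := by
    rcases hu0.lt_or_gt with h | h
    · have h1 : -Real.pi < u / 2 := by rw [abs_of_neg h] at hu2; linarith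
      have h2 : u / 2 < 0 := by linarith
      exact div_pos_of_neg_of_neg (Real.sin_neg_of_neg_of_neg_pi_lt h2 h1) h2
    · have h1 : u / 2 < Real.pi := by rw [abs_of_pos h] at hu2; linarith
      exact div_pos (Real.sin_pos_of_pos_of_lt_pi (by linarith) h1) (by linarith)
  -- Euler product
  have hprod : Tendsto (fun N => ∏ j ∈ Finset.range N, (1 - t j)) atTop
      (𝓝 (Real.sin (u / 2) / (u / 2))) := by
    have h := Real.tendsto_euler_sin_prod x
    have hπx : Real.pi * x = u / 2 := by rw [hxdef]; field_simp
    rw [hπx] at h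
    have h2 := h.const_mul (2 / u)
    have heq : (fun n : ℕ => 2 / u * (u / 2 * ∏ j ∈ Finset.range n, (1 - x ^ 2 / ((j:ℝ) + 1) ^ 2)))
        = fun N => ∏ j ∈ Finset.range N, (1 - t j) := by
      funext n
      rw [ht, ← mul_assoc]
      field_simp
    have hval : 2 / u * Real.sin (u / 2) = Real.sin (u / 2) / (u / 2) := by
      field_simp
    rw [heq, hval] at h2
    exact h2
  -- summability of the logs
  have hlogle : ∀ j, |Real.log (1 - t j)| ≤ (x ^ 2 / (1 - x ^ 2)) * (1 / ((j : ℝ) + 1) ^ 2) := by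
    intro j
    have h1 : Real.log (1 - t j) ≤ 0 :=
      Real.log_nonpos (by linarith [htlt j]) (by linarith [htpos j])
    rw [abs_of_nonpos h1]
    have h2 : Real.log ((1 - t j)⁻¹) ≤ (1 - t j)⁻¹ - 1 :=
      Real.log_le_sub_one_of_pos (inv_pos.2 (hapos j))
    rw [Real.log_inv] at h2
    have h3 : (1 - t j)⁻¹ - 1 = t j / (1 - t j) := by
      rw [eq_div_iff (hapos j).ne', sub_mul, inv_mul_cancel₀ (hapos j).ne']
      ring
    have h4 : t j / (1 - t j) ≤ t j / (1 - x ^ 2) := by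
      rw [div_le_div_iff₀ (hapos j) (by linarith : (0:ℝ) < 1 - x ^ 2)]
      nlinarith [htpos j, htle j]
    have h5 : t j / (1 - x ^ 2) = x ^ 2 / (1 - x ^ 2) * (1 / ((j : ℝ) + 1) ^ 2) := by
      rw [ht]; field_simp
    linarith [h2, h3, h4, h5]
  have hbase : Summable fun j : ℕ => 1 / ((j : ℝ) + 1) ^ 2 := by
    have h0 := (Real.summable_one_div_nat_pow (p := 2)).mpr one_lt_two
    have h2 := (summable_nat_add_iff (f := fun n : ℕ => 1 / (n : ℝ) ^ 2) 1).mpr h0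
    exact h2.congr fun j => by push_cast; ring
  have hsummable : Summable fun j => Real.log (1 - t j) := by
    rw [← summable_abs_iff]
    exact Summable.of_nonneg_of_le (fun j => abs_nonneg _) hlogle (hbase.mul_left _)
  have hL : HasSum (fun j => Real.log (1 - t j)) (Real.log (Real.sin (u / 2) / (u / 2))) := by
    have h1 := hsummable.hasSum
    have h2 := h1.tendsto_sum_nat
    have h3 : Tendsto (fun N => ∑ j ∈ Finset.range N, Real.log (1 - t j)) atTop
        (𝓝 (Real.log (Real.sin (u / 2) / (u / 2)))) := by
      have h4 : (fun N => ∑ j ∈ Finset.range N, Real.log (1 - t j))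
          = fun N => Real.log (∏ j ∈ Finset.range N, (1 - t j)) := by
        funext N
        exact (Real.log_prod fun j _ => (hapos j).ne').symm
      rw [h4]
      exact hprod.log hsin.ne'
    rwa [tendsto_nhds_unique h2 h3] at h1
  -- double series
  set D : ℕ → ℕ → ℝ := fun j m => 2 * t j ^ (m + 1) / ((m : ℝ) + 1) with hD
  have hDnn : ∀ j m, 0 ≤ D j m := fun j m => by
    rw [hD]
    have := (htpos j).le
    positivity
  have hDj : ∀ j, HasSum (D j) (-2 * Real.log (1 - t j)) := by
    intro j
    have h := aux_log_one_sub (t j) (htpos j).le (htlt j)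
    have h' := (hasSum_nat_add_iff (f := fun n : ℕ => t j ^ n / n) 1).mpr (by simpa using h)
    have h2 := h'.mul_left 2
    have hval : 2 * -Real.log (1 - t j) = -2 * Real.log (1 - t j) := by ring
    rw [hval] at h2
    refine h2.congr_fun fun m => ?_
    rw [hD]
    push_cast
    ring
  have hDsummable : Summable (Function.uncurry D) := by
    refine (summable_prod_of_nonneg fun p => hDnn p.1 p.2).mpr ⟨fun j => (hDj j).summable, ?_⟩
    refine Summable.congr ((hsummable.mul_left (-2))) fun j => ?_
    exact ((hDj j).tsum_eq).symm
  -- columns: zeta values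
  have hz : ∀ m : ℕ, HasSum (fun j : ℕ => D j m)
      (2 * (x ^ 2) ^ (m + 1) / ((m : ℝ) + 1) *
        ((-1 : ℝ) ^ (m + 1 + 1) * 2 ^ (2 * (m + 1) - 1) * Real.pi ^ (2 * (m + 1)) *
          ((bernoulli (2 * (m + 1)) : ℚ) : ℝ) / ((2 * (m + 1)).factorial : ℝ))) := by
    intro m
    have h0 := hasSum_zeta_nat (k := m + 1) (Nat.succ_ne_zero m)
    have h1 : HasSum (fun j : ℕ => 1 / ((j : ℝ) + 1) ^ (2 * (m + 1)))
        ((-1 : ℝ) ^ (m + 1 + 1) * 2 ^ (2 * (m + 1) - 1) * Real.pi ^ (2 * (m + 1)) *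
          ((bernoulli (2 * (m + 1)) : ℚ) : ℝ) / ((2 * (m + 1)).factorial : ℝ)) := by
      have h2 := (hasSum_nat_add_iff (f := fun n : ℕ => 1 / (n : ℝ) ^ (2 * (m + 1))) 1).mpr
        (by simpa using h0)
      exact h2.congr_fun fun j => by push_cast; ring
    have h3 := h1.mul_left (2 * (x ^ 2) ^ (m + 1) / ((m : ℝ) + 1))
    refine h3.congr_fun fun j => ?_
    simp only [hD, ht]
    rw [pow_mul, div_pow]
    ring
  have hswap := hDsummable.tsum_comm' (fun j => (hDj j).summable) (fun m => (hz m).summable)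
  have hcolsum : Summable fun m => ∑' j, D j m := by
    have hsw : Summable fun p : ℕ × ℕ => D p.2 p.1 := hDsummable.prod_symm
    exact ((summable_prod_of_nonneg fun p => hDnn p.2 p.1).mp hsw).2
  -- per-column algebra
  have hAeq : ∀ m : ℕ, (∑' j, D j m) = u ^ (2 * (m + 1)) *
      ((-1 : ℝ) ^ (m + 1 + 1) * ((bernoulli (2 * (m + 1)) : ℚ) : ℝ) /
        (((m : ℝ) + 1) * ((Nat.factorial (2 * (m + 1)) : ℕ) : ℝ))) := by
    intro m
    rw [(hz m).tsum_eq]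
    have he1 : 2 * (m + 1) - 1 = 2 * m + 1 := by omega
    have he2 : 2 * (m + 1) = 2 * m + 1 + 1 := by omega
    have hfact : ((2 * (m + 1)).factorial : ℝ) ≠ 0 := by positivity
    have hm : ((m : ℝ) + 1) ≠ 0 := by positivity
    have hxval : (x ^ 2) ^ (m + 1) = u ^ (2 * (m + 1)) / (2 * Real.pi) ^ (2 * (m + 1)) := by
      rw [← pow_mul, hxdef, div_pow]
    rw [hxval, he1, mul_pow (2 : ℝ) Real.pi, he2]
    have hπne : Real.pi ≠ 0 := hπ.ne'
    field_simp
    ring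
  have hfinal : Summable (fun m : ℕ => u ^ (2 * (m + 1)) *
      ((-1 : ℝ) ^ (m + 1 + 1) * ((bernoulli (2 * (m + 1)) : ℚ) : ℝ) /
        (((m : ℝ) + 1) * ((Nat.factorial (2 * (m + 1)) : ℕ) : ℝ)))) :=
    hcolsum.congr hAeq
  refine (Summable.hasSum_iff hfinal).mpr ?_
  calc ∑' m, u ^ (2 * (m + 1)) *
      ((-1 : ℝ) ^ (m + 1 + 1) * ((bernoulli (2 * (m + 1)) : ℚ) : ℝ) /
        (((m : ℝ) + 1) * ((Nat.factorial (2 * (m + 1)) : ℕ) : ℝ)))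
      = ∑' m, ∑' j, D j m := tsum_congr fun m => (hAeq m).symm
    _ = ∑' j, ∑' m, D j m := hswap
    _ = ∑' j, -2 * Real.log (1 - t j) := tsum_congr fun j => (hDj j).tsum_eq
    _ = -2 * Real.log (Real.sin (u / 2) / (u / 2)) := by
        rw [tsum_mul_left, hL.tsum_eq]

lemma bern_aux (k : ℕ) (hk : k ≠ 0) :
    ((bernoulli (2 * k) : ℚ) : ℝ) ≠ 0 ∧
    |((bernoulli (2 * k) : ℚ) : ℝ)| / ((2 * k).factorial : ℝ) ≤ 4 / (2 * Real.pi) ^ (2 * k) := by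
  have hπ := Real.pi_pos
  set B : ℝ := ((bernoulli (2 * k) : ℚ) : ℝ) with hB
  set F : ℝ := ((2 * k).factorial : ℝ) with hF
  have hFpos : 0 < F := by rw [hF]; positivity
  have hz := hasSum_zeta_nat hk
  set Z : ℝ := (-1 : ℝ) ^ (k + 1) * 2 ^ (2 * k - 1) * Real.pi ^ (2 * k) * B / F with hZdef
  have h1 : (1 : ℝ) ≤ Z := by
    have h := le_hasSum hz 1 (fun i _ => by positivity)
    simpa using h
  have h2 : Z ≤ 2 := by
    have hle : Z ≤ Real.pi ^ 2 / 6 := by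
      refine hasSum_le (fun n => ?_) hz hasSum_zeta_two
      rcases Nat.eq_zero_or_pos n with rfl | hn
      · simp [zero_pow, hk, (by omega : 2 * k ≠ 0)]
      · have hn1 : (1 : ℝ) ≤ (n : ℝ) := by exact_mod_cast hn
        have hp : (n : ℝ) ^ 2 ≤ (n : ℝ) ^ (2 * k) := by
          apply pow_le_pow_right₀ hn1
          omega
        apply one_div_le_one_div_of_le (by positivity) hp
    nlinarith [Real.pi_lt_d2]
  have hZabs : 2 ^ (2 * k - 1) * Real.pi ^ (2 * k) * |B| / F = Z := by
    have habs : |Z| = 2 ^ (2 * k - 1) * Real.pi ^ (2 * k) * |B| / F := by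
      rw [hZdef]
      rw [abs_div, abs_mul, abs_mul, abs_mul]
      rw [abs_pow, abs_neg, abs_one, one_pow, one_mul]
      rw [abs_pow, abs_two, abs_pow, abs_of_pos hπ, abs_of_pos hFpos]
    rw [← habs, abs_of_nonneg (by linarith : (0:ℝ) ≤ Z)]
  have hBne : B ≠ 0 := by
    intro h
    rw [h] at hZabs
    simp at hZabs
    rw [← hZabs] at h1
    norm_num at h1
  refine ⟨hBne, ?_⟩
  have hp2 : (0 : ℝ) < (2 * Real.pi) ^ (2 * k) := by positivity
  rw [div_le_div_iff₀ hFpos hp2]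
  have he : 2 * k = (2 * k - 1) + 1 := by omega
  have hexp : (2 * Real.pi) ^ (2 * k) = 2 * (2 ^ (2 * k - 1) * Real.pi ^ (2 * k)) := by
    rw [mul_pow]
    nth_rewrite 1 [he]
    rw [pow_succ]
    ring
  have hineq : 2 ^ (2 * k - 1) * Real.pi ^ (2 * k) * |B| ≤ 2 * F := by
    have := (div_le_iff₀ hFpos).mp (hZabs ▸ h2)
    linarith
  rw [hexp]
  nlinarith [hineq]

/-- The Eisenstein series `E_{2g}(q) = 1 - (4g/B_{2g}) ∑_{k≥1} k^{2g-1} q^k/(1-q^k)`. -/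
noncomputable def Eis (g : ℕ) (q : ℝ) : ℝ :=
  1 - (4 * (g : ℝ) / ((bernoulli (2 * g) : ℚ) : ℝ)) *
    ∑' k : ℕ, (((k : ℝ) + 1) ^ (2 * g - 1) * q ^ (k + 1) / (1 - q ^ (k + 1)))


/-- The logarithmic identity behind Corollary 2 of Maulik–Pandharipande–Thomas:
`-2 log(sin(u/2)/(u/2)) + ∑_{n≥1} [4 log(1-qⁿ) - 2 log(1 - 2 cos(u) qⁿ + q^{2n})]
  = ∑_{g≥1} u^{2g} ((-1)^{g+1} B_{2g}/(g (2g)!)) E_{2g}(q)`,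
with both series converging absolutely. -/
theorem stmt0 (q u : ℝ) (hq0 : 0 < q) (hq1 : q < 1)
    (hu0 : 0 < |u|) (hu : |u| < min (2 * Real.pi) (Real.log (1 / q))) :
    (Summable fun n : ℕ =>
      |4 * Real.log (1 - q ^ (n + 1)) -
        2 * Real.log (1 - 2 * Real.cos u * q ^ (n + 1) + q ^ (2 * (n + 1)))|) ∧
    (Summable fun g : ℕ =>
      |u ^ (2 * (g + 1)) *
        ((-1 : ℝ) ^ (g + 1 + 1) * ((bernoulli (2 * (g + 1)) : ℚ) : ℝ) /
          (((g : ℝ) + 1) * ((Nat.factorial (2 * (g + 1)) : ℕ) : ℝ))) *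
        Eis (g + 1) q|) ∧
    (-2) * Real.log (Real.sin (u / 2) / (u / 2)) +
      ∑' n : ℕ, (4 * Real.log (1 - q ^ (n + 1)) -
        2 * Real.log (1 - 2 * Real.cos u * q ^ (n + 1) + q ^ (2 * (n + 1)))) =
      ∑' g : ℕ, u ^ (2 * (g + 1)) *
        ((-1 : ℝ) ^ (g + 1 + 1) * ((bernoulli (2 * (g + 1)) : ℚ) : ℝ) /
          (((g : ℝ) + 1) * ((Nat.factorial (2 * (g + 1)) : ℕ) : ℝ))) *
        Eis (g + 1) q := by
  have hπ := Real.pi_pos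
  obtain ⟨hu2π, hulog⟩ := lt_min_iff.mp hu
  have hune : u ≠ 0 := by
    intro h; rw [h] at hu0; simp at hu0
  have hE1 : 1 ≤ Real.exp |u| := Real.one_le_exp (abs_nonneg u)
  have hqe : q * Real.exp |u| < 1 := by
    have h1 : Real.exp |u| < Real.exp (Real.log (1 / q)) := Real.exp_lt_exp.mpr hulog
    rw [Real.exp_log (by positivity)] at h1
    calc q * Real.exp |u| < q * (1 / q) := by
          exact mul_lt_mul_of_pos_left h1 hq0
      _ = 1 := by field_simp
  have hqe0 : (0:ℝ) ≤ q * Real.exp |u| := by positivity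
  have hqn : ∀ n : ℕ, 0 < q ^ (n + 1) := fun n => by positivity
  have hqn1 : ∀ n : ℕ, q ^ (n + 1) < 1 := fun n => pow_lt_one₀ hq0.le hq1 (Nat.succ_ne_zero n)
  have h1q : ∀ n : ℕ, 0 < 1 - q ^ (n + 1) := fun n => by linarith [hqn1 n]
  have h1qq : (0:ℝ) < 1 - q := by linarith
  have hqle : ∀ n : ℕ, q ^ (n + 1) ≤ q := fun n => by
    calc q ^ (n + 1) ≤ q ^ 1 := pow_le_pow_of_le_one hq0.le hq1.le (by omega)
      _ = q := pow_one q
  have hsq : ∀ n : ℕ, q ^ (2 * (n + 1)) = (q ^ (n + 1)) ^ 2 := fun n => by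
    rw [← pow_mul, mul_comm 2 (n + 1)]
  -- the q-series terms
  set L : ℕ → ℝ := fun n => 4 * Real.log (1 - q ^ (n + 1)) -
      2 * Real.log (1 - 2 * Real.cos u * q ^ (n + 1) + q ^ (2 * (n + 1))) with hLdef
  have hLrep : ∀ n : ℕ, HasSum
      (fun k : ℕ => -4 * (1 - Real.cos (((k : ℝ) + 1) * u)) * (q ^ (n + 1)) ^ (k + 1) / ((k : ℝ) + 1))
      (L n) := by
    intro n
    have h := logExpand u (q ^ (n + 1)) (hqn n).le (hqn1 n)
    simp only [hLdef]
    rw [hsq n]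
    exact h
  have hcosb : ∀ y : ℝ, |1 - Real.cos y| ≤ 2 := by
    intro y
    rw [abs_le]
    constructor <;> nlinarith [Real.neg_one_le_cos y, Real.cos_le_one y]
  have habsterm : ∀ n k : ℕ,
      |(-4 : ℝ) * (1 - Real.cos (((k : ℝ) + 1) * u)) * (q ^ (n + 1)) ^ (k + 1) / ((k : ℝ) + 1)|
      ≤ 8 * (q ^ (n + 1)) ^ (k + 1) := by
    intro n k
    have hp : (0:ℝ) < (q ^ (n + 1)) ^ (k + 1) := by positivity
    have hk1 : (1:ℝ) ≤ (k : ℝ) + 1 := by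
      have := Nat.cast_nonneg (α := ℝ) k; linarith
    rw [abs_div, abs_mul, abs_mul, abs_of_pos hp,
      abs_of_pos (show (0:ℝ) < (k:ℝ) + 1 by linarith), (by norm_num : |(-4:ℝ)| = 4)]
    rw [div_le_iff₀ (by linarith : (0:ℝ) < (k:ℝ) + 1)]
    nlinarith [mul_le_mul_of_nonneg_right (hcosb (((k:ℝ)+1)*u)) hp.le, hp.le,
      abs_nonneg (1 - Real.cos (((k:ℝ)+1)*u)),
      mul_nonneg hp.le (sub_nonneg.mpr hk1)]
  -- geometric series starting at 1
  have hgeo : ∀ r : ℝ, 0 ≤ r → r < 1 → HasSum (fun n : ℕ => r ^ (n + 1)) (r / (1 - r)) := by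
    intro r h0 h1
    have h := (hasSum_geometric_of_lt_one h0 h1).mul_left r
    rw [div_eq_mul_inv]
    exact h.congr_fun fun n => (pow_succ' r n)
  -- Part (i)
  have hLbound : ∀ n, |L n| ≤ 8 / (1 - q) * q ^ (n + 1) := by
    intro n
    have hs := hLrep n
    have hmaj : Summable fun k : ℕ => 8 * (q ^ (n + 1)) ^ (k + 1) :=
      ((hgeo _ (hqn n).le (hqn1 n)).summable).mul_left 8
    have habs2 : Summable fun k : ℕ => |(-4 : ℝ) * (1 - Real.cos (((k : ℝ) + 1) * u)) *
        (q ^ (n + 1)) ^ (k + 1) / ((k : ℝ) + 1)| :=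
      Summable.of_nonneg_of_le (fun k => abs_nonneg _) (habsterm n) hmaj
    have hstep1 : |L n| ≤ ∑' k : ℕ, |(-4 : ℝ) * (1 - Real.cos (((k : ℝ) + 1) * u)) *
        (q ^ (n + 1)) ^ (k + 1) / ((k : ℝ) + 1)| := by
      have h := norm_tsum_le_tsum_norm (f := fun k : ℕ => (-4 : ℝ) * (1 - Real.cos (((k : ℝ) + 1) * u)) *
          (q ^ (n + 1)) ^ (k + 1) / ((k : ℝ) + 1)) (by simpa only [Real.norm_eq_abs] using habs2)
      simp only [Real.norm_eq_abs] at h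
      rwa [hs.tsum_eq] at h
    have hstep2 : ∑' k : ℕ, |(-4 : ℝ) * (1 - Real.cos (((k : ℝ) + 1) * u)) *
        (q ^ (n + 1)) ^ (k + 1) / ((k : ℝ) + 1)| ≤ ∑' k : ℕ, 8 * (q ^ (n + 1)) ^ (k + 1) :=
      habs2.tsum_le_tsum (habsterm n) hmaj
    have hstep3 : ∑' k : ℕ, 8 * (q ^ (n + 1)) ^ (k + 1) = 8 * (q ^ (n+1) / (1 - q ^ (n+1))) :=
      ((hgeo _ (hqn n).le (hqn1 n)).mul_left 8).tsum_eq
    have hstep4 : 8 * (q ^ (n+1) / (1 - q ^ (n+1))) ≤ 8 / (1 - q) * q ^ (n + 1) := by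
      rw [show (8:ℝ) / (1 - q) * q ^ (n + 1) = 8 * (q ^ (n+1) / (1 - q)) by ring]
      have hd : q ^ (n+1) / (1 - q ^ (n+1)) ≤ q ^ (n+1) / (1 - q) := by
        rw [div_le_div_iff₀ (h1q n) h1qq]
        nlinarith [hqle n, (hqn n).le]
      linarith
    linarith
  have hsummableL : Summable fun n => |L n| :=
    Summable.of_nonneg_of_le (fun n => abs_nonneg _) hLbound
      (((hgeo q hq0.le hq1).summable).mul_left _)
  -- First double series: swap n and k
  set Fc : ℕ → ℕ → ℝ := fun n k =>
    -4 * (1 - Real.cos (((k : ℝ) + 1) * u)) * q ^ ((n + 1) * (k + 1)) / ((k : ℝ) + 1) with hFcdef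
  have hFeq : ∀ n k, Fc n k =
      -4 * (1 - Real.cos (((k : ℝ) + 1) * u)) * (q ^ (n + 1)) ^ (k + 1) / ((k : ℝ) + 1) := by
    intro n k
    simp only [hFcdef]
    rw [← pow_mul]
  have hFabs : Summable fun p : ℕ × ℕ => |Fc p.1 p.2| := by
    have hmaj : Summable fun p : ℕ × ℕ => (8 * q ^ (p.1 + 1)) * q ^ p.2 := by
      have hf : Summable fun n : ℕ => 8 * q ^ (n + 1) := ((hgeo q hq0.le hq1).summable).mul_left 8
      have hg : Summable fun k : ℕ => q ^ k := summable_geometric_of_lt_one hq0.le hq1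
      exact Summable.mul_of_nonneg hf hg (fun n => by positivity) (fun k => by positivity)
    refine Summable.of_nonneg_of_le (fun p => abs_nonneg _) (fun p => ?_) hmaj
    obtain ⟨n, k⟩ := p
    have hb1 := habsterm n k
    rw [← hFeq n k] at hb1
    refine hb1.trans ?_
    have hle : q ^ ((n + 1) * (k + 1)) ≤ q ^ (n + 1 + k) := by
      apply pow_le_pow_of_le_one hq0.le hq1.le
      nlinarith [Nat.zero_le (n * k)]
    calc 8 * (q ^ (n + 1)) ^ (k + 1) = 8 * q ^ ((n + 1) * (k + 1)) := by rw [← pow_mul]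
      _ ≤ 8 * q ^ (n + 1 + k) := by nlinarith
      _ = 8 * q ^ (n + 1) * q ^ k := by rw [pow_add]; ring
  have hFsummable : Summable (Function.uncurry Fc) := by
    have := summable_abs_iff.mp hFabs
    exact this
  have hFrow : ∀ n, Summable fun k => Fc n k := fun n =>
    ((hLrep n).summable).congr fun k => (hFeq n k).symm
  have hFrowsum : ∀ n, ∑' k, Fc n k = L n := fun n => by
    rw [tsum_congr (fun k => hFeq n k), (hLrep n).tsum_eq]
  -- column sums
  set M : ℕ → ℝ := fun k =>
    -4 * (1 - Real.cos (((k : ℝ) + 1) * u)) * (q ^ (k + 1) / (1 - q ^ (k + 1))) / ((k : ℝ) + 1)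
    with hMdef
  have hFcol : ∀ k, HasSum (fun n => Fc n k) (M k) := by
    intro k
    have hg := (hgeo (q ^ (k + 1)) (hqn k).le (hqn1 k)).mul_left
      (-4 * (1 - Real.cos (((k : ℝ) + 1) * u)) / ((k : ℝ) + 1))
    have hval : -4 * (1 - Real.cos (((k : ℝ) + 1) * u)) / ((k : ℝ) + 1) *
        (q ^ (k + 1) / (1 - q ^ (k + 1))) = M k := by
      simp only [hMdef]; ring
    rw [hval] at hg
    refine hg.congr_fun fun n => ?_
    simp only [hFcdef]
    rw [show (n + 1) * (k + 1) = (k + 1) * (n + 1) from Nat.mul_comm _ _, pow_mul]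
    ring
  have hswap1 : ∑' k, ∑' n, Fc n k = ∑' n, ∑' k, Fc n k :=
    hFsummable.tsum_comm' hFrow (fun k => (hFcol k).summable)
  have hLsum_eq : ∑' n, L n = ∑' k, M k := by
    rw [← tsum_congr hFrowsum, ← hswap1, tsum_congr (fun k => (hFcol k).tsum_eq)]
  -- cos series: 1 - cos y
  have hcos_exp : ∀ y : ℝ, HasSum
      (fun g : ℕ => (-1 : ℝ) ^ g * y ^ (2 * (g + 1)) / ((2 * (g + 1)).factorial : ℝ))
      (1 - Real.cos y) := by
    intro y
    have h := (Real.hasSum_cos y).neg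
    have h0 : (1 - Real.cos y) + ∑ i ∈ Finset.range 1,
        -((-1 : ℝ) ^ i * y ^ (2 * i) / ((2 * i).factorial : ℝ)) = -Real.cos y := by
      simp [Nat.factorial]
      ring
    have h' := (hasSum_nat_add_iff
      (f := fun j : ℕ => -((-1 : ℝ) ^ j * y ^ (2 * j) / ((2 * j).factorial : ℝ))) 1).mpr
      (by rw [h0]; exact h)
    refine h'.congr_fun fun g => ?_
    rw [pow_succ]
    ring
  -- exp series
  have hexpsum : ∀ y : ℝ, HasSum (fun m : ℕ => y ^ m / (m.factorial : ℝ)) (Real.exp y) := by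
    intro y
    have h := NormedSpace.expSeries_div_hasSum_exp y
    rwa [← Real.exp_eq_exp_ℝ] at h
  have hinj : Function.Injective (fun g : ℕ => 2 * (g + 1)) := fun a b h => by simp only [] at h; omega
  -- the second double family
  set Gc : ℕ → ℕ → ℝ := fun k g =>
    -4 * ((-1 : ℝ) ^ g * (((k : ℝ) + 1) * u) ^ (2 * (g + 1)) / ((2 * (g + 1)).factorial : ℝ)) *
      (q ^ (k + 1) / (1 - q ^ (k + 1))) / ((k : ℝ) + 1) with hGcdef
  have hGrow : ∀ k, HasSum (fun g => Gc k g) (M k) := by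
    intro k
    have h := (hcos_exp (((k : ℝ) + 1) * u)).mul_left
      (-4 * (q ^ (k + 1) / (1 - q ^ (k + 1))) / ((k : ℝ) + 1))
    have hval : -4 * (q ^ (k + 1) / (1 - q ^ (k + 1))) / ((k : ℝ) + 1) *
        (1 - Real.cos (((k : ℝ) + 1) * u)) = M k := by
      simp only [hMdef]; ring
    rw [hval] at h
    refine h.congr_fun fun g => ?_
    simp only [hGcdef]
    ring
  -- |Gc| analysis
  have hk1pos : ∀ k : ℕ, (0:ℝ) < (k : ℝ) + 1 := fun k => by positivity
  set y : ℕ → ℝ := fun k => ((k : ℝ) + 1) * |u| with hydef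
  have hynn : ∀ k, 0 ≤ y k := fun k => by simp only [hydef]; positivity
  set C : ℕ → ℝ := fun k => 4 * (q ^ (k + 1) / (1 - q ^ (k + 1))) / ((k : ℝ) + 1) with hCdef
  have hCnn : ∀ k, 0 ≤ C k := fun k => by
    simp only [hCdef]
    have := (h1q k).le
    positivity
  have hGabs_eq : ∀ k g, |Gc k g| =
      C k * (y k ^ (2 * (g + 1)) / ((2 * (g + 1)).factorial : ℝ)) := by
    intro k g
    have heven : (((k : ℝ) + 1) * u) ^ (2 * (g + 1)) = y k ^ (2 * (g + 1)) := by
      rw [pow_mul, pow_mul, ← sq_abs (((k : ℝ) + 1) * u), abs_mul,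
        abs_of_pos (hk1pos k)]
    have h1 : Gc k g = (-1 : ℝ) ^ (g + 1) *
        (C k * (y k ^ (2 * (g + 1)) / ((2 * (g + 1)).factorial : ℝ))) := by
      simp only [hGcdef, hCdef]
      rw [heven]
      rw [pow_succ]
      ring
    rw [h1, abs_mul, abs_pow, abs_neg, abs_one, one_pow, one_mul]
    refine abs_of_nonneg ?_
    have h2 := hCnn k
    have h3 := hynn k
    positivity
  have hGrowabs : ∀ k, Summable fun g => |Gc k g| := by
    intro k
    have hsub : Summable fun g : ℕ => y k ^ (2 * (g + 1)) / ((2 * (g + 1)).factorial : ℝ) :=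
      (hexpsum (y k)).summable.comp_injective hinj
    exact (hsub.mul_left (C k)).congr fun g => (hGabs_eq k g).symm
  have hsub_le : ∀ k, (∑' g : ℕ, y k ^ (2 * (g + 1)) / ((2 * (g + 1)).factorial : ℝ))
      ≤ Real.exp (y k) := by
    intro k
    have hsub : Summable fun g : ℕ => y k ^ (2 * (g + 1)) / ((2 * (g + 1)).factorial : ℝ) :=
      (hexpsum (y k)).summable.comp_injective hinj
    have h := hsub.tsum_le_tsum_of_inj (fun g : ℕ => 2 * (g + 1)) hinj
      (fun c _ => by have := hynn k; positivity) (fun g => le_rfl) (hexpsum (y k)).summable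
    rwa [(hexpsum (y k)).tsum_eq] at h
  have hGcol_bound : ∀ k, (∑' g, |Gc k g|) ≤ 4 / (1 - q) * (q * Real.exp |u|) ^ (k + 1) := by
    intro k
    have hsub : Summable fun g : ℕ => y k ^ (2 * (g + 1)) / ((2 * (g + 1)).factorial : ℝ) :=
      (hexpsum (y k)).summable.comp_injective hinj
    have h1 : (∑' g, |Gc k g|) = C k * ∑' g : ℕ, y k ^ (2 * (g + 1)) /
        ((2 * (g + 1)).factorial : ℝ) := by
      rw [tsum_congr (hGabs_eq k), tsum_mul_left]
    rw [h1]
    have hexpy : Real.exp (y k) = Real.exp |u| ^ (k + 1) := by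
      simp only [hydef]
      rw [show ((k : ℝ) + 1) = ((k + 1 : ℕ) : ℝ) by push_cast; ring, Real.exp_nat_mul]
    have hCle : C k ≤ 4 * q ^ (k + 1) / (1 - q) := by
      simp only [hCdef]
      have hd : q ^ (k + 1) / (1 - q ^ (k + 1)) ≤ q ^ (k + 1) / (1 - q) := by
        rw [div_le_div_iff₀ (h1q k) h1qq]
        nlinarith [hqle k, (hqn k).le]
      have hk1 : (1:ℝ) ≤ (k : ℝ) + 1 := by have := Nat.cast_nonneg (α := ℝ) k; linarith
      calc 4 * (q ^ (k + 1) / (1 - q ^ (k + 1))) / ((k : ℝ) + 1)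
          ≤ 4 * (q ^ (k + 1) / (1 - q ^ (k + 1))) / 1 := by
            apply div_le_div_of_nonneg_left _ one_pos hk1
            have := (h1q k).le
            positivity
        _ = 4 * (q ^ (k + 1) / (1 - q ^ (k + 1))) := by ring
        _ ≤ 4 * (q ^ (k + 1) / (1 - q)) := by linarith
        _ = 4 * q ^ (k + 1) / (1 - q) := by ring
    calc C k * ∑' g : ℕ, y k ^ (2 * (g + 1)) / ((2 * (g + 1)).factorial : ℝ)
        ≤ (4 * q ^ (k + 1) / (1 - q)) * Real.exp (y k) := by
          apply mul_le_mul hCle (hsub_le k) (tsum_nonneg fun g => by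
            have := hynn k; positivity) (by positivity)
      _ = 4 / (1 - q) * (q * Real.exp |u|) ^ (k + 1) := by
          rw [hexpy, mul_pow]
          ring
  have hGabs : Summable fun p : ℕ × ℕ => |Gc p.1 p.2| := by
    refine (summable_prod_of_nonneg fun p => abs_nonneg _).mpr ⟨hGrowabs, ?_⟩
    refine Summable.of_nonneg_of_le (fun k => tsum_nonneg fun g => abs_nonneg _) hGcol_bound ?_
    exact ((hgeo _ hqe0 hqe).summable).mul_left _
  have hGsummable : Summable (Function.uncurry Gc) := summable_abs_iff.mp hGabs
  -- column sums of Gc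
  set T : ℕ → ℝ := fun g =>
    ∑' k : ℕ, (((k : ℝ) + 1) ^ (2 * (g + 1) - 1) * q ^ (k + 1) / (1 - q ^ (k + 1))) with hTdef
  set Cg : ℕ → ℝ := fun g =>
    -4 * (-1 : ℝ) ^ g * u ^ (2 * (g + 1)) / ((2 * (g + 1)).factorial : ℝ) with hCgdef
  have hGc_factor : ∀ k g, Gc k g = Cg g *
      (((k : ℝ) + 1) ^ (2 * (g + 1) - 1) * q ^ (k + 1) / (1 - q ^ (k + 1))) := by
    intro k g
    simp only [hGcdef, hCgdef]
    have he : 2 * (g + 1) = (2 * (g + 1) - 1) + 1 := by omega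
    rw [mul_pow]
    nth_rewrite 1 [he]
    rw [pow_succ]
    have hk : ((k : ℝ) + 1) ≠ 0 := (hk1pos k).ne'
    have hfact : ((2 * (g + 1)).factorial : ℝ) ≠ 0 := by positivity
    have h1qk : (1 - q ^ (k + 1)) ≠ 0 := (h1q k).ne'
    field_simp
  have hGcolSummable : ∀ g, Summable fun k => Gc k g := by
    intro g
    have h := hGsummable.comp_injective
      (i := fun k : ℕ => ((k, g) : ℕ × ℕ)) (fun a b h => by
        simp only [Prod.mk.injEq] at h; exact h.1)
    exact h
  have hGcolsum : ∀ g, ∑' k, Gc k g = Cg g * T g := by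
    intro g
    rw [tsum_congr (fun k => hGc_factor k g), tsum_mul_left, hTdef]
  have hswap2 : ∑' g, ∑' k, Gc k g = ∑' k, ∑' g, Gc k g :=
    hGsummable.tsum_comm' (fun k => (hGrow k).summable) hGcolSummable
  -- the q-part identity
  have hB : ∑' n, L n = ∑' g, Cg g * T g := by
    rw [hLsum_eq, ← tsum_congr (fun k => (hGrow k).tsum_eq), ← hswap2,
      tsum_congr hGcolsum]
  -- summability of g ↦ Cg g * T g
  have hColAbsSummable : Summable fun g => ∑' k, |Gc k g| := by
    have hsw : Summable fun p : ℕ × ℕ => |Gc p.2 p.1| := hGabs.prod_symm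
    exact ((summable_prod_of_nonneg fun p => abs_nonneg _).mp hsw).2
  have hCgT_abs_le : ∀ g, |Cg g * T g| ≤ ∑' k, |Gc k g| := by
    intro g
    rw [← hGcolsum g]
    have habs : Summable fun k => ‖Gc k g‖ := by
      exact summable_norm_iff.mpr (hGcolSummable g)
    have h := norm_tsum_le_tsum_norm (f := fun k => Gc k g) habs
    simpa only [Real.norm_eq_abs] using h
  have hCgT_summable : Summable fun g => Cg g * T g :=
    summable_abs_iff.mp (Summable.of_nonneg_of_le (fun g => abs_nonneg _)
      hCgT_abs_le hColAbsSummable)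
  have hBsum : HasSum (fun g => Cg g * T g) (∑' n, L n) :=
    hCgT_summable.hasSum_iff.mpr hB.symm
  -- the sine part
  have hA := lemA u hune hu2π
  set A : ℕ → ℝ := fun g => u ^ (2 * (g + 1)) *
      ((-1 : ℝ) ^ (g + 1 + 1) * ((bernoulli (2 * (g + 1)) : ℚ) : ℝ) /
        (((g : ℝ) + 1) * ((Nat.factorial (2 * (g + 1)) : ℕ) : ℝ))) with hAdef
  -- Eisenstein identity
  have hEis : ∀ g : ℕ, A g * Eis (g + 1) q = A g + Cg g * T g := by
    intro g
    obtain ⟨hBne, -⟩ := bern_aux (g + 1) (Nat.succ_ne_zero g)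
    have hfact : ((2 * (g + 1)).factorial : ℝ) ≠ 0 := by positivity
    have hg1 : ((g : ℝ) + 1) ≠ 0 := by positivity
    have hEisEq : Eis (g + 1) q = 1 - (4 * ((g : ℝ) + 1) /
        ((bernoulli (2 * (g + 1)) : ℚ) : ℝ)) * T g := by
      rw [Eis, hTdef]
      push_cast
      ring_nf
    rw [hEisEq]
    simp only [hAdef, hCgdef]
    rw [pow_succ, pow_succ]
    field_simp
    ring
  -- Part (ii)
  have hApos : ∀ g, |A g| ≤ 4 * ((|u| / (2 * Real.pi)) ^ 2) ^ (g + 1) := by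
    intro g
    obtain ⟨-, hBb⟩ := bern_aux (g + 1) (Nat.succ_ne_zero g)
    have hfactpos : (0:ℝ) < ((2 * (g + 1)).factorial : ℝ) := by positivity
    have hg1 : (1:ℝ) ≤ (g : ℝ) + 1 := by have := Nat.cast_nonneg (α := ℝ) g; linarith
    have h1 : |A g| = |u| ^ (2 * (g + 1)) *
        (|((bernoulli (2 * (g + 1)) : ℚ) : ℝ)| /
          (((g : ℝ) + 1) * ((2 * (g + 1)).factorial : ℝ))) := by
      simp only [hAdef]
      rw [abs_mul, abs_pow, abs_div, abs_mul, abs_mul]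
      rw [abs_pow, abs_neg, abs_one, one_pow, one_mul]
      rw [abs_of_pos (by positivity : (0:ℝ) < (g : ℝ) + 1),
        abs_of_pos hfactpos]
    have h2 : |((bernoulli (2 * (g + 1)) : ℚ) : ℝ)| /
        (((g : ℝ) + 1) * ((2 * (g + 1)).factorial : ℝ)) ≤
        |((bernoulli (2 * (g + 1)) : ℚ) : ℝ)| / ((2 * (g + 1)).factorial : ℝ) := by
      apply div_le_div_of_nonneg_left (abs_nonneg _) hfactpos
      nlinarith [hfactpos]
    have h3 : |A g| ≤ |u| ^ (2 * (g + 1)) * (4 / (2 * Real.pi) ^ (2 * (g + 1))) := by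
      rw [h1]
      have hb := le_trans h2 hBb
      exact mul_le_mul_of_nonneg_left hb (by positivity)
    refine h3.trans_eq ?_
    rw [← pow_mul (|u| / (2 * Real.pi)) 2 (g + 1), div_pow]
    ring
  have hAabsSummable : Summable fun g => |A g| := by
    have hρ : (|u| / (2 * Real.pi)) ^ 2 < 1 := by
      have h1 : |u| / (2 * Real.pi) < 1 := (div_lt_one (by positivity)).2 hu2π
      have h2 : 0 ≤ |u| / (2 * Real.pi) := by positivity
      nlinarith
    have hρ0 : (0:ℝ) ≤ (|u| / (2 * Real.pi)) ^ 2 := by positivity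
    exact Summable.of_nonneg_of_le (fun g => abs_nonneg _) hApos
      (((hgeo _ hρ0 hρ).summable).mul_left 4)
  have hASummable : Summable A := summable_abs_iff.mp hAabsSummable
  have hii : Summable fun g => |A g * Eis (g + 1) q| := by
    refine summable_abs_iff.mpr ?_
    have h := (hASummable.add hCgT_summable).congr (fun g => (hEis g).symm)
    exact h
  refine ⟨hsummableL, hii, ?_⟩
  -- the final identity
  have hlhs1 : (-2) * Real.log (Real.sin (u / 2) / (u / 2)) = ∑' g, A g := hA.tsum_eq.symm
  calc (-2) * Real.log (Real.sin (u / 2) / (u / 2)) + ∑' n, L n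
      = ∑' g, A g + ∑' g, Cg g * T g := by rw [hlhs1, hB]
    _ = ∑' g, (A g + Cg g * T g) := (hASummable.tsum_add hCgT_summable).symm
    _ = ∑' g, A g * Eis (g + 1) q := tsum_congr fun g => (hEis g).symm
end

section
/- For every real number u with 0 < |u| < 2π, the series Σ_{g=1}^∞ ((−1)^g B_{2g} / (2g·(2g)!)) · u^{2g} converges and equals log( sin(u/2)/(u/2) ). -/
open Real Filter Finset Topology

set_option maxHeartbeats 1000000 in
/-- For `0 < |u| < 2π`, the series `∑_{g≥1} ((-1)^g B_{2g}/(2g·(2g)!)) u^{2g}` converges to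
`log(sin(u/2)/(u/2))`. -/
theorem stmt1 (u : ℝ) (hu0 : 0 < |u|) (hu2 : |u| < 2 * Real.pi) :
    HasSum
      (fun g : ℕ =>
        ((-1 : ℝ) ^ (g + 1) * ((bernoulli (2 * (g + 1)) : ℚ) : ℝ) /
            ((2 * ((g : ℝ) + 1)) * ((Nat.factorial (2 * (g + 1)) : ℕ) : ℝ))) *
          u ^ (2 * (g + 1)))
      (Real.log (Real.sin (u / 2) / (u / 2))) := by
  have hπ : (0:ℝ) < π := Real.pi_pos
  have hu : u ≠ 0 := by
    intro h; rw [h] at hu0; simp at hu0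
  set x : ℝ := u / (2 * π) with hxdef
  have h2π : (2:ℝ) * π ≠ 0 := by positivity
  have hx0 : x ≠ 0 := div_ne_zero hu h2π
  have hx1 : |x| < 1 := by
    rw [hxdef, abs_div, abs_of_pos (by positivity : (0:ℝ) < 2 * π),
      div_lt_one (by positivity)]
    exact hu2
  have hxsq : x ^ 2 < 1 := by
    have := abs_lt.mp hx1
    nlinarith [sq_abs x]
  have hxsq0 : 0 < x ^ 2 := by positivity
  have hux : u / 2 = π * x := by
    rw [hxdef]; field_simp
  have hfac : ∀ n : ℕ, 0 < 1 - x ^ 2 / ((n:ℝ) + 1) ^ 2 := by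
    intro n
    have h1 : (1:ℝ) ≤ ((n:ℝ) + 1) ^ 2 := by nlinarith [Nat.cast_nonneg (α := ℝ) n]
    have : x ^ 2 / ((n:ℝ) + 1) ^ 2 ≤ x ^ 2 := by
      rw [div_le_iff₀ (by positivity)]; nlinarith
    linarith
  have hratlt : ∀ n : ℕ, |x ^ 2 / ((n:ℝ) + 1) ^ 2| < 1 := by
    intro n
    have := hfac n
    rw [abs_of_nonneg (by positivity)]
    linarith
  -- the double sum
  set f : ℕ × ℕ → ℝ := fun p =>
    -((x ^ 2 / ((p.1:ℝ) + 1) ^ 2) ^ (p.2 + 1) / ((p.2:ℝ) + 1)) with hfdef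
  have hsumf : Summable f := by
    rw [hfdef, ← summable_neg_iff]
    simp only [neg_neg]
    refine Summable.of_nonneg_of_le (f := fun p : ℕ × ℕ => (1 / ((p.1:ℝ)+1)^2) * (x^2) ^ p.2)
      ?_ ?_ ?_
    · intro p; positivity
    · rintro ⟨n, k⟩
      have h1 : (1:ℝ) ≤ ((n:ℝ) + 1) ^ 2 := by nlinarith [Nat.cast_nonneg (α := ℝ) n]
      have hc0 : 0 ≤ x ^ 2 / ((n:ℝ) + 1) ^ 2 := by positivity
      have hc1 : x ^ 2 / ((n:ℝ) + 1) ^ 2 ≤ x ^ 2 := by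
        rw [div_le_iff₀ (by positivity)]; nlinarith
      have hc2 : x ^ 2 / ((n:ℝ) + 1) ^ 2 ≤ 1 / ((n:ℝ) + 1) ^ 2 := by
        exact div_le_div_of_nonneg_right (by linarith) (by positivity)
      calc (x ^ 2 / ((n:ℝ) + 1) ^ 2) ^ (k + 1) / ((k:ℝ) + 1)
          ≤ (x ^ 2 / ((n:ℝ) + 1) ^ 2) ^ (k + 1) := by
            apply div_le_self (by positivity)
            have : (0:ℝ) ≤ (k:ℝ) := Nat.cast_nonneg k
            linarith
        _ = (x ^ 2 / ((n:ℝ) + 1) ^ 2) ^ k * (x ^ 2 / ((n:ℝ) + 1) ^ 2) := by ring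
        _ ≤ (x ^ 2) ^ k * (1 / ((n:ℝ) + 1) ^ 2) := by
            exact mul_le_mul (pow_le_pow_left₀ hc0 hc1 k) hc2 hc0 (by positivity)
        _ = 1 / ((n:ℝ)+1)^2 * (x^2) ^ k := by ring
    · refine Summable.mul_of_nonneg (f := fun n : ℕ => 1 / ((n:ℝ)+1)^2)
        (g := fun k : ℕ => (x^2) ^ k) ?_ ?_ ?_ ?_
      · have h0 : Summable (fun n : ℕ => 1 / (n:ℝ) ^ 2) :=
          Real.summable_one_div_nat_pow.mpr one_lt_two
        have := (summable_nat_add_iff 1).mpr h0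
        simpa using this
      · exact summable_geometric_of_lt_one (by positivity) hxsq
      · intro n; positivity
      · intro k; positivity
  set T : ℝ := ∑' p, f p with hTdef
  have hT : HasSum f T := hsumf.hasSum
  -- row sums
  have hrow : ∀ n : ℕ, HasSum (fun k => f (n, k))
      (Real.log (1 - x ^ 2 / ((n:ℝ) + 1) ^ 2)) := by
    intro n
    have h := (hasSum_pow_div_log_of_abs_lt_one (hratlt n)).neg
    rw [neg_neg] at h
    convert h using 1
  have hrowsum : HasSum (fun n : ℕ => Real.log (1 - x ^ 2 / ((n:ℝ) + 1) ^ 2)) T :=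
    hT.prod_fiberwise hrow
  -- column sums
  have hT' : HasSum (fun p : ℕ × ℕ => f (p.2, p.1)) T :=
    ((Equiv.prodComm ℕ ℕ).hasSum_iff (f := f) (a := T)).mpr hT
  have hcol : ∀ g : ℕ, HasSum (fun n : ℕ => f (n, g))
      (((-1 : ℝ) ^ (g + 1) * ((bernoulli (2 * (g + 1)) : ℚ) : ℝ) /
          ((2 * ((g : ℝ) + 1)) * ((Nat.factorial (2 * (g + 1)) : ℕ) : ℝ))) *
        u ^ (2 * (g + 1))) := by
    intro g
    have hz := hasSum_zeta_nat (k := g + 1) (Nat.succ_ne_zero g)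
    have hinj : Function.Injective (fun n : ℕ => n + 1) := fun a b h => by
      simpa using h
    have hshift := (hinj.hasSum_iff (f := fun n : ℕ => 1 / (n:ℝ) ^ (2 * (g + 1))) ?_).mpr hz
    swap
    · intro m hm
      have hm0 : m = 0 := by
        by_contra h
        exact hm ⟨m - 1, by simp; omega⟩
      subst hm0
      simp
    have hmul := hshift.mul_left (-(x ^ (2 * (g + 1)) / ((g:ℝ) + 1)))
    convert hmul using 1
    · rfl
    · funext n
      show -((x ^ 2 / ((n:ℝ) + 1) ^ 2) ^ (g + 1) / ((g:ℝ) + 1)) =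
        -(x ^ (2 * (g + 1)) / ((g:ℝ) + 1)) * (1 / (((n + 1 : ℕ)):ℝ) ^ (2 * (g + 1)))
      rw [div_pow, ← pow_mul, ← pow_mul]
      push_cast
      field_simp
    · have hfactne : ((Nat.factorial (2 * (g + 1)) : ℕ) : ℝ) ≠ 0 :=
        Nat.cast_ne_zero.mpr (Nat.factorial_ne_zero _)
      have hg1 : ((g:ℝ) + 1) ≠ 0 := by positivity
      have hπ0 : π ≠ 0 := ne_of_gt hπ
      rw [show 2 * (g + 1) - 1 = 2 * g + 1 from by omega]
      rw [hxdef, div_pow, mul_pow]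
      field_simp
      ring
  have hcolsum : HasSum
      (fun g : ℕ =>
        ((-1 : ℝ) ^ (g + 1) * ((bernoulli (2 * (g + 1)) : ℚ) : ℝ) /
            ((2 * ((g : ℝ) + 1)) * ((Nat.factorial (2 * (g + 1)) : ℕ) : ℝ))) *
          u ^ (2 * (g + 1))) T :=
    hT'.prod_fiberwise hcol
  -- identify T with log (sin (u/2) / (u/2)) via the Euler sine product
  have hspos : 0 < Real.sin (π * x) / (π * x) := by
    rcases lt_or_gt_of_ne hx0 with h | h
    · have hx' := abs_lt.mp hx1
      apply div_pos_iff.mpr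
      right
      constructor
      · apply Real.sin_neg_of_neg_of_neg_pi_lt
        · nlinarith
        · nlinarith
      · nlinarith
    · have hx' := abs_lt.mp hx1
      apply div_pos
      · apply Real.sin_pos_of_pos_of_lt_pi
        · nlinarith
        · nlinarith
      · nlinarith
  have heuler2 : Tendsto (fun N : ℕ => ∏ j ∈ range N, (1 - x ^ 2 / ((j:ℝ) + 1) ^ 2))
      atTop (𝓝 (Real.sin (π * x) / (π * x))) := by
    have h := (Real.tendsto_euler_sin_prod x).div_const (π * x)
    convert h using 2 with N
    exact (mul_div_cancel_left₀ _ (mul_ne_zero (ne_of_gt hπ) hx0)).symm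
  have hlog2 : Tendsto
      (fun N : ℕ => ∑ j ∈ range N, Real.log (1 - x ^ 2 / ((j:ℝ) + 1) ^ 2))
      atTop (𝓝 (Real.log (Real.sin (π * x) / (π * x)))) := by
    have hc := (Real.continuousAt_log (ne_of_gt hspos)).tendsto.comp heuler2
    apply hc.congr
    intro N
    rw [Function.comp_apply, Real.log_prod]
    intro j _
    exact ne_of_gt (hfac j)
  have hTeq : T = Real.log (Real.sin (π * x) / (π * x)) :=
    tendsto_nhds_unique hrowsum.tendsto_sum_nat hlog2
  rw [hux, ← hTeq]
  exact hcolsum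
end

section
/- For every real number q with 0 < q < 1 and every real number u with 0 < |u| < min(2π, log(1/q)), one has ((u/2)/sin(u/2))² · ∏_{n=1}^∞ (1−qⁿ)⁴ / (1 − 2cos(u)·qⁿ + q^{2n})² = exp( Σ_{g=1}^∞ u^{2g} · ((−1)^{g+1} B_{2g} / (g·(2g)!)) · E_{2g}(q) ), where the infinite product and the series converge. (This is the exponentiated form of the paper's Corollary 2 identity: with y = e^{iu} and Δ(y,q) = q·∏_{n≥1}(1−qⁿ)^{20}(1−yqⁿ)²(1−y⁻¹qⁿ)², the left side equals Δ(q)/( (sin(u/2)/(u/2))² · Δ(e^{iu},q) ).) -/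
open Real Filter

private lemma hasSum_shift {f : ℕ → ℝ} {S : ℝ} (h : HasSum f S) (h0 : f 0 = 0) :
    HasSum (fun n => f (n + 1)) S := by
  rw [hasSum_nat_add_iff 1]
  simpa [h0] using h

/-- `log((1-x)^4/(1-2cos u x+x^2)^2) = -4 ∑_{k≥1} (1-cos(ku)) x^k/k`. -/
private lemma log_factor (u x : ℝ) (hx0 : 0 < x) (hx1 : x < 1) :
    HasSum (fun k : ℕ => -4 * (1 - Real.cos (((k : ℝ) + 1) * u)) * x ^ (k + 1) / ((k : ℝ) + 1))
      (Real.log ((1 - x) ^ 4 / (1 - 2 * Real.cos u * x + x ^ 2) ^ 2)) := by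
  have hcu := Real.cos_le_one u
  have hDpos : 0 < 1 - 2 * Real.cos u * x + x ^ 2 := by nlinarith
  have h1x : 0 < 1 - x := by linarith
  set z : ℂ := (x : ℂ) * Complex.exp ((u : ℂ) * Complex.I) with hz_def
  have hzn : ‖z‖ < 1 := by
    rw [hz_def, norm_mul,
      Complex.norm_exp_ofReal_mul_I, Complex.norm_real, Real.norm_eq_abs, abs_of_pos hx0, mul_one]
    exact hx1
  have hzcn : ‖(starRingEnd ℂ) z‖ < 1 := by rwa [RCLike.norm_conj]
  have h1 := Complex.hasSum_taylorSeries_neg_log hzn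
  have h2 := Complex.hasSum_taylorSeries_neg_log hzcn
  -- powers of z
  have hzk : ∀ k : ℕ, z ^ k = ((x ^ k : ℝ) : ℂ) * Complex.exp (((k * u : ℝ) : ℂ) * Complex.I) := by
    intro k
    rw [hz_def, mul_pow, ← Complex.exp_nat_mul]
    push_cast
    ring_nf
  have hre := (h1.add h2).mapL Complex.reCLM
  have hterm : ∀ k : ℕ, Complex.reCLM (z ^ k / (k : ℂ) + ((starRingEnd ℂ) z) ^ k / (k : ℂ))
      = 2 * Real.cos ((k : ℝ) * u) * x ^ k / (k : ℝ) := by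
    intro k
    have : ((starRingEnd ℂ) z) ^ k = (starRingEnd ℂ) (z ^ k) := (map_pow _ _ _).symm
    have hzkre : (z ^ k).re = x ^ k * Real.cos ((k : ℝ) * u) := by
      rw [hzk k, Complex.re_ofReal_mul, Complex.exp_ofReal_mul_I_re]
    rw [this, ← add_div, Complex.add_conj,
      show ((k : ℕ) : ℂ) = ((k : ℝ) : ℂ) by push_cast; rfl, ← Complex.ofReal_div]
    simp only [Complex.reCLM_apply, Complex.ofReal_re]
    rw [hzkre]; ring
  have hconj : 1 - (starRingEnd ℂ) z = (starRingEnd ℂ) (1 - z) := by rw [map_sub, map_one]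
  have habs : ‖1 - z‖ ^ 2 = 1 - 2 * Real.cos u * x + x ^ 2 := by
    rw [Complex.sq_norm, Complex.normSq_apply]
    have e1 : (1 - z).re = 1 - x * Real.cos u := by
      simp [hz_def, Complex.sub_re, Complex.re_ofReal_mul, Complex.exp_ofReal_mul_I_re]
    have e2 : (1 - z).im = -(x * Real.sin u) := by
      simp [hz_def, Complex.sub_im, Complex.im_ofReal_mul, Complex.exp_ofReal_mul_I_im]
    rw [e1, e2]
    linear_combination (x ^ 2) * (Real.sin_sq_add_cos_sq u)
  have hval : Complex.reCLM (-Complex.log (1 - z) + -Complex.log (1 - (starRingEnd ℂ) z))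
      = -Real.log (1 - 2 * Real.cos u * x + x ^ 2) := by
    simp only [Complex.reCLM_apply, Complex.add_re, Complex.neg_re, Complex.log_re]
    rw [hconj, Complex.norm_conj, ← habs, Real.log_pow]
    push_cast; ring
  simp only [hterm, hval] at hre
  have hre1 : HasSum (fun k : ℕ => 2 * Real.cos (((k : ℝ) + 1) * u) * x ^ (k + 1) / ((k : ℝ) + 1))
      (-Real.log (1 - 2 * Real.cos u * x + x ^ 2)) := by
    have := hasSum_shift hre (by norm_num)
    convert this using 2 with k
    push_cast; ring
  have hR := hasSum_pow_div_log_of_abs_lt_one (show |x| < 1 by rwa [abs_of_pos hx0])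
  have hfin := (hR.mul_left (-4)).add (hre1.mul_left 2)
  convert hfin using 1
  · rfl
  · funext k; push_cast; ring
  · rw [Real.log_div (pow_ne_zero _ (ne_of_gt h1x)) (pow_ne_zero _ hDpos.ne'),
      Real.log_pow, Real.log_pow]
    push_cast; ring

private lemma sin_div_pos {u : ℝ} (hu0 : 0 < |u|) (hu2 : |u| < 2 * Real.pi) :
    0 < Real.sin (u / 2) / (u / 2) := by
  have hne : u ≠ 0 := by intro h; simp [h] at hu0
  have habs := abs_lt.mp hu2
  rcases lt_or_gt_of_ne hne with h | h
  · have h1 : -Real.pi < u / 2 := by linarith [habs.1]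
    have h2 : u / 2 < 0 := by linarith
    exact div_pos_of_neg_of_neg (Real.sin_neg_of_neg_of_neg_pi_lt h2 h1) h2
  · have h1 : u / 2 < Real.pi := by linarith [habs.2]
    have h2 : 0 < u / 2 := by linarith
    exact div_pos (Real.sin_pos_of_pos_of_lt_pi h2 h1) h2

private lemma hasSum_sin_log (u : ℝ) (hu0 : 0 < |u|) (hu2 : |u| < 2 * Real.pi) :
    HasSum (fun g : ℕ => u ^ (2 * (g + 1)) *
        ((-1 : ℝ) ^ (g + 1 + 1) * ((bernoulli (2 * (g + 1)) : ℚ) : ℝ) /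
          (((g : ℝ) + 1) * ((Nat.factorial (2 * (g + 1)) : ℕ) : ℝ))))
      (2 * Real.log ((u / 2) / Real.sin (u / 2))) := by
  have hpi := Real.pi_pos
  set x : ℝ := u / (2 * Real.pi) with hx_def
  have h2pi : (0:ℝ) < 2 * Real.pi := by linarith
  have hx1 : |x| < 1 := by
    rw [hx_def, abs_div, abs_of_pos h2pi, div_lt_one h2pi]
    exact hu2
  have hux : u / 2 = Real.pi * x := by rw [hx_def]; field_simp
  have hsp : 0 < Real.sin (u / 2) / (u / 2) := sin_div_pos hu0 hu2
  -- terms 1 - x^2/(j+1)^2 are positive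
  have hx2 : x ^ 2 < 1 := by
    have := sq_abs x ▸ pow_lt_one₀ (abs_nonneg x) hx1 (by norm_num)
    simpa [sq_abs] using this
  have hfacpos : ∀ j : ℕ, 0 < 1 - x ^ 2 / ((j : ℝ) + 1) ^ 2 := by
    intro j
    have hj1 : (1 : ℝ) ≤ ((j : ℝ) + 1) ^ 2 := by nlinarith [Nat.cast_nonneg (α := ℝ) j]
    have : x ^ 2 / ((j : ℝ) + 1) ^ 2 ≤ x ^ 2 := by
      apply div_le_self (sq_nonneg x) hj1
    linarith
  -- the double family
  set C : ℕ × ℕ → ℝ := fun p =>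
    -((x ^ 2 / ((p.1 : ℝ) + 1) ^ 2) ^ (p.2 + 1) / ((p.2 : ℝ) + 1)) with hC_def
  have hCabs : ∀ p : ℕ × ℕ, |C p| ≤ (x ^ 2) ^ (p.2 + 1) * (1 / ((p.1 : ℝ) + 1) ^ 2) := by
    intro ⟨j, k⟩
    have hj : (0:ℝ) < ((j : ℝ) + 1) ^ 2 := by positivity
    have hj1 : (1 : ℝ) ≤ ((j : ℝ) + 1) ^ 2 := by nlinarith [Nat.cast_nonneg (α := ℝ) j]
    have ht0 : (0:ℝ) ≤ x ^ 2 / ((j : ℝ) + 1) ^ 2 := by positivity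
    have hk1 : (1:ℝ) ≤ (k : ℝ) + 1 := by linarith [Nat.cast_nonneg (α := ℝ) k]
    rw [hC_def, abs_neg, abs_div, abs_of_nonneg (pow_nonneg ht0 _),
      abs_of_pos (show (0:ℝ) < (k:ℝ)+1 by positivity)]
    calc (x ^ 2 / ((j : ℝ) + 1) ^ 2) ^ (k + 1) / ((k : ℝ) + 1)
        ≤ (x ^ 2 / ((j : ℝ) + 1) ^ 2) ^ (k + 1) := div_le_self (pow_nonneg ht0 _) hk1
      _ = (x ^ 2) ^ (k + 1) * (1 / ((j : ℝ) + 1) ^ 2) ^ (k + 1) := by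
          rw [div_pow, div_eq_mul_one_div, one_div_pow]
      _ ≤ (x ^ 2) ^ (k + 1) * (1 / ((j : ℝ) + 1) ^ 2) := by
          have h1 : (1 / (((j:ℝ) + 1) ^ 2)) ≤ 1 := by rw [div_le_one hj]; exact hj1
          have h2 : (1 / (((j:ℝ) + 1) ^ 2)) ^ (k+1) ≤ (1 / (((j:ℝ) + 1) ^ 2)) ^ 1 :=
            pow_le_pow_of_le_one (by positivity) h1 (Nat.one_le_iff_ne_zero.mpr (Nat.succ_ne_zero k))
          rw [pow_one] at h2
          exact mul_le_mul_of_nonneg_left h2 (pow_nonneg (sq_nonneg x) _)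
  have hgeo : Summable (fun k : ℕ => (x ^ 2) ^ (k + 1)) :=
    ((summable_geometric_of_lt_one (sq_nonneg x) hx2).mul_left (x ^ 2)).congr
      (fun k => (pow_succ' _ _).symm)
  have hj2 : Summable (fun j : ℕ => 1 / ((j : ℝ) + 1) ^ 2) := by
    have h0 : Summable (fun n : ℕ => 1 / (n : ℝ) ^ 2) :=
      Real.summable_one_div_nat_pow.mpr one_lt_two
    have h1 := (summable_nat_add_iff 1).mpr h0
    apply h1.congr
    intro j
    push_cast
    ring
  have hCsum : Summable C := by
    apply Summable.of_abs
    apply Summable.of_nonneg_of_le (fun p => abs_nonneg _) hCabs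
    exact hgeo.mul_of_nonneg hj2 (fun k => pow_nonneg (sq_nonneg x) _) (fun j => by positivity)
      |>.comp_injective (Equiv.prodComm ℕ ℕ).injective |>.congr (fun p => rfl)
  -- per-j expansion of the logarithm
  have hperj : ∀ j : ℕ, HasSum (fun k => C (j, k))
      (Real.log (1 - x ^ 2 / ((j : ℝ) + 1) ^ 2)) := by
    intro j
    have hjle : (1:ℝ) ≤ ((j:ℝ)+1) ^ 2 := by nlinarith [Nat.cast_nonneg (α := ℝ) j]
    have ht1 : |x ^ 2 / ((j : ℝ) + 1) ^ 2| < 1 := by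
      rw [abs_of_nonneg (by positivity)]
      calc x ^ 2 / ((j:ℝ)+1) ^ 2 ≤ x ^ 2 := div_le_self (sq_nonneg x) hjle
        _ < 1 := hx2
    have h := (hasSum_pow_div_log_of_abs_lt_one ht1).neg
    rw [neg_neg] at h
    exact h
  have hCL := hCsum.hasSum
  set L0 := ∑' p, C p with hL0
  have houter : HasSum (fun j : ℕ => Real.log (1 - x ^ 2 / ((j : ℝ) + 1) ^ 2)) L0 :=
    hCL.prod_fiberwise hperj
  -- identify L0 with log(sin(u/2)/(u/2))
  have hne : u ≠ 0 := by intro h; simp [h] at hu0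
  have hu2ne : u / 2 ≠ 0 := div_ne_zero hne two_ne_zero
  have hL0eq : L0 = Real.log (Real.sin (u / 2) / (u / 2)) := by
    have h0 := (Real.tendsto_euler_sin_prod x).div_const (Real.pi * x)
    rw [← hux] at h0
    have h1 : Tendsto (fun n : ℕ => ∏ j ∈ Finset.range n, (1 - x ^ 2 / ((j:ℝ) + 1) ^ 2))
        atTop (nhds (Real.sin (u / 2) / (u / 2))) := by
      apply h0.congr
      intro n
      rw [mul_div_cancel_left₀ _ hu2ne]
    have h2 := (Real.continuousAt_log hsp.ne').tendsto.comp h1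
    have h3 : Tendsto (fun n : ℕ => ∑ j ∈ Finset.range n,
        Real.log (1 - x ^ 2 / ((j:ℝ) + 1) ^ 2)) atTop
        (nhds (Real.log (Real.sin (u / 2) / (u / 2)))) := by
      apply h2.congr
      intro n
      rw [Function.comp_apply, Real.log_prod]
      intro j _
      exact (hfacpos j).ne'
    exact tendsto_nhds_unique houter.tendsto_sum_nat h3
  -- fiberwise in the other order, using zeta values
  have hperk : ∀ k : ℕ, HasSum (fun j => C (j, k))
      (-(x ^ (2 * (k + 1)) *
        ((-1:ℝ) ^ (k + 1 + 1) * 2 ^ (2 * (k + 1) - 1) * Real.pi ^ (2 * (k + 1)) *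
          ((bernoulli (2 * (k + 1)) : ℚ) : ℝ) / (((2 * (k + 1)).factorial : ℕ) : ℝ)) / ((k:ℝ) + 1))) := by
    intro k
    have hz := hasSum_zeta_nat (k := k + 1) (Nat.succ_ne_zero k)
    have hz1 := hasSum_shift hz (by simp)
    have h := hz1.mul_left (-(x ^ (2 * (k + 1)) / ((k:ℝ) + 1)))
    convert h using 1
    · rfl
    · funext j
      simp only [hC_def]
      push_cast
      rw [div_pow, ← pow_mul, ← pow_mul]
      ring
    · ring
  have hCswap : HasSum (fun p : ℕ × ℕ => C (p.2, p.1)) L0 :=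
    ((Equiv.prodComm ℕ ℕ).hasSum_iff (f := C)).mpr hCL
  have hgsum := hCswap.prod_fiberwise hperk
  have hfin := hgsum.mul_left (-2)
  rw [hL0eq] at hfin
  convert hfin using 1
  · rfl
  · funext g
    have e1 : 2 * (g + 1) - 1 + 1 = 2 * (g + 1) := by omega
    have h2e : (2:ℝ) ^ (2 * (g + 1)) = 2 ^ (2 * (g + 1) - 1) * 2 := by rw [← pow_succ, e1]
    have hxA : x ^ (2 * (g + 1)) = u ^ (2 * (g + 1)) /
        ((2:ℝ) ^ (2 * (g + 1) - 1) * 2 * Real.pi ^ (2 * (g + 1))) := by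
      rw [hx_def, div_pow, mul_pow, h2e]
    have hxpow : x ^ (2 * (g + 1)) * (2:ℝ) ^ (2 * (g + 1) - 1) * Real.pi ^ (2 * (g + 1))
        = u ^ (2 * (g + 1)) / 2 := by
      rw [hxA]
      have hp : Real.pi ^ (2 * (g + 1)) ≠ 0 := pow_ne_zero _ hpi.ne'
      have h2 : ((2:ℝ) ^ (2 * (g + 1) - 1)) ≠ 0 := pow_ne_zero _ two_ne_zero
      field_simp
    have hfact : ((((2 * (g + 1)).factorial : ℕ)) : ℝ) ≠ 0 :=
      Nat.cast_ne_zero.mpr (Nat.factorial_ne_zero _)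
    have hg1 : ((g : ℝ) + 1) ≠ 0 := by positivity
    have hsplit : -2 * (-(x ^ (2 * (g + 1)) *
        ((-1:ℝ) ^ (g + 1 + 1) * 2 ^ (2 * (g + 1) - 1) * Real.pi ^ (2 * (g + 1)) *
          ((bernoulli (2 * (g + 1)) : ℚ) : ℝ) / (((2 * (g + 1)).factorial : ℕ) : ℝ)) / ((g:ℝ) + 1)))
        = (x ^ (2 * (g + 1)) * (2:ℝ) ^ (2 * (g + 1) - 1) * Real.pi ^ (2 * (g + 1))) *
          (2 * ((-1:ℝ) ^ (g + 1 + 1) * ((bernoulli (2 * (g + 1)) : ℚ) : ℝ) /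
            (((g:ℝ) + 1) * (((2 * (g + 1)).factorial : ℕ) : ℝ)))) := by
      field_simp
    rw [hsplit, hxpow]
    field_simp
  · have hinv : (u / 2) / Real.sin (u / 2) = (Real.sin (u / 2) / (u / 2))⁻¹ := by
      rw [inv_div]
    rw [hinv, Real.log_inv]
    ring

private lemma hasSum_shift1 {f : ℕ → ℝ} {S : ℝ} (h : HasSum f S) :
    HasSum (fun n => f (n + 1)) (S - f 0) := by
  rw [hasSum_nat_add_iff 1]
  simpa using h

private lemma pow_div_factorial_le_exp {y : ℝ} (hy : 0 ≤ y) (m : ℕ) :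
    y ^ m / (m.factorial : ℝ) ≤ Real.exp y := by
  refine le_trans ?_ (Real.sum_le_exp_of_nonneg hy (m + 1))
  have hmem : m ∈ Finset.range (m + 1) := Finset.self_mem_range_succ m
  have := Finset.single_le_sum (f := fun i => y ^ i / (i.factorial : ℝ))
    (fun i _ => by positivity) hmem
  simpa using this

private lemma bernoulli_cast_ne_zero (m : ℕ) (hm : m ≠ 0) :
    ((bernoulli (2 * m) : ℚ) : ℝ) ≠ 0 := by
  intro h0
  have h := hasSum_zeta_nat hm
  rw [h0] at h
  have h1 : (fun n : ℕ => 1 / (n : ℝ) ^ (2 * m)) 1 ≤ (-1:ℝ) ^ (m + 1) * 2 ^ (2 * m - 1) *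
      Real.pi ^ (2 * m) * 0 / ((2 * m).factorial : ℝ) :=
    le_hasSum h 1 (fun i _ => by positivity)
  simp at h1
  linarith

section Main

set_option maxHeartbeats 2000000

/-- The exponentiated form of the Corollary 2 identity:
`((u/2)/sin(u/2))² ∏_{n≥1} (1-qⁿ)⁴/(1 - 2 cos(u) qⁿ + q^{2n})²
  = exp(∑_{g≥1} u^{2g} ((-1)^{g+1} B_{2g}/(g (2g)!)) E_{2g}(q))`,
with the infinite product and the series converging. -/
theorem stmt3 (q u : ℝ) (hq0 : 0 < q) (hq1 : q < 1)
    (hu0 : 0 < |u|) (hu : |u| < min (2 * Real.pi) (Real.log (1 / q))) :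
    (Multipliable fun n : ℕ =>
      (1 - q ^ (n + 1)) ^ 4 /
        (1 - 2 * Real.cos u * q ^ (n + 1) + q ^ (2 * (n + 1))) ^ 2) ∧
    (Summable fun g : ℕ =>
      u ^ (2 * (g + 1)) *
        ((-1 : ℝ) ^ (g + 1 + 1) * ((bernoulli (2 * (g + 1)) : ℚ) : ℝ) /
          (((g : ℝ) + 1) * ((Nat.factorial (2 * (g + 1)) : ℕ) : ℝ))) *
        Eis (g + 1) q) ∧
    ((u / 2) / Real.sin (u / 2)) ^ 2 *
      ∏' n : ℕ, (1 - q ^ (n + 1)) ^ 4 /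
        (1 - 2 * Real.cos u * q ^ (n + 1) + q ^ (2 * (n + 1))) ^ 2 =
      Real.exp (∑' g : ℕ, u ^ (2 * (g + 1)) *
        ((-1 : ℝ) ^ (g + 1 + 1) * ((bernoulli (2 * (g + 1)) : ℚ) : ℝ) /
          (((g : ℝ) + 1) * ((Nat.factorial (2 * (g + 1)) : ℕ) : ℝ))) *
        Eis (g + 1) q) := by
  have hu2 : |u| < 2 * Real.pi := lt_of_lt_of_le hu (min_le_left _ _)
  have hulog : |u| < -Real.log q := by
    have := lt_of_lt_of_le hu (min_le_right _ _)
    rwa [one_div, Real.log_inv] at this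
  -- basic facts
  have hqn1 : ∀ n : ℕ, 0 < q ^ (n + 1) := fun n => pow_pos hq0 _
  have hqn2 : ∀ n : ℕ, q ^ (n + 1) < 1 := fun n => pow_lt_one₀ hq0.le hq1 (Nat.succ_ne_zero n)
  have hqnq : ∀ n : ℕ, q ^ (n + 1) ≤ q := by
    intro n
    calc q ^ (n + 1) ≤ q ^ 1 := pow_le_pow_of_le_one hq0.le hq1.le (by omega)
      _ = q := pow_one q

  -- the A family : n-then-k expansion of the product logs
  set f : ℕ → ℝ := fun n => (1 - q ^ (n + 1)) ^ 4 /
      (1 - 2 * Real.cos u * q ^ (n + 1) + q ^ (2 * (n + 1))) ^ 2 with hf_def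
  set A : ℕ × ℕ → ℝ := fun p =>
    -4 * (1 - Real.cos (((p.2 : ℝ) + 1) * u)) * (q ^ (p.2 + 1)) ^ (p.1 + 1) / ((p.2 : ℝ) + 1)
    with hA_def
  have hfpos : ∀ n : ℕ, 0 < f n := by
    intro n
    have h1 : 0 < 1 - q ^ (n + 1) := by linarith [hqn2 n]
    have h2 : 0 < 1 - 2 * Real.cos u * q ^ (n + 1) + q ^ (2 * (n + 1)) := by
      have : q ^ (2 * (n + 1)) = (q ^ (n + 1)) ^ 2 := by rw [← pow_mul, Nat.mul_comm]
      rw [this]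
      nlinarith [Real.cos_le_one u, hqn1 n]
    rw [hf_def]
    positivity
  have hAn : ∀ n : ℕ, HasSum (fun k => A (n, k)) (Real.log (f n)) := by
    intro n
    have h := log_factor u (q ^ (n + 1)) (hqn1 n) (hqn2 n)
    have e2 : q ^ (2 * (n + 1)) = (q ^ (n + 1)) ^ 2 := by rw [← pow_mul, Nat.mul_comm]
    have h2 : Real.log (f n) = Real.log ((1 - q ^ (n + 1)) ^ 4 /
        (1 - 2 * Real.cos u * q ^ (n + 1) + (q ^ (n + 1)) ^ 2) ^ 2) := by
      simp only [hf_def]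
      rw [e2]
    have e3 : (fun k : ℕ => A (n, k)) = (fun k : ℕ =>
        -4 * (1 - Real.cos (((k : ℝ) + 1) * u)) * (q ^ (n + 1)) ^ (k + 1) / ((k : ℝ) + 1)) := by
      funext k
      show -4 * (1 - Real.cos (((k : ℝ) + 1) * u)) * (q ^ (k + 1)) ^ (n + 1) / ((k : ℝ) + 1) = _
      rw [pow_right_comm]
    rw [e3, h2]
    exact h
  -- summability of A over pairs
  have hAsum : Summable A := by
    apply Summable.of_abs
    have hbound : ∀ p : ℕ × ℕ, |A p| ≤ (8 * q ^ (p.2 + 1)) * q ^ p.1 := by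
      intro ⟨n, k⟩
      have hc1 := Real.cos_le_one (((k : ℝ) + 1) * u)
      have hc2 := Real.neg_one_le_cos (((k : ℝ) + 1) * u)
      have hk1 : (1:ℝ) ≤ (k : ℝ) + 1 := by linarith [Nat.cast_nonneg (α := ℝ) k]
      have hqp : (q ^ (k + 1)) ^ (n + 1) ≤ q ^ (k + 1) * q ^ n := by
        rw [← pow_mul, ← pow_add]
        apply pow_le_pow_of_le_one hq0.le hq1.le
        nlinarith
      have hqppos : (0:ℝ) < (q ^ (k + 1)) ^ (n + 1) := pow_pos (hqn1 k) _
      rw [hA_def]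
      simp only
      rw [abs_div, abs_mul, abs_mul]
      rw [abs_of_pos (show (0:ℝ) < (k:ℝ) + 1 by linarith),
        abs_of_pos hqppos, abs_of_nonneg (show (0:ℝ) ≤ 1 - Real.cos (((k : ℝ) + 1) * u) by linarith)]
      have habs4 : |(-4 : ℝ)| = 4 := by norm_num
      rw [habs4]
      calc 4 * (1 - Real.cos (((k : ℝ) + 1) * u)) * (q ^ (k + 1)) ^ (n + 1) / ((k:ℝ) + 1)
          ≤ 4 * (1 - Real.cos (((k : ℝ) + 1) * u)) * (q ^ (k + 1)) ^ (n + 1) / 1 := by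
            exact div_le_div_of_nonneg_left (by nlinarith) one_pos hk1
        _ ≤ 8 * (q ^ (k + 1)) ^ (n + 1) := by nlinarith
        _ ≤ 8 * (q ^ (k + 1) * q ^ n) := by nlinarith
        _ = 8 * q ^ (k + 1) * q ^ n := by ring
    apply Summable.of_nonneg_of_le (fun p => abs_nonneg _) hbound
    have h1 : Summable (fun k : ℕ => 8 * q ^ (k + 1)) :=
      (((summable_geometric_of_lt_one hq0.le hq1).mul_left q).mul_left 8).congr
        (fun k => by rw [pow_succ'])
    have h2 : Summable (fun n : ℕ => q ^ n) := summable_geometric_of_lt_one hq0.le hq1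
    have := h2.mul_of_nonneg h1 (fun n => pow_nonneg hq0.le n)
      (fun k => by positivity)
    apply this.congr
    intro p
    ring
  set L : ℝ := ∑' p, A p with hL_def
  have houtN : HasSum (fun n => Real.log (f n)) L := hAsum.hasSum.prod_fiberwise hAn
  -- the product converges to exp L
  have hprodf : HasProd f (Real.exp L) := by
    have h := houtN.rexp
    have e : (Real.exp ∘ fun n => Real.log (f n)) = f := by
      funext n
      exact Real.exp_log (hfpos n)
    rwa [e] at h
  -- swap the order of summation: sum over k first
  have hA'k : ∀ k : ℕ, HasSum (fun n => A (n, k))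
      (-4 * (1 - Real.cos (((k : ℝ) + 1) * u)) / ((k : ℝ) + 1) *
        (q ^ (k + 1) / (1 - q ^ (k + 1)))) := by
    intro k
    have hgeo : HasSum (fun n : ℕ => (q ^ (k + 1)) ^ (n + 1))
        (q ^ (k + 1) / (1 - q ^ (k + 1))) := by
      have h0 := (summable_geometric_of_lt_one (le_of_lt (hqn1 k)) (hqn2 k)).hasSum.mul_left
        (q ^ (k + 1))
      rw [tsum_geometric_of_lt_one (le_of_lt (hqn1 k)) (hqn2 k)] at h0
      rw [div_eq_mul_inv]
      convert h0 using 1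
      · rfl
      funext n
      exact pow_succ' _ _
    have h := hgeo.mul_left (-4 * (1 - Real.cos (((k : ℝ) + 1) * u)) / ((k : ℝ) + 1))
    have e : (fun n : ℕ => -4 * (1 - Real.cos (((k : ℝ) + 1) * u)) / ((k : ℝ) + 1) *
        (q ^ (k + 1)) ^ (n + 1)) = (fun n => A (n, k)) := by
      funext n
      show _ = -4 * (1 - Real.cos (((k : ℝ) + 1) * u)) * (q ^ (k + 1)) ^ (n + 1) / ((k : ℝ) + 1)
      ring
    rwa [e] at h
  have hAswap : HasSum (fun p : ℕ × ℕ => A (p.2, p.1)) L :=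
    ((Equiv.prodComm ℕ ℕ).hasSum_iff (f := A)).mpr hAsum.hasSum
  have hA' : HasSum (fun k : ℕ => -4 * (1 - Real.cos (((k : ℝ) + 1) * u)) / ((k : ℝ) + 1) *
      (q ^ (k + 1) / (1 - q ^ (k + 1)))) L := hAswap.prod_fiberwise hA'k
  -- summability in g-direction: the S_g series
  have hSsum : ∀ g : ℕ, Summable (fun k : ℕ =>
      ((k : ℝ) + 1) ^ (2 * (g + 1) - 1) * q ^ (k + 1) / (1 - q ^ (k + 1))) := by
    intro g
    have h1' : Summable (fun n : ℕ => (n : ℝ) ^ (2 * (g + 1) - 1) * q ^ n) :=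
      summable_pow_mul_geometric_of_norm_lt_one (2 * (g + 1) - 1)
        (by rw [Real.norm_eq_abs, abs_of_pos hq0]; exact hq1)
    have h1 := (summable_nat_add_iff 1).mpr h1'
    have h2 := h1.mul_right (1 / (1 - q))
    apply Summable.of_nonneg_of_le _ _ h2
    · intro k
      have h1k : 0 < 1 - q ^ (k + 1) := by linarith [hqn2 k]
      exact div_nonneg (by positivity) h1k.le
    · intro k
      have hq1k : 0 < 1 - q ^ (k + 1) := by linarith [hqn2 k]
      have hqq : 1 - q ≤ 1 - q ^ (k + 1) := by linarith [hqnq k]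
      have hnum : (0:ℝ) ≤ ((k : ℝ) + 1) ^ (2 * (g + 1) - 1) * q ^ (k + 1) := by positivity
      calc ((k : ℝ) + 1) ^ (2 * (g + 1) - 1) * q ^ (k + 1) / (1 - q ^ (k + 1))
          ≤ ((k : ℝ) + 1) ^ (2 * (g + 1) - 1) * q ^ (k + 1) / (1 - q) :=
            div_le_div_of_nonneg_left hnum (by linarith) hqq
        _ = (((k+1) : ℕ) : ℝ) ^ (2 * (g + 1) - 1) * q ^ (k + 1) * (1 / (1 - q)) := by
            push_cast
            ring
  set S : ℕ → ℝ := fun g => ∑' k : ℕ,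
      ((k : ℝ) + 1) ^ (2 * (g + 1) - 1) * q ^ (k + 1) / (1 - q ^ (k + 1)) with hS_def
  -- the B family
  set B : ℕ × ℕ → ℝ := fun p =>
    ((-1 : ℝ) ^ p.2 * (-4) * u ^ (2 * (p.2 + 1)) / (((2 * (p.2 + 1)).factorial : ℕ) : ℝ)) *
      (((p.1 : ℝ) + 1) ^ (2 * (p.2 + 1) - 1) * q ^ (p.1 + 1) / (1 - q ^ (p.1 + 1))) with hB_def
  -- per-k expansion of 1 - cos((k+1)u) gives fibers of B
  have hBk : ∀ k : ℕ, HasSum (fun g => B (k, g))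
      (-4 * (1 - Real.cos (((k : ℝ) + 1) * u)) / ((k : ℝ) + 1) *
        (q ^ (k + 1) / (1 - q ^ (k + 1)))) := by
    intro k
    have hcos := Real.hasSum_cos (((k : ℝ) + 1) * u)
    have hsh := hasSum_shift1 hcos
    have h0 : ((-1:ℝ)) ^ 0 * (((k : ℝ) + 1) * u) ^ (2 * 0) / ((2 * 0).factorial : ℝ) = 1 := by
      norm_num
    rw [h0] at hsh
    have h := hsh.mul_left (4 * (q ^ (k + 1) / (((k : ℝ) + 1) * (1 - q ^ (k + 1)))))
    have e : (fun g : ℕ => 4 * (q ^ (k + 1) / (((k : ℝ) + 1) * (1 - q ^ (k + 1)))) *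
        ((-1 : ℝ) ^ (g + 1) * (((k : ℝ) + 1) * u) ^ (2 * (g + 1)) /
          ((2 * (g + 1)).factorial : ℝ))) = (fun g => B (k, g)) := by
      funext g
      show _ = ((-1 : ℝ) ^ g * (-4) * u ^ (2 * (g + 1)) / (((2 * (g + 1)).factorial : ℕ) : ℝ)) *
        (((k : ℝ) + 1) ^ (2 * (g + 1) - 1) * q ^ (k + 1) / (1 - q ^ (k + 1)))
      have e1 : 2 * (g + 1) - 1 + 1 = 2 * (g + 1) := by omega
      have e2 : ((k:ℝ) + 1) ^ (2 * (g + 1)) = ((k:ℝ) + 1) ^ (2 * (g + 1) - 1) * ((k:ℝ) + 1) := by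
        rw [← pow_succ, e1]
      rw [mul_pow, e2]
      have hk0 : ((k:ℝ) + 1) ≠ 0 := by positivity
      have hqk0 : (1 - q ^ (k + 1)) ≠ 0 := by linarith [hqn2 k]
      field_simp
      ring
    rw [e] at h
    have hval : 4 * (q ^ (k + 1) / (((k : ℝ) + 1) * (1 - q ^ (k + 1)))) *
        (Real.cos (((k : ℝ) + 1) * u) - 1)
        = -4 * (1 - Real.cos (((k : ℝ) + 1) * u)) / ((k : ℝ) + 1) *
          (q ^ (k + 1) / (1 - q ^ (k + 1))) := by
      have hk0 : ((k:ℝ) + 1) ≠ 0 := by positivity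
      have hqk0 : (1 - q ^ (k + 1)) ≠ 0 := by linarith [hqn2 k]
      field_simp
      ring
    rwa [hval] at h
  -- summability of B over pairs
  set t0 : ℝ := (|u| + -Real.log q) / 2 with ht0_def
  have ht0u : |u| < t0 := by rw [ht0_def]; linarith
  have ht0q : t0 < -Real.log q := by rw [ht0_def]; linarith
  have ht0pos : 0 < t0 := lt_of_le_of_lt (abs_nonneg u) ht0u
  set θ : ℝ := |u| / t0 with hθ_def
  have hθ0 : 0 ≤ θ := div_nonneg (abs_nonneg u) ht0pos.le
  have hθ1 : θ < 1 := by rw [hθ_def, div_lt_one ht0pos]; exact ht0u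
  have huθ : |u| = θ * t0 := by rw [hθ_def]; field_simp
  set ρ : ℝ := Real.exp t0 * q with hρ_def
  have hρ0 : 0 ≤ ρ := mul_nonneg (Real.exp_pos _).le hq0.le
  have hρ1 : ρ < 1 := by
    rw [hρ_def]
    have h1 : Real.exp t0 < Real.exp (-Real.log q) := Real.exp_lt_exp.mpr ht0q
    have h2 : Real.exp (-Real.log q) = q⁻¹ := by
      rw [Real.exp_neg, Real.exp_log hq0]
    rw [h2] at h1
    calc Real.exp t0 * q < q⁻¹ * q := by exact mul_lt_mul_of_pos_right h1 hq0
      _ = 1 := inv_mul_cancel₀ hq0.ne'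
  have hBabs : ∀ p : ℕ × ℕ, |B p| ≤ ((4 / (1 - q)) * ρ ^ (p.1 + 1)) * (θ ^ 2) ^ (p.2 + 1) := by
    intro ⟨k, g⟩
    have hq1k : 0 < 1 - q ^ (k + 1) := by linarith [hqn2 k]
    have hqq : 1 - q ≤ 1 - q ^ (k + 1) := by linarith [hqnq k]
    have hF0 : (0:ℝ) < (((2 * (g + 1)).factorial : ℕ) : ℝ) := by
      exact_mod_cast Nat.factorial_pos _
    have habs : |B (k, g)| = (4 * |u| ^ (2 * (g + 1)) / (((2 * (g + 1)).factorial : ℕ) : ℝ)) *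
        (((k : ℝ) + 1) ^ (2 * (g + 1) - 1) * q ^ (k + 1) / (1 - q ^ (k + 1))) := by
      have hP0 : (0:ℝ) ≤ ((k : ℝ) + 1) ^ (2 * (g + 1) - 1) * q ^ (k + 1) / (1 - q ^ (k + 1)) :=
        div_nonneg (by positivity) hq1k.le
      show |((-1 : ℝ) ^ g * (-4) * u ^ (2 * (g + 1)) / (((2 * (g + 1)).factorial : ℕ) : ℝ)) *
          (((k : ℝ) + 1) ^ (2 * (g + 1) - 1) * q ^ (k + 1) / (1 - q ^ (k + 1)))| = _
      rw [abs_mul, abs_of_nonneg hP0, abs_div, abs_mul, abs_mul, abs_pow, abs_pow, abs_neg,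
        abs_one, one_pow, one_mul, abs_of_pos hF0]
      norm_num
    rw [habs]
    have hk1 : (1:ℝ) ≤ (k : ℝ) + 1 := by linarith [Nat.cast_nonneg (α := ℝ) k]
    have key : 4 * |u| ^ (2 * (g + 1)) / (((2 * (g + 1)).factorial : ℕ) : ℝ) *
        (((k : ℝ) + 1) ^ (2 * (g + 1) - 1) * q ^ (k + 1) / (1 - q ^ (k + 1)))
        ≤ 4 * |u| ^ (2 * (g + 1)) / (((2 * (g + 1)).factorial : ℕ) : ℝ) *
          (((k : ℝ) + 1) ^ (2 * (g + 1) - 1) * q ^ (k + 1) / (1 - q)) := by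
      apply mul_le_mul_of_nonneg_left _ (by positivity)
      exact div_le_div_of_nonneg_left (by positivity) (by linarith) hqq
    refine key.trans ?_
    -- now bound the k-dependent part using the exponential
    have m1 : ((k : ℝ) + 1) ^ (2 * (g + 1) - 1) * |u| ^ (2 * (g + 1))
        ≤ (((k : ℝ) + 1) * |u|) ^ (2 * (g + 1)) := by
      rw [mul_pow]
      apply mul_le_mul_of_nonneg_right _ (pow_nonneg (abs_nonneg u) _)
      exact pow_le_pow_right₀ hk1 (by omega)
    have m2 : (((k : ℝ) + 1) * |u|) ^ (2 * (g + 1))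
        = θ ^ (2 * (g + 1)) * (((k : ℝ) + 1) * t0) ^ (2 * (g + 1)) := by
      rw [← mul_pow, huθ]
      ring_nf
    have m3 : (((k : ℝ) + 1) * t0) ^ (2 * (g + 1)) / (((2 * (g + 1)).factorial : ℕ) : ℝ)
        ≤ Real.exp (((k : ℝ) + 1) * t0) :=
      pow_div_factorial_le_exp (by positivity) _
    have m4 : Real.exp (((k : ℝ) + 1) * t0) = (Real.exp t0) ^ (k + 1) := by
      rw [← Real.exp_nat_mul]
      push_cast
      ring_nf
    have mcomb : ((k : ℝ) + 1) ^ (2 * (g + 1) - 1) * |u| ^ (2 * (g + 1)) /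
        (((2 * (g + 1)).factorial : ℕ) : ℝ)
        ≤ θ ^ (2 * (g + 1)) * (Real.exp t0) ^ (k + 1) := by
      rw [div_le_iff₀ hF0] at m3 ⊢
      calc ((k : ℝ) + 1) ^ (2 * (g + 1) - 1) * |u| ^ (2 * (g + 1))
          ≤ (((k : ℝ) + 1) * |u|) ^ (2 * (g + 1)) := m1
        _ = θ ^ (2 * (g + 1)) * (((k : ℝ) + 1) * t0) ^ (2 * (g + 1)) := m2
        _ ≤ θ ^ (2 * (g + 1)) * (Real.exp (((k : ℝ) + 1) * t0) *
              (((2 * (g + 1)).factorial : ℕ) : ℝ)) :=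
            mul_le_mul_of_nonneg_left m3 (pow_nonneg hθ0 _)
        _ = θ ^ (2 * (g + 1)) * (Real.exp t0) ^ (k + 1) * (((2 * (g + 1)).factorial : ℕ) : ℝ) := by
            rw [m4]; ring
    calc 4 * |u| ^ (2 * (g + 1)) / (((2 * (g + 1)).factorial : ℕ) : ℝ) *
        (((k : ℝ) + 1) ^ (2 * (g + 1) - 1) * q ^ (k + 1) / (1 - q))
        = (4 * q ^ (k + 1) / (1 - q)) * (((k : ℝ) + 1) ^ (2 * (g + 1) - 1) *
            |u| ^ (2 * (g + 1)) / (((2 * (g + 1)).factorial : ℕ) : ℝ)) := by ring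
      _ ≤ (4 * q ^ (k + 1) / (1 - q)) * (θ ^ (2 * (g + 1)) * (Real.exp t0) ^ (k + 1)) := by
          apply mul_le_mul_of_nonneg_left mcomb
          have : 0 < 1 - q := by linarith
          positivity
      _ = ((4 / (1 - q)) * ρ ^ (k + 1)) * (θ ^ 2) ^ (g + 1) := by
          rw [hρ_def, mul_pow, ← pow_mul]
          ring
  have hBsum : Summable B := by
    apply Summable.of_abs
    apply Summable.of_nonneg_of_le (fun p => abs_nonneg _) hBabs
    have h1 : Summable (fun k : ℕ => (4 / (1 - q)) * ρ ^ (k + 1)) :=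
      (((summable_geometric_of_lt_one hρ0 hρ1).mul_left ρ).mul_left (4 / (1 - q))).congr
        (fun k => by rw [pow_succ'])
    have h2 : Summable (fun g : ℕ => (θ ^ 2) ^ (g + 1)) :=
      ((summable_geometric_of_lt_one (r := θ ^ 2) (by positivity)
        (by nlinarith)).mul_left (θ ^ 2)).congr (fun g => (pow_succ' _ _).symm)
    exact h1.mul_of_nonneg h2
      (fun k => mul_nonneg (div_nonneg (by norm_num) (by linarith)) (pow_nonneg hρ0 _))
      (fun g => by positivity)
  -- the sum of B is L
  have hBL : HasSum B L := by
    have h1 := hBsum.hasSum.prod_fiberwise hBk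
    have e := h1.unique hA'
    rw [← e]
    exact hBsum.hasSum
  have hBswap : HasSum (fun p : ℕ × ℕ => B (p.2, p.1)) L :=
    ((Equiv.prodComm ℕ ℕ).hasSum_iff (f := B)).mpr hBL
  have hBg' : ∀ g : ℕ, HasSum (fun k => B (k, g))
      (((-1 : ℝ) ^ g * (-4) * u ^ (2 * (g + 1)) / (((2 * (g + 1)).factorial : ℕ) : ℝ)) * S g) :=
    fun g => (hSsum g).hasSum.mul_left _
  have hBg : HasSum (fun g : ℕ =>
      ((-1 : ℝ) ^ g * (-4) * u ^ (2 * (g + 1)) / (((2 * (g + 1)).factorial : ℕ) : ℝ)) * S g) L :=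
    hBswap.prod_fiberwise hBg'
  -- combine with the sine series
  have hsin := hasSum_sin_log u hu0 hu2
  set T : ℕ → ℝ := fun g => u ^ (2 * (g + 1)) *
      ((-1 : ℝ) ^ (g + 1 + 1) * ((bernoulli (2 * (g + 1)) : ℚ) : ℝ) /
        (((g : ℝ) + 1) * ((Nat.factorial (2 * (g + 1)) : ℕ) : ℝ))) * Eis (g + 1) q with hT_def
  have hTg : ∀ g : ℕ, T g = u ^ (2 * (g + 1)) *
      ((-1 : ℝ) ^ (g + 1 + 1) * ((bernoulli (2 * (g + 1)) : ℚ) : ℝ) /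
        (((g : ℝ) + 1) * ((Nat.factorial (2 * (g + 1)) : ℕ) : ℝ)))
      + ((-1 : ℝ) ^ g * (-4) * u ^ (2 * (g + 1)) / (((2 * (g + 1)).factorial : ℕ) : ℝ)) * S g := by
    intro g
    have hbne : ((bernoulli (2 * (g + 1)) : ℚ) : ℝ) ≠ 0 :=
      bernoulli_cast_ne_zero (g + 1) (Nat.succ_ne_zero g)
    have hF0 : (((2 * (g + 1)).factorial : ℕ) : ℝ) ≠ 0 :=
      Nat.cast_ne_zero.mpr (Nat.factorial_ne_zero _)
    have hg0 : ((g : ℝ) + 1) ≠ 0 := by positivity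
    have hEis : Eis (g + 1) q = 1 - (4 * ((g : ℝ) + 1) / ((bernoulli (2 * (g + 1)) : ℚ) : ℝ)) * S g := by
      rw [Eis, hS_def]
      push_cast
      ring_nf
    rw [hT_def]
    simp only
    rw [hEis]
    field_simp
    ring
  have hTsum : HasSum T (2 * Real.log ((u / 2) / Real.sin (u / 2)) + L) := by
    have h := hsin.add hBg
    have e : (fun g : ℕ => u ^ (2 * (g + 1)) *
        ((-1 : ℝ) ^ (g + 1 + 1) * ((bernoulli (2 * (g + 1)) : ℚ) : ℝ) /
          (((g : ℝ) + 1) * ((Nat.factorial (2 * (g + 1)) : ℕ) : ℝ)))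
        + ((-1 : ℝ) ^ g * (-4) * u ^ (2 * (g + 1)) / (((2 * (g + 1)).factorial : ℕ) : ℝ)) * S g)
        = T := funext fun g => (hTg g).symm
    rwa [e] at h
  refine ⟨hprodf.multipliable, hTsum.summable, ?_⟩
  rw [hTsum.tsum_eq, hprodf.tprod_eq, Real.exp_add]
  have hy : 0 < (u / 2) / Real.sin (u / 2) := by
    rw [show (u / 2) / Real.sin (u / 2) = (Real.sin (u / 2) / (u / 2))⁻¹ from by rw [inv_div]]
    exact inv_pos.mpr (sin_div_pos hu0 hu2)
  congr 1
  rw [show (2 : ℝ) * Real.log ((u / 2) / Real.sin (u / 2))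
      = Real.log ((u / 2) / Real.sin (u / 2)) + Real.log ((u / 2) / Real.sin (u / 2)) from by ring,
    Real.exp_add, Real.exp_log hy]
  ring


end Main
end

section
/- Let μ be a nonempty Young diagram, let m ≥ 1, and let ν_0 ⊇ ν_1 ⊇ ⋯ ⊇ ν_m be Young diagrams with ν_0 = μ, ν_m = ∅, and ν_{m−1} ≠ μ. Set ρ_j = μ ∖ ν_j, so that ∅ = ρ_0 ⊆ ρ_1 ⊆ ⋯ ⊆ ρ_m = μ and ρ_{m−1} ≠ ∅. Then −2·c_0(ρ_{m−1}) + Σ_{r∈ℤ} ( d_r(μ)² − Σ_{j=1}^m ( d_r(ρ_j) − d_r(ρ_{j−1}) )² ) < 0, where the outer sum over r ∈ ℤ has only finitely many nonzero terms. (This is the strict negativity of the constant term of the equivariant vertex contribution, which is the combinatorial core of the paper's divisibility lemma for the 1-leg stable pairs vertex.) -/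
/-- `cCount ρ r` is the number of cells `(a,b) ∈ ρ` with `a - b = r` (difference in `ℤ`). -/
def cCount (ρ : Finset (ℕ × ℕ)) (r : ℤ) : ℕ :=
  (ρ.filter fun c => (c.1 : ℤ) - (c.2 : ℤ) = r).card

/-- `dCount ρ r = c_r(ρ) - c_{r+1}(ρ)`. -/
def dCount (ρ : Finset (ℕ × ℕ)) (r : ℤ) : ℤ :=
  (cCount ρ r : ℤ) - (cCount ρ (r + 1) : ℤ)

namespace Stmt5Aux

lemma cCount_le_of_subset {σ τ : Finset (ℕ × ℕ)} (h : σ ⊆ τ) (r : ℤ) :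
    cCount σ r ≤ cCount τ r :=
  Finset.card_le_card (Finset.filter_subset_filter _ h)

lemma cCount_sdiff {σ τ : Finset (ℕ × ℕ)} (h : σ ⊆ τ) (r : ℤ) :
    (cCount (τ \ σ) r : ℤ) = (cCount τ r : ℤ) - cCount σ r := by
  classical
  have hf : (τ \ σ).filter (fun c => (c.1 : ℤ) - (c.2 : ℤ) = r)
      = τ.filter (fun c => (c.1 : ℤ) - (c.2 : ℤ) = r) \ σ.filter (fun c => (c.1 : ℤ) - (c.2 : ℤ) = r) := by
    ext c; simp only [Finset.mem_filter, Finset.mem_sdiff]; tauto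
  have hsub : σ.filter (fun c => (c.1 : ℤ) - (c.2 : ℤ) = r) ⊆ τ.filter (fun c => (c.1 : ℤ) - (c.2 : ℤ) = r) :=
    Finset.filter_subset_filter _ h
  unfold cCount
  rw [hf, Finset.card_sdiff_of_subset hsub]
  have := Finset.card_le_card hsub
  omega

lemma cCount_eq_zero {σ : Finset (ℕ × ℕ)} {n : ℕ} (hb : ∀ c ∈ σ, c.1 < n ∧ c.2 < n)
    {r : ℤ} (hr : (n : ℤ) ≤ r ∨ r ≤ -(n : ℤ)) : cCount σ r = 0 := by
  unfold cCount
  rw [Finset.card_eq_zero, Finset.filter_eq_empty_iff]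
  intro c hc
  have h1 := (hb c hc).1
  have h2 := (hb c hc).2
  omega

lemma cCount_succ_le (ν : YoungDiagram) (r : ℤ) (hr : 0 ≤ r) :
    cCount ν.cells (r + 1) ≤ cCount ν.cells r := by
  classical
  apply Finset.card_le_card_of_injOn (fun c => (c.1 - 1, c.2))
  · intro c hc
    simp only [Finset.mem_coe, Finset.mem_filter, YoungDiagram.mem_cells] at hc ⊢
    obtain ⟨hmem, hdiag⟩ := hc
    have h1 : 1 ≤ c.1 := by omega
    refine ⟨ν.up_left_mem (Nat.sub_le _ _) le_rfl hmem, ?_⟩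
    push_cast [Nat.cast_sub h1]
    omega
  · intro c hc c' hc' hee
    simp only [Finset.mem_coe, Finset.mem_filter] at hc hc'
    have h1 : 1 ≤ c.1 := by omega
    have h1' : 1 ≤ c'.1 := by omega
    have := congrArg Prod.fst hee
    have := congrArg Prod.snd hee
    simp only at *
    exact Prod.ext (by omega) (by omega)

lemma cCount_le_succ (ν : YoungDiagram) (r : ℤ) (hr : 0 ≤ r) :
    cCount ν.cells r ≤ cCount ν.cells (r + 1) + 1 := by
  classical
  set p : ℕ × ℕ → Prop := fun c => (c.1 : ℤ) - (c.2 : ℤ) = r with hp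
  set S := ν.cells.filter (fun c => (c.1 : ℤ) - (c.2 : ℤ) = r) with hS
  set T := ν.cells.filter (fun c => (c.1 : ℤ) - (c.2 : ℤ) = r + 1) with hT
  have hsub : S ⊆ T.image (fun c => (c.1, c.2 + 1)) ∪ {(r.toNat, 0)} := by
    intro c hc
    simp only [hS, Finset.mem_filter, YoungDiagram.mem_cells] at hc
    obtain ⟨hmem, hdiag⟩ := hc
    rcases Nat.eq_zero_or_pos c.2 with h0 | h0
    · apply Finset.mem_union_right
      simp only [Finset.mem_singleton]
      have : c.1 = r.toNat := by omega
      exact Prod.ext (by omega) (by omega)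
    · apply Finset.mem_union_left
      rw [Finset.mem_image]
      refine ⟨(c.1, c.2 - 1), ?_, ?_⟩
      · simp only [hT, Finset.mem_filter, YoungDiagram.mem_cells]
        refine ⟨ν.up_left_mem le_rfl (Nat.sub_le _ _) hmem, ?_⟩
        push_cast [Nat.cast_sub h0]
        omega
      · exact Prod.ext rfl (by omega)
  calc S.card ≤ _ := Finset.card_le_card hsub
    _ ≤ (T.image (fun c => (c.1, c.2 + 1))).card + ({(r.toNat, 0)} : Finset (ℕ × ℕ)).card :=
        Finset.card_union_le _ _
    _ ≤ T.card + 1 := by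
        have := Finset.card_image_le (s := T) (f := fun c : ℕ × ℕ => (c.1, c.2 + 1))
        simp only [Finset.card_singleton]
        omega

lemma cCount_transpose (ν : YoungDiagram) (r : ℤ) :
    cCount ν.transpose.cells r = cCount ν.cells (-r) := by
  classical
  unfold cCount
  apply Finset.card_bij (fun c _ => Prod.swap c)
  · intro c hc
    simp only [Finset.mem_filter, YoungDiagram.mem_cells, YoungDiagram.mem_transpose] at hc ⊢
    exact ⟨hc.1, by simp [Prod.swap]; omega⟩
  · intro a ha b hb hab
    exact Prod.swap_injective hab
  · intro b hb
    refine ⟨Prod.swap b, ?_, by simp⟩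
    simp only [Finset.mem_filter, YoungDiagram.mem_cells, YoungDiagram.mem_transpose] at hb ⊢
    exact ⟨by simpa using hb.1, by simp [Prod.swap]; omega⟩

lemma dCount_young_nonneg (ν : YoungDiagram) (r : ℤ) (hr : 0 ≤ r) :
    dCount ν.cells r = 0 ∨ dCount ν.cells r = 1 := by
  have h1 := cCount_succ_le ν r hr
  have h2 := cCount_le_succ ν r hr
  unfold dCount; omega

lemma dCount_young_neg (ν : YoungDiagram) (r : ℤ) (hr : r < 0) :
    dCount ν.cells r = 0 ∨ dCount ν.cells r = -1 := by
  have key : dCount ν.cells r = -(dCount ν.transpose.cells (-r - 1)) := by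
    unfold dCount
    rw [cCount_transpose, cCount_transpose]
    have e1 : -(-r - 1) = r + 1 := by ring
    have e2 : -(-r - 1 + 1) = r := by ring
    rw [e1, e2]; ring
  have := dCount_young_nonneg ν.transpose (-r - 1) (by omega)
  omega

lemma abs_le_sq (x : ℤ) : |x| ≤ x ^ 2 := by
  rcases eq_or_ne x 0 with h | h
  · simp [h]
  · have h1 : 1 ≤ |x| := Int.one_le_abs h
    calc |x| = |x| * 1 := by ring
      _ ≤ |x| * |x| := by exact mul_le_mul_of_nonneg_left h1 (abs_nonneg x)
      _ = x ^ 2 := by rw [abs_mul_abs_self, sq]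

lemma abs_sum_le_sum_sq (S : Finset ℤ) (f : ℤ → ℤ) :
    |∑ r ∈ S, f r| ≤ ∑ r ∈ S, f r ^ 2 :=
  le_trans (Finset.abs_sum_le_sum_abs f S) (Finset.sum_le_sum fun i _ => abs_le_sq (f i))

lemma telescope_aux (f : ℤ → ℤ) (a : ℤ) :
    ∀ k : ℕ, ∑ r ∈ Finset.Icc a (a + k - 1), (f r - f (r + 1)) = f a - f (a + k) := by
  intro k
  induction k with
  | zero =>
      have he : Finset.Icc a (a + ((0:ℕ):ℤ) - 1) = ∅ := Finset.Icc_eq_empty (by push_cast; omega)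
      rw [he]; simp
  | succ k ih =>
      have hins : Finset.Icc a (a + ((k+1:ℕ):ℤ) - 1)
          = insert (a + ((k+1:ℕ):ℤ) - 1) (Finset.Icc a (a + (k:ℤ) - 1)) := by
        ext x
        simp only [Finset.mem_Icc, Finset.mem_insert]
        push_cast
        omega
      have hnm : (a + ((k+1:ℕ):ℤ) - 1) ∉ Finset.Icc a (a + (k:ℤ) - 1) := by
        simp only [Finset.mem_Icc]
        push_cast
        omega
      rw [hins, Finset.sum_insert hnm, ih]
      have e1 : a + ((k + 1 : ℕ) : ℤ) - 1 = a + k := by push_cast; ring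
      have e2 : a + ((k + 1 : ℕ) : ℤ) - 1 + 1 = a + k + 1 := by push_cast; ring
      have e3 : a + ((k + 1 : ℕ) : ℤ) = a + k + 1 := by push_cast; ring
      rw [e1, e3]
      ring

lemma telescope (f : ℤ → ℤ) {a b : ℤ} (h : a ≤ b + 1) :
    ∑ r ∈ Finset.Icc a b, (f r - f (r + 1)) = f a - f (b + 1) := by
  have hb : a + ((b + 1 - a).toNat : ℤ) = b + 1 := by omega
  have hb2 : a + ((b + 1 - a).toNat : ℤ) - 1 = b := by omega
  have h0 := telescope_aux f a (b + 1 - a).toNat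
  rw [hb2, hb] at h0
  exact h0


lemma sum_sq_ge_two (S : Finset ℤ) (f : ℤ → ℤ) (hsum : ∑ r ∈ S, f r = 0)
    {r1 : ℤ} (h1 : r1 ∈ S) (hne : f r1 ≠ 0) : 2 ≤ ∑ r ∈ S, f r ^ 2 := by
  have habs : ∑ r ∈ S, |f r| ≤ ∑ r ∈ S, f r ^ 2 :=
    Finset.sum_le_sum fun i _ => abs_le_sq (f i)
  have hsplit : |f r1| + ∑ r ∈ S.erase r1, |f r| = ∑ r ∈ S, |f r| :=
    Finset.add_sum_erase S (fun r => |f r|) h1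
  have h2 : ∑ r ∈ S.erase r1, f r = - f r1 := by
    rw [Finset.sum_erase_eq_sub h1, hsum]; ring
  have h3 : |f r1| ≤ ∑ r ∈ S.erase r1, |f r| := by
    calc |f r1| = |∑ r ∈ S.erase r1, f r| := by rw [h2, abs_neg]
      _ ≤ _ := Finset.abs_sum_le_sum_abs _ _
  have h4 : 1 ≤ |f r1| := Int.one_le_abs hne
  omega

lemma chain_eq (ν : ℕ → YoungDiagram) (k : ℕ) (h : ∀ j < k, ν (j + 1) = ν j) :
    ν k = ν 0 := by
  induction k with
  | zero => rfl
  | succ k ih => rw [h k (by omega), ih (fun j hj => h j (by omega))]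

lemma sum_dCount_Icc (σ : Finset (ℕ × ℕ)) {a b : ℤ} (h : a ≤ b + 1) :
    ∑ r ∈ Finset.Icc a b, dCount σ r = (cCount σ a : ℤ) - cCount σ (b + 1) :=
  telescope (fun s => (cCount σ s : ℤ)) h

end Stmt5Aux

open Stmt5Aux in
/-- Strict negativity of the constant term of the equivariant vertex contribution:
for a nonempty Young diagram `μ`, `m ≥ 1`, and a decreasing chain of Young diagrams
`ν 0 = μ ⊇ ν 1 ⊇ ⋯ ⊇ ν m = ∅` with `ν (m-1) ≠ μ`, setting `ρ_j = μ \ ν_j`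
(so `ρ_0 = ∅`, `ρ_m = μ`, `ρ_{m-1} ≠ ∅`), one has
`-2 c₀(ρ_{m-1}) + ∑_{r ∈ ℤ} (d_r(μ)² - ∑_{j=1}^m (d_r(ρ_j) - d_r(ρ_{j-1}))²) < 0`,
the outer sum having only finitely many nonzero terms. -/
theorem stmt5 (μ : YoungDiagram) (hμ : μ ≠ ⊥) (m : ℕ) (hm : 1 ≤ m)
    (ν : ℕ → YoungDiagram) (hν0 : ν 0 = μ) (hνm : ν m = ⊥)
    (hchain : ∀ j < m, ν (j + 1) ≤ ν j) (hne : ν (m - 1) ≠ μ) :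
    (Set.Finite {r : ℤ |
      dCount μ.cells r ^ 2 -
        ∑ j ∈ Finset.range m,
          (dCount (μ.cells \ (ν (j + 1)).cells) r -
            dCount (μ.cells \ (ν j).cells) r) ^ 2 ≠ 0}) ∧
    (-2) * (cCount (μ.cells \ (ν (m - 1)).cells) 0 : ℤ) +
      ∑ᶠ r : ℤ,
        (dCount μ.cells r ^ 2 -
          ∑ j ∈ Finset.range m,
            (dCount (μ.cells \ (ν (j + 1)).cells) r -
              dCount (μ.cells \ (ν j).cells) r) ^ 2) < 0 := by
  classical
  -- a bound on the cells of μ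
  obtain ⟨n, hbound⟩ : ∃ n : ℕ, ∀ c ∈ μ.cells, c.1 < n ∧ c.2 < n := by
    refine ⟨(μ.cells.sup fun c => max c.1 c.2) + 1, fun c hc => ?_⟩
    have h : max c.1 c.2 ≤ μ.cells.sup fun c => max c.1 c.2 :=
      Finset.le_sup (f := fun c : ℕ × ℕ => max c.1 c.2) hc
    have h1 := le_max_left c.1 c.2
    have h2 := le_max_right c.1 c.2
    omega
  set I : Finset ℤ := Finset.Icc (-(n : ℤ)) n with hI
  set P : Finset ℤ := Finset.Icc (0 : ℤ) n with hP
  set Np : Finset ℤ := Finset.Icc (-(n : ℤ)) (-1) with hNp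
  have hsplitsum : ∀ g : ℤ → ℤ, ∑ r ∈ I, g r = ∑ r ∈ Np, g r + ∑ r ∈ P, g r := by
    intro g
    have hU : Np ∪ P = I := by
      ext x; simp only [Finset.mem_union, Finset.mem_Icc, hI, hP, hNp]; omega
    have hD : Disjoint Np P := by
      rw [Finset.disjoint_left]
      intro x hx hx'
      simp only [Finset.mem_Icc, hP, hNp] at hx hx'
      omega
    rw [← hU, Finset.sum_union hD]
  -- monotonicity of the chain
  have hmono : ∀ j, j ≤ m → ∀ i, i ≤ j → ν j ≤ ν i := by
    intro j
    induction j with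
    | zero =>
        intro _ i hi
        have : i = 0 := Nat.le_zero.mp hi
        rw [this]
    | succ k ih =>
        intro hk i hi
        rcases Nat.lt_or_ge i (k + 1) with h | h
        · exact le_trans (hchain k (by omega)) (ih (by omega) i (by omega))
        · have : i = k + 1 := by omega
          rw [this]
  have hcells : ∀ j, j ≤ m → (ν j).cells ⊆ μ.cells := by
    intro j hj
    have h := hmono j hj 0 (Nat.zero_le _)
    rw [hν0] at h
    exact h
  have hbν : ∀ j, j ≤ m → ∀ c ∈ (ν j).cells, c.1 < n ∧ c.2 < n :=
    fun j hj c hc => hbound c (hcells j hj hc)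
  -- vanishing of dCount outside I
  have hdzero : ∀ σ : Finset (ℕ × ℕ), σ ⊆ μ.cells → ∀ r : ℤ, r ∉ I → dCount σ r = 0 := by
    intro σ hσ r hr
    have hb : ∀ c ∈ σ, c.1 < n ∧ c.2 < n := fun c hc => hbound c (hσ hc)
    have hr' : ¬(-(n : ℤ) ≤ r ∧ r ≤ n) := by simpa [hI, Finset.mem_Icc] using hr
    have h1 : (n : ℤ) ≤ r ∨ r ≤ -(n : ℤ) := by omega
    have h2 : (n : ℤ) ≤ r + 1 ∨ r + 1 ≤ -(n : ℤ) := by omega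
    unfold dCount
    rw [cCount_eq_zero hb h1, cCount_eq_zero hb h2]
    simp
  -- the summand vanishes outside I
  have hFzero : ∀ r : ℤ, r ∉ I →
      (dCount μ.cells r ^ 2 -
        ∑ j ∈ Finset.range m,
          (dCount (μ.cells \ (ν (j + 1)).cells) r -
            dCount (μ.cells \ (ν j).cells) r) ^ 2) = 0 := by
    intro r hr
    rw [hdzero μ.cells subset_rfl r hr]
    rw [Finset.sum_congr rfl (fun j _ => by
      rw [hdzero _ Finset.sdiff_subset r hr, hdzero _ Finset.sdiff_subset r hr])]
    simp
  constructor
  · apply Set.Finite.subset I.finite_toSet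
    intro r hr
    simp only [Set.mem_setOf_eq] at hr
    by_contra hrI
    exact hr (hFzero r hrI)
  -- rewrite the finsum as a finite sum over I
  rw [finsum_eq_sum_of_support_subset _ (s := I) (fun r hr => by
    by_contra hrI
    exact hr (hFzero r hrI))]
  -- telescoping facts
  have hcc_np1 : ∀ σ : Finset (ℕ × ℕ), σ ⊆ μ.cells → cCount σ ((n : ℤ) + 1) = 0 :=
    fun σ hσ => cCount_eq_zero (fun c hc => hbound c (hσ hc)) (Or.inl (by omega))
  have hcc_nn : ∀ σ : Finset (ℕ × ℕ), σ ⊆ μ.cells → cCount σ (-(n : ℤ)) = 0 :=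
    fun σ hσ => cCount_eq_zero (fun c hc => hbound c (hσ hc)) (Or.inr (by omega))
  have htelP : ∀ σ : Finset (ℕ × ℕ), σ ⊆ μ.cells →
      ∑ r ∈ P, dCount σ r = (cCount σ 0 : ℤ) := by
    intro σ hσ
    rw [hP, sum_dCount_Icc σ (by omega : (0:ℤ) ≤ (n:ℤ) + 1), hcc_np1 σ hσ]
    simp
  have htelN : ∀ σ : Finset (ℕ × ℕ), σ ⊆ μ.cells →
      ∑ r ∈ Np, dCount σ r = -(cCount σ 0 : ℤ) := by
    intro σ hσ
    have h0 : (-1 : ℤ) + 1 = 0 := by ring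
    rw [hNp, sum_dCount_Icc σ (by omega : -(n:ℤ) ≤ (-1:ℤ) + 1), h0, hcc_nn σ hσ]
    simp
  -- sum of squares of dCount μ over I
  have hmusq : ∑ r ∈ I, dCount μ.cells r ^ 2 = 2 * (cCount μ.cells 0 : ℤ) := by
    rw [hsplitsum]
    have h1 : ∑ r ∈ P, dCount μ.cells r ^ 2 = ∑ r ∈ P, dCount μ.cells r := by
      refine Finset.sum_congr rfl fun r hr => ?_
      have hr0 : (0 : ℤ) ≤ r := by
        have := Finset.mem_Icc.mp hr; omega
      rcases dCount_young_nonneg μ r hr0 with h | h <;> rw [h] <;> ring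
    have h2 : ∑ r ∈ Np, dCount μ.cells r ^ 2 = -∑ r ∈ Np, dCount μ.cells r := by
      rw [← Finset.sum_neg_distrib]
      refine Finset.sum_congr rfl fun r hr => ?_
      have hr0 : r < 0 := by
        have := Finset.mem_Icc.mp hr; omega
      rcases dCount_young_neg μ r hr0 with h | h <;> rw [h] <;> ring
    rw [h1, h2, htelP μ.cells subset_rfl, htelN μ.cells subset_rfl]
    ring
  -- rewrite differences via ν
  have hEν : ∀ j, j < m → ∀ r : ℤ,
      dCount (μ.cells \ (ν (j + 1)).cells) r - dCount (μ.cells \ (ν j).cells) r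
        = dCount (ν j).cells r - dCount (ν (j + 1)).cells r := by
    intro j hj r
    unfold dCount
    rw [cCount_sdiff (hcells (j + 1) (by omega)), cCount_sdiff (hcells (j + 1) (by omega)),
      cCount_sdiff (hcells j (by omega)), cCount_sdiff (hcells j (by omega))]
    ring
  -- per-step telescoping sums
  have hEsumP : ∀ j, j < m →
      ∑ r ∈ P, (dCount (μ.cells \ (ν (j + 1)).cells) r - dCount (μ.cells \ (ν j).cells) r)
        = (cCount (ν j).cells 0 : ℤ) - cCount (ν (j + 1)).cells 0 := by
    intro j hj
    rw [Finset.sum_congr rfl fun r _ => hEν j hj r, Finset.sum_sub_distrib,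
      htelP _ (hcells j (by omega)), htelP _ (hcells (j + 1) (by omega))]
  have hEsumN : ∀ j, j < m →
      ∑ r ∈ Np, (dCount (μ.cells \ (ν (j + 1)).cells) r - dCount (μ.cells \ (ν j).cells) r)
        = -((cCount (ν j).cells 0 : ℤ) - cCount (ν (j + 1)).cells 0) := by
    intro j hj
    rw [Finset.sum_congr rfl fun r _ => hEν j hj r, Finset.sum_sub_distrib,
      htelN _ (hcells j (by omega)), htelN _ (hcells (j + 1) (by omega))]
    ring
  -- per-step lower bound
  have hjbound : ∀ j, j < m →
      2 * ((cCount (ν j).cells 0 : ℤ) - cCount (ν (j + 1)).cells 0)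
        ≤ ∑ r ∈ I, (dCount (μ.cells \ (ν (j + 1)).cells) r - dCount (μ.cells \ (ν j).cells) r) ^ 2 := by
    intro j hj
    rw [hsplitsum]
    have h1 := abs_sum_le_sum_sq Np
      (fun r => dCount (μ.cells \ (ν (j + 1)).cells) r - dCount (μ.cells \ (ν j).cells) r)
    have h2 := abs_sum_le_sum_sq P
      (fun r => dCount (μ.cells \ (ν (j + 1)).cells) r - dCount (μ.cells \ (ν j).cells) r)
    rw [hEsumN j hj] at h1
    rw [hEsumP j hj] at h2
    have ha := abs_nonneg ((cCount (ν j).cells 0 : ℤ) - cCount (ν (j + 1)).cells 0)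
    have hb := le_abs_self ((cCount (ν j).cells 0 : ℤ) - cCount (ν (j + 1)).cells 0)
    rw [abs_neg] at h1
    omega
  -- telescoping the δ's over j
  have hdelta : ∑ j ∈ Finset.range m,
      ((cCount (ν j).cells 0 : ℤ) - cCount (ν (j + 1)).cells 0) = (cCount μ.cells 0 : ℤ) := by
    rw [Finset.sum_range_sub' (fun j => (cCount (ν j).cells 0 : ℤ)), hν0, hνm]
    have : cCount (⊥ : YoungDiagram).cells 0 = 0 := by
      simp [cCount]
    rw [this]
    simp
  -- reorganize the goal
  have hswap : ∑ r ∈ I, (dCount μ.cells r ^ 2 -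
      ∑ j ∈ Finset.range m,
        (dCount (μ.cells \ (ν (j + 1)).cells) r - dCount (μ.cells \ (ν j).cells) r) ^ 2)
      = 2 * (cCount μ.cells 0 : ℤ) -
        ∑ j ∈ Finset.range m, ∑ r ∈ I,
          (dCount (μ.cells \ (ν (j + 1)).cells) r - dCount (μ.cells \ (ν j).cells) r) ^ 2 := by
    rw [Finset.sum_sub_distrib, hmusq, Finset.sum_comm]
  rw [hswap]
  -- main case split
  rcases Nat.eq_zero_or_pos (cCount (μ.cells \ (ν (m - 1)).cells) 0) with hc0 | hc0
  · -- the hard case: ρ_{m-1} misses the diagonal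
    have hm1 : m - 1 ≤ m := by omega
    have hceq : cCount (ν (m - 1)).cells 0 = cCount μ.cells 0 := by
      have := cCount_sdiff (hcells (m - 1) hm1) 0
      rw [hc0] at this
      omega
    -- c₀ is constant along ν 0, ..., ν (m-1)
    have hconst : ∀ i, i ≤ m - 1 → cCount (ν i).cells 0 = cCount μ.cells 0 := by
      intro i hi
      have h1 : cCount (ν (m - 1)).cells 0 ≤ cCount (ν i).cells 0 :=
        cCount_le_of_subset (hmono (m - 1) hm1 i hi) 0
      have h2 : cCount (ν i).cells 0 ≤ cCount (ν 0).cells 0 :=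
        cCount_le_of_subset (hmono i (by omega) 0 (Nat.zero_le _)) 0
      rw [hν0] at h2
      omega
    -- find a step strictly below m-1 where the chain moves
    have hexj : ∃ j, j < m - 1 ∧ ν (j + 1) ≠ ν j := by
      by_contra h
      push_neg at h
      have := chain_eq ν (m - 1) (fun j hj => h j hj)
      rw [hν0] at this
      exact hne this
    obtain ⟨j₀, hj₀, hj₀ne⟩ := hexj
    -- a diagonal where the two diagrams differ
    obtain ⟨c, hc⟩ : ∃ c, c ∈ (ν j₀).cells ∧ c ∉ (ν (j₀ + 1)).cells := by
      by_contra h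
      push_neg at h
      apply hj₀ne
      have hsub : (ν (j₀ + 1)).cells ⊆ (ν j₀).cells := hchain j₀ (by omega)
      have : (ν (j₀ + 1)).cells = (ν j₀).cells := Finset.Subset.antisymm hsub h
      ext x
      rw [this]
    set r₀ : ℤ := (c.1 : ℤ) - c.2 with hr₀
    have hcμ : c ∈ μ.cells := hcells j₀ (by omega) hc.1
    have hr₀I : -(n : ℤ) ≤ r₀ ∧ r₀ ≤ n := by
      have := hbound c hcμ; omega
    have hclt : cCount (ν (j₀ + 1)).cells r₀ < cCount (ν j₀).cells r₀ := by
      apply Finset.card_lt_card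
      rw [Finset.ssubset_iff_of_subset (Finset.filter_subset_filter _ (hchain j₀ (by omega)))]
      exact ⟨c, Finset.mem_filter.mpr ⟨hc.1, rfl⟩, fun hmem => hc.2 (Finset.mem_filter.mp hmem).1⟩
    -- there is a nonzero step difference in I
    have hexr : ∃ r ∈ I, (dCount (μ.cells \ (ν (j₀ + 1)).cells) r - dCount (μ.cells \ (ν j₀).cells) r) ≠ 0 := by
      by_contra h
      push_neg at h
      have hg : ∀ r ∈ Finset.Icc r₀ (n : ℤ),
          ((fun s => (cCount (ν j₀).cells s : ℤ) - cCount (ν (j₀ + 1)).cells s) r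
            - (fun s => (cCount (ν j₀).cells s : ℤ) - cCount (ν (j₀ + 1)).cells s) (r + 1)) = 0 := by
        intro r hr
        have hrI : r ∈ I := by
          rw [hI, Finset.mem_Icc]
          have := Finset.mem_Icc.mp hr
          omega
        have h0 := h r hrI
        rw [hEν j₀ (by omega) r] at h0
        simp only [dCount] at h0 ⊢
        omega
      have htel := telescope (fun s => (cCount (ν j₀).cells s : ℤ) - cCount (ν (j₀ + 1)).cells s)
        (show r₀ ≤ (n : ℤ) + 1 by omega)
      rw [Finset.sum_congr rfl hg] at htel
      simp only [Finset.sum_const_zero] at htel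
      have hz1 : cCount (ν j₀).cells ((n : ℤ) + 1) = 0 := hcc_np1 _ (hcells j₀ (by omega))
      have hz2 : cCount (ν (j₀ + 1)).cells ((n : ℤ) + 1) = 0 := hcc_np1 _ (hcells (j₀ + 1) (by omega))
      simp only [hz1, hz2] at htel
      omega
    obtain ⟨r₁, hr₁I, hr₁ne⟩ := hexr
    -- the total step sum over I is zero for j₀ (c₀ is constant there)
    have hδ0 : (cCount (ν j₀).cells 0 : ℤ) - cCount (ν (j₀ + 1)).cells 0 = 0 := by
      have h1 := hconst j₀ (by omega)
      have h2 := hconst (j₀ + 1) (by omega)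
      omega
    have hsum0 : ∑ r ∈ I,
        (dCount (μ.cells \ (ν (j₀ + 1)).cells) r - dCount (μ.cells \ (ν j₀).cells) r) = 0 := by
      rw [hsplitsum, hEsumP j₀ (by omega), hEsumN j₀ (by omega), hδ0]
      ring
    have hstrict : 2 ≤ ∑ r ∈ I,
        (dCount (μ.cells \ (ν (j₀ + 1)).cells) r - dCount (μ.cells \ (ν j₀).cells) r) ^ 2 :=
      sum_sq_ge_two I _ hsum0 hr₁I hr₁ne
    -- lower bound the double sum with the extra +2 at j₀
    have hbig : 2 * (cCount μ.cells 0 : ℤ) + 2 ≤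
        ∑ j ∈ Finset.range m, ∑ r ∈ I,
          (dCount (μ.cells \ (ν (j + 1)).cells) r - dCount (μ.cells \ (ν j).cells) r) ^ 2 := by
      have hle : ∑ j ∈ Finset.range m,
          (2 * ((cCount (ν j).cells 0 : ℤ) - cCount (ν (j + 1)).cells 0)
            + if j = j₀ then 2 else 0)
          ≤ ∑ j ∈ Finset.range m, ∑ r ∈ I,
            (dCount (μ.cells \ (ν (j + 1)).cells) r - dCount (μ.cells \ (ν j).cells) r) ^ 2 := by
        refine Finset.sum_le_sum fun j hj => ?_
        have hjm : j < m := Finset.mem_range.mp hj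
        rcases eq_or_ne j j₀ with h | h
        · subst h
          simp only [if_pos rfl]
          rw [hδ0]
          simpa using hstrict
        · simp only [if_neg h, add_zero]
          exact hjbound j hjm
      rw [Finset.sum_add_distrib, ← Finset.mul_sum, hdelta, Finset.sum_ite_eq' (Finset.range m)] at hle
      simpa [Finset.mem_range.mpr (show j₀ < m by omega)] using hle
    rw [hc0]
    push_cast
    omega
  · -- easy case: ρ_{m-1} meets the diagonal
    have hbig : 2 * (cCount μ.cells 0 : ℤ) ≤
        ∑ j ∈ Finset.range m, ∑ r ∈ I,
          (dCount (μ.cells \ (ν (j + 1)).cells) r - dCount (μ.cells \ (ν j).cells) r) ^ 2 := by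
      have hle := Finset.sum_le_sum fun j hj =>
        hjbound j (Finset.mem_range.mp hj)
      rw [← Finset.mul_sum, hdelta] at hle
      exact hle
    omega
end

section
/- In the ring ℚ⟦q⟧ of formal power series over ℚ, one has D C₄ = −8·C₂·C₄ + 21·C₆, where D is the operator q·d/dq. (This is one of the paper's listed quasimodular differentiation formulas, equivalent to Ramanujan's identity q·dE₄/dq = (E₂E₄ − E₆)/3.) -/
/-- The divisor power sum `σ_j(n) = ∑_{d ∣ n} d^j`. -/
def sigmaFn (j n : ℕ) : ℕ := ∑ d ∈ n.divisors, d ^ j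

/-- The Eisenstein series `E₂ = 1 - 24 ∑_{n≥1} σ₁(n) qⁿ` in `ℚ⟦q⟧`. -/
noncomputable def E₂ : PowerSeries ℚ :=
  PowerSeries.mk fun n => if n = 0 then 1 else -24 * (sigmaFn 1 n : ℚ)

/-- The Eisenstein series `E₄ = 1 + 240 ∑_{n≥1} σ₃(n) qⁿ` in `ℚ⟦q⟧`. -/
noncomputable def E₄ : PowerSeries ℚ :=
  PowerSeries.mk fun n => if n = 0 then 1 else 240 * (sigmaFn 3 n : ℚ)

/-- The Eisenstein series `E₆ = 1 - 504 ∑_{n≥1} σ₅(n) qⁿ` in `ℚ⟦q⟧`. -/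
noncomputable def E₆ : PowerSeries ℚ :=
  PowerSeries.mk fun n => if n = 0 then 1 else -504 * (sigmaFn 5 n : ℚ)

/-- `C₂ = -E₂/24`. -/
noncomputable def C₂ : PowerSeries ℚ := (-1 / 24 : ℚ) • E₂

/-- `C₄ = E₄/2880`. -/
noncomputable def C₄ : PowerSeries ℚ := (1 / 2880 : ℚ) • E₄

/-- `C₆ = -E₆/181440`. -/
noncomputable def C₆ : PowerSeries ℚ := (-1 / 181440 : ℚ) • E₆

/-- The operator `D = q·d/dq` on `ℚ⟦q⟧`, sending `∑ aₙ qⁿ` to `∑ n aₙ qⁿ`. -/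
noncomputable def Dop (f : PowerSeries ℚ) : PowerSeries ℚ :=
  PowerSeries.mk fun n => (n : ℚ) * PowerSeries.coeff n f

section Aux
open Finset
abbrev Quad := ℕ × ℕ × ℕ × ℕ
def Tset (n : ℕ) : Finset Quad :=
  ((range (n+1) ×ˢ range (n+1) ×ˢ range (n+1) ×ˢ range (n+1))).filter
    (fun t => 0 < t.1 ∧ 0 < t.2.1 ∧ 0 < t.2.2.1 ∧ 0 < t.2.2.2 ∧
      t.1 * t.2.1 + t.2.2.1 * t.2.2.2 = n)
lemma mem_Tset {n : ℕ} {t : Quad} :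
    t ∈ Tset n ↔ 0 < t.1 ∧ 0 < t.2.1 ∧ 0 < t.2.2.1 ∧ 0 < t.2.2.2 ∧
      t.1 * t.2.1 + t.2.2.1 * t.2.2.2 = n := by
  obtain ⟨a, b, c, d⟩ := t
  simp only [Tset, mem_filter, mem_product]
  constructor
  · tauto
  · rintro ⟨ha, hb, hc, hd, he⟩
    refine ⟨⟨?_, ?_, ?_, ?_⟩, ha, hb, hc, hd, he⟩ <;> simp only [mem_range] <;> nlinarith
def sw (t : Quad) : Quad := (t.2.2.1, t.2.2.2, t.1, t.2.1)

/-- swap symmetry of filtered sums over Tset -/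
lemma sum_sw (n : ℕ) (p : Quad → Prop) [DecidablePred p] (f : Quad → ℚ) :
    ∑ t ∈ (Tset n).filter (fun t => p t), f t
      = ∑ t ∈ (Tset n).filter (fun t => p (sw t)), f (sw t) := by
  refine sum_nbij' sw sw ?_ ?_ ?_ ?_ ?_
  · rintro ⟨a,b,c,d⟩ h
    simp only [mem_filter, mem_Tset] at h ⊢
    simp only [sw] at h ⊢
    exact ⟨⟨h.1.2.2.1, h.1.2.2.2.1, h.1.1, h.1.2.1, by omega⟩, h.2⟩
  · rintro ⟨a,b,c,d⟩ h
    simp only [mem_filter, mem_Tset] at h ⊢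
    simp only [sw] at h ⊢
    exact ⟨⟨h.1.2.2.1, h.1.2.2.2.1, h.1.1, h.1.2.1, by omega⟩, h.2⟩
  · rintro ⟨a,b,c,d⟩ _; rfl
  · rintro ⟨a,b,c,d⟩ _; rfl
  · rintro ⟨a,b,c,d⟩ _; rfl

/-- bijection M1 : {d < b} → {a < c}, (a,b,c,d) ↦ (a, b-d, c+a, d) -/
lemma sum_M1 (n : ℕ) (f : Quad → ℚ) :
    ∑ t ∈ (Tset n).filter (fun t => t.2.2.2 < t.2.1),
        f (t.1, t.2.1 - t.2.2.2, t.2.2.1 + t.1, t.2.2.2)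
      = ∑ t ∈ (Tset n).filter (fun t => t.1 < t.2.2.1), f t := by
  refine sum_nbij' (fun t => (t.1, t.2.1 - t.2.2.2, t.2.2.1 + t.1, t.2.2.2))
    (fun t => (t.1, t.2.1 + t.2.2.2, t.2.2.1 - t.1, t.2.2.2)) ?_ ?_ ?_ ?_ ?_
  · rintro ⟨a,b,c,d⟩ h
    simp only [mem_filter, mem_Tset] at *
    obtain ⟨⟨ha, hb, hc, hd, he⟩, hlt⟩ := h
    obtain ⟨k, rfl⟩ : ∃ k, b = d + k := ⟨b - d, by omega⟩
    have h2 : a * k + (c + a) * d = n := by rw [← he]; ring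
    refine ⟨⟨ha, by omega, by omega, hd, ?_⟩, by omega⟩
    rw [← h2]; congr 1; · congr 1; omega
  · rintro ⟨a,b,c,d⟩ h
    simp only [mem_filter, mem_Tset] at *
    obtain ⟨⟨ha, hb, hc, hd, he⟩, hlt⟩ := h
    obtain ⟨k, rfl⟩ : ∃ k, c = a + k := ⟨c - a, by omega⟩
    have h2 : a * (b + d) + k * d = n := by rw [← he]; ring
    refine ⟨⟨ha, by omega, by omega, hd, ?_⟩, by omega⟩
    rw [← h2]; congr 2; omega
  · rintro ⟨a,b,c,d⟩ h
    simp only [mem_filter, mem_Tset] at h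
    obtain ⟨⟨ha,hb,hc,hd,he⟩,hlt⟩ := h
    simp [Nat.sub_add_cancel hlt.le, Nat.add_sub_cancel]
  · rintro ⟨a,b,c,d⟩ h
    simp only [mem_filter, mem_Tset] at h
    obtain ⟨⟨ha,hb,hc,hd,he⟩,hlt⟩ := h
    simp [Nat.sub_add_cancel hlt.le, Nat.add_sub_cancel]
  · rintro ⟨a,b,c,d⟩ _; rfl

/-- bijection M2 : {b < d} → {c < a}, (a,b,c,d) ↦ (a+c, b, c, d-b) -/
lemma sum_M2 (n : ℕ) (f : Quad → ℚ) :
    ∑ t ∈ (Tset n).filter (fun t => t.2.1 < t.2.2.2),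
        f (t.1 + t.2.2.1, t.2.1, t.2.2.1, t.2.2.2 - t.2.1)
      = ∑ t ∈ (Tset n).filter (fun t => t.2.2.1 < t.1), f t := by
  refine sum_nbij' (fun t => (t.1 + t.2.2.1, t.2.1, t.2.2.1, t.2.2.2 - t.2.1))
    (fun t => (t.1 - t.2.2.1, t.2.1, t.2.2.1, t.2.2.2 + t.2.1)) ?_ ?_ ?_ ?_ ?_
  · rintro ⟨a,b,c,d⟩ h
    simp only [mem_filter, mem_Tset] at *
    obtain ⟨⟨ha, hb, hc, hd, he⟩, hlt⟩ := h
    obtain ⟨k, rfl⟩ : ∃ k, d = b + k := ⟨d - b, by omega⟩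
    have h2 : (a + c) * b + c * k = n := by rw [← he]; ring
    refine ⟨⟨by omega, hb, hc, by omega, ?_⟩, by omega⟩
    rw [← h2]; congr 2; omega
  · rintro ⟨a,b,c,d⟩ h
    simp only [mem_filter, mem_Tset] at *
    obtain ⟨⟨ha, hb, hc, hd, he⟩, hlt⟩ := h
    obtain ⟨k, rfl⟩ : ∃ k, a = c + k := ⟨a - c, by omega⟩
    have h2 : k * b + c * (d + b) = n := by rw [← he]; ring
    refine ⟨⟨by omega, hb, hc, by omega, ?_⟩, by omega⟩
    rw [← h2]; congr 2; omega
  · rintro ⟨a,b,c,d⟩ h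
    simp only [mem_filter, mem_Tset] at h
    obtain ⟨⟨ha,hb,hc,hd,he⟩,hlt⟩ := h
    simp [Nat.sub_add_cancel hlt.le, Nat.add_sub_cancel]
  · rintro ⟨a,b,c,d⟩ h
    simp only [mem_filter, mem_Tset] at h
    obtain ⟨⟨ha,hb,hc,hd,he⟩,hlt⟩ := h
    simp [Nat.sub_add_cancel hlt.le, Nat.add_sub_cancel]
  · rintro ⟨a,b,c,d⟩ _; rfl

/-- partition of a sum over Tset by trichotomy on b,d -/
lemma sum_tri (n : ℕ) (f : Quad → ℚ) :
    ∑ t ∈ Tset n, f t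
      = ∑ t ∈ (Tset n).filter (fun t => t.2.2.2 < t.2.1), f t
        + ∑ t ∈ (Tset n).filter (fun t => t.2.1 < t.2.2.2), f t
        + ∑ t ∈ (Tset n).filter (fun t => t.2.1 = t.2.2.2), f t := by
  rw [← sum_filter_add_sum_filter_not (Tset n) (fun t => t.2.2.2 < t.2.1) f]
  rw [← sum_filter_add_sum_filter_not ((Tset n).filter (fun t => ¬ t.2.2.2 < t.2.1))
    (fun t => t.2.1 < t.2.2.2) f]
  rw [filter_filter, filter_filter]
  rw [add_assoc]
  congr 2
  · refine Finset.sum_congr ?_ (fun _ _ => rfl)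
    apply filter_congr; intro t _; omega
  · refine Finset.sum_congr ?_ (fun _ _ => rfl)
    apply filter_congr; intro t _; omega

/-- partition of a sum over Tset by trichotomy on a,c -/
lemma sum_tri' (n : ℕ) (f : Quad → ℚ) :
    ∑ t ∈ Tset n, f t
      = ∑ t ∈ (Tset n).filter (fun t => t.1 < t.2.2.1), f t
        + ∑ t ∈ (Tset n).filter (fun t => t.2.2.1 < t.1), f t
        + ∑ t ∈ (Tset n).filter (fun t => t.1 = t.2.2.1), f t := by
  rw [← sum_filter_add_sum_filter_not (Tset n) (fun t => t.1 < t.2.2.1) f]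
  rw [← sum_filter_add_sum_filter_not ((Tset n).filter (fun t => ¬ t.1 < t.2.2.1))
    (fun t => t.2.2.1 < t.1) f]
  rw [filter_filter, filter_filter]
  rw [add_assoc]
  congr 2
  · refine Finset.sum_congr ?_ (fun _ _ => rfl)
    apply filter_congr; intro t _; omega
  · refine Finset.sum_congr ?_ (fun _ _ => rfl)
    apply filter_congr; intro t _; omega

/-- parametrization of the diagonal b = d by divisor pairs -/
lemma sum_diag_bd (n : ℕ) (f : Quad → ℚ) :
    ∑ t ∈ (Tset n).filter (fun t => t.2.1 = t.2.2.2), f t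
      = ∑ p ∈ n.divisorsAntidiagonal, ∑ a ∈ Ico 1 p.2, f (a, p.1, p.2 - a, p.1) := by
  have hs := sum_sigma' (β := ℚ) n.divisorsAntidiagonal (fun p => Ico 1 p.2)
    (fun p a => f (a, p.1, p.2 - a, p.1))
  rw [hs]
  refine sum_nbij' (fun (t : Quad) => (⟨(t.2.1, t.1 + t.2.2.1), t.1⟩ : (_ : ℕ × ℕ) × ℕ))
    (fun (x : (_ : ℕ × ℕ) × ℕ) => ((x.2, x.1.1, x.1.2 - x.2, x.1.1) : Quad)) ?_ ?_ ?_ ?_ ?_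
  · rintro ⟨a,b,c,d⟩ h
    simp only [mem_filter, mem_Tset] at h
    obtain ⟨⟨ha,hb,hc,hd,he⟩,hq⟩ := h
    subst hq
    have hab : 0 < a * b := Nat.mul_pos ha hb
    simp only [mem_sigma, Nat.mem_divisorsAntidiagonal, mem_Ico]
    exact ⟨⟨by rw [← he]; ring, by omega⟩, by omega, by omega⟩
  · rintro ⟨⟨b,s⟩,a⟩ h
    simp only [mem_sigma, Nat.mem_divisorsAntidiagonal, mem_Ico] at h
    obtain ⟨⟨he, hn⟩, h1, h2⟩ := h
    simp only [mem_filter, mem_Tset]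
    have hb : 0 < b := by
      rcases Nat.eq_zero_or_pos b with h | h
      · subst h; simp at he; omega
      · exact h
    have he2 : a * b + (s - a) * b = n := by
      rw [← Nat.add_mul]
      have : a + (s - a) = s := by omega
      rw [this, ← he]; ring
    exact ⟨⟨by omega, hb, by omega, hb, he2⟩, by trivial⟩
  · rintro ⟨a,b,c,d⟩ h
    simp only [mem_filter, mem_Tset] at h
    obtain ⟨⟨ha,hb,hc,hd,he⟩,hq⟩ := h
    subst hq
    have h3 : a + c - a = c := by omega
    simp only [Prod.mk.injEq, h3, eq_self_iff_true, true_and, and_true, and_self]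
  · rintro ⟨⟨b,s⟩,a⟩ h
    simp only [mem_sigma, Nat.mem_divisorsAntidiagonal, mem_Ico] at h
    obtain ⟨⟨he, hn⟩, h1, h2⟩ := h
    have h3 : a + (s - a) = s := by omega
    simp only [Sigma.mk.inj_iff, Prod.mk.injEq, h3, heq_iff_eq, eq_self_iff_true,
      true_and, and_true, and_self]
  · rintro ⟨a,b,c,d⟩ h
    simp only [mem_filter, mem_Tset] at h
    obtain ⟨⟨ha,hb,hc,hd,he⟩,hq⟩ := h
    subst hq
    have h3 : a + c - a = c := by omega
    simp only [h3]

/-- parametrization of the diagonal a = c by divisor pairs -/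
lemma sum_diag_ac (n : ℕ) (f : Quad → ℚ) :
    ∑ t ∈ (Tset n).filter (fun t => t.1 = t.2.2.1), f t
      = ∑ p ∈ n.divisorsAntidiagonal, ∑ b ∈ Ico 1 p.2, f (p.1, b, p.1, p.2 - b) := by
  have hs := sum_sigma' (β := ℚ) n.divisorsAntidiagonal (fun p => Ico 1 p.2)
    (fun p b => f (p.1, b, p.1, p.2 - b))
  rw [hs]
  refine sum_nbij' (fun (t : Quad) => (⟨(t.1, t.2.1 + t.2.2.2), t.2.1⟩ : (_ : ℕ × ℕ) × ℕ))
    (fun (x : (_ : ℕ × ℕ) × ℕ) => ((x.1.1, x.2, x.1.1, x.1.2 - x.2) : Quad)) ?_ ?_ ?_ ?_ ?_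
  · rintro ⟨a,b,c,d⟩ h
    simp only [mem_filter, mem_Tset] at h
    obtain ⟨⟨ha,hb,hc,hd,he⟩,hq⟩ := h
    have hab : 0 < a * b := Nat.mul_pos ha hb
    simp only [mem_sigma, Nat.mem_divisorsAntidiagonal, mem_Ico]
    exact ⟨⟨by rw [← he, ← hq]; ring, by omega⟩, by omega, by omega⟩
  · rintro ⟨⟨a,s⟩,b⟩ h
    simp only [mem_sigma, Nat.mem_divisorsAntidiagonal, mem_Ico] at h
    obtain ⟨⟨he, hn⟩, h1, h2⟩ := h
    simp only [mem_filter, mem_Tset]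
    have ha : 0 < a := by
      rcases Nat.eq_zero_or_pos a with h | h
      · subst h; simp at he; omega
      · exact h
    have he2 : a * b + a * (s - b) = n := by
      rw [← Nat.mul_add]
      have : b + (s - b) = s := by omega
      rw [this, ← he]
    exact ⟨⟨ha, by omega, ha, by omega, he2⟩, by trivial⟩
  · rintro ⟨a,b,c,d⟩ h
    simp only [mem_filter, mem_Tset] at h
    obtain ⟨⟨ha,hb,hc,hd,he⟩,hq⟩ := h
    have h3 : b + d - b = d := by omega
    show ((a, b, a, b + d - b) : Quad) = (a, b, c, d)
    rw [h3, ← hq]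
  · rintro ⟨⟨a,s⟩,b⟩ h
    simp only [mem_sigma, Nat.mem_divisorsAntidiagonal, mem_Ico] at h
    obtain ⟨⟨he, hn⟩, h1, h2⟩ := h
    have h3 : b + (s - b) = s := by omega
    simp only [Sigma.mk.inj_iff, Prod.mk.injEq, h3, heq_iff_eq, eq_self_iff_true,
      true_and, and_true, and_self]
  · rintro ⟨a,b,c,d⟩ h
    simp only [mem_filter, mem_Tset] at h
    obtain ⟨⟨ha,hb,hc,hd,he⟩,hq⟩ := h
    have h3 : b + d - b = d := by omega
    show f (a, b, c, d) = f (a, b, a, b + d - b)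
    rw [h3, ← hq]


/-- unfiltered swap symmetry -/
lemma sum_sw_all (n : ℕ) (f : Quad → ℚ) :
    ∑ t ∈ Tset n, f t = ∑ t ∈ Tset n, f (sw t) := by
  refine sum_nbij' sw sw ?_ ?_ ?_ ?_ ?_
  · rintro ⟨a,b,c,d⟩ h
    simp only [mem_Tset, sw] at h ⊢
    obtain ⟨ha,hb,hc,hd,he⟩ := h
    exact ⟨hc, hd, ha, hb, by omega⟩
  · rintro ⟨a,b,c,d⟩ h
    simp only [mem_Tset, sw] at h ⊢
    obtain ⟨ha,hb,hc,hd,he⟩ := h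
    exact ⟨hc, hd, ha, hb, by omega⟩
  · rintro ⟨a,b,c,d⟩ _; rfl
  · rintro ⟨a,b,c,d⟩ _; rfl
  · rintro ⟨a,b,c,d⟩ _; rfl

lemma psum1 (s : ℕ) : ∑ b ∈ range s, (b : ℚ) = ((s:ℚ)^2 - s)/2 := by
  induction s with
  | zero => simp
  | succ m ih => rw [sum_range_succ, ih]; push_cast; ring

lemma psum2 (s : ℕ) : ∑ b ∈ range s, (b : ℚ)^2 = (2*(s:ℚ)^3 - 3*(s:ℚ)^2 + s)/6 := by
  induction s with
  | zero => simp
  | succ m ih => rw [sum_range_succ, ih]; push_cast; ring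

lemma psum3 (s : ℕ) : ∑ b ∈ range s, (b : ℚ)^3 = ((s:ℚ)^4 - 2*(s:ℚ)^3 + (s:ℚ)^2)/4 := by
  induction s with
  | zero => simp
  | succ m ih => rw [sum_range_succ, ih]; push_cast; ring

lemma psum4 (s : ℕ) : ∑ b ∈ range s, (b : ℚ)^4
    = (6*(s:ℚ)^5 - 15*(s:ℚ)^4 + 10*(s:ℚ)^3 - s)/30 := by
  induction s with
  | zero => simp
  | succ m ih => rw [sum_range_succ, ih]; push_cast; ring

/-- Faulhaber evaluation of the inner sum on the diagonal a = c -/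
lemma faul (s : ℕ) (hs : 1 ≤ s) :
    ∑ b ∈ Ico 1 s, ((2:ℚ)*((s - b : ℕ):ℚ)^4 + 4*(b:ℚ)*((s - b : ℕ):ℚ)^3
        + 3*(b:ℚ)^2*((s - b : ℕ):ℚ)^2)
      = (21*(s:ℚ)^5 - 30*(s:ℚ)^4 + 10*(s:ℚ)^3 - s)/30 := by
  have hrange : ∑ b ∈ range s, ((2:ℚ)*((s - b : ℕ):ℚ)^4 + 4*(b:ℚ)*((s - b : ℕ):ℚ)^3
      + 3*(b:ℚ)^2*((s - b : ℕ):ℚ)^2)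
      = (21*(s:ℚ)^5 + 30*(s:ℚ)^4 + 10*(s:ℚ)^3 - s)/30 := by
    have hpt : ∀ b ∈ range s, (2:ℚ)*((s - b : ℕ):ℚ)^4 + 4*(b:ℚ)*((s - b : ℕ):ℚ)^3
        + 3*(b:ℚ)^2*((s - b : ℕ):ℚ)^2
        = 2*(s:ℚ)^4 - 4*(s:ℚ)^3*(b:ℚ) + 3*(s:ℚ)^2*(b:ℚ)^2 - 2*(s:ℚ)*(b:ℚ)^3 + (b:ℚ)^4 := by
      intro b hb
      rw [mem_range] at hb
      rw [Nat.cast_sub hb.le]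
      ring
    rw [sum_congr rfl hpt]
    simp only [sum_add_distrib, sum_sub_distrib, ← mul_sum, sum_const, card_range,
      nsmul_eq_mul]
    rw [psum1, psum2, psum3, psum4]
    ring
  have hsplit : ∑ b ∈ range s, ((2:ℚ)*((s - b : ℕ):ℚ)^4 + 4*(b:ℚ)*((s - b : ℕ):ℚ)^3
      + 3*(b:ℚ)^2*((s - b : ℕ):ℚ)^2)
      = ((2:ℚ)*((s - 0 : ℕ):ℚ)^4 + 4*((0:ℕ):ℚ)*((s - 0 : ℕ):ℚ)^3
        + 3*((0:ℕ):ℚ)^2*((s - 0 : ℕ):ℚ)^2)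
      + ∑ b ∈ Ico 1 s, ((2:ℚ)*((s - b : ℕ):ℚ)^4 + 4*(b:ℚ)*((s - b : ℕ):ℚ)^3
        + 3*(b:ℚ)^2*((s - b : ℕ):ℚ)^2) := by
    rw [range_eq_Ico]
    exact Finset.sum_eq_sum_Ico_succ_bot (by omega) _
  rw [hrange] at hsplit
  simp only [Nat.sub_zero, Nat.cast_zero] at hsplit
  have : ((s:ℚ))^4 * 2 = 2*(s:ℚ)^4 := by ring
  -- solve for the Ico sum
  linarith [hsplit]

/-- sigma over the antidiagonal, second components -/
lemma sigma_snd (k n : ℕ) :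
    ∑ p ∈ n.divisorsAntidiagonal, ((p.2 : ℚ))^k = (sigmaFn k n : ℚ) := by
  have h := Nat.sum_divisorsAntidiagonal' (fun i j => ((j:ℚ))^k) (n := n)
  rw [h, sigmaFn]
  push_cast
  rfl

/-- sigma over the antidiagonal, first components -/
lemma sigma_fst (k n : ℕ) :
    ∑ p ∈ n.divisorsAntidiagonal, ((p.1 : ℚ))^k = (sigmaFn k n : ℚ) := by
  have h := Nat.sum_divisorsAntidiagonal (fun i j => ((i:ℚ))^k) (n := n)
  rw [h, sigmaFn]
  push_cast
  rfl

/-- evaluation used on the diagonal b = d -/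
lemma sum_bd_eval (n : ℕ) :
    ∑ p ∈ n.divisorsAntidiagonal, ((p.1 : ℚ))^4 * (((p.2:ℕ) - 1 : ℕ) : ℚ)
      = (n : ℚ) * (sigmaFn 3 n : ℚ) - (sigmaFn 4 n : ℚ) := by
  have hpt : ∀ p ∈ n.divisorsAntidiagonal,
      ((p.1 : ℚ))^4 * (((p.2:ℕ) - 1 : ℕ) : ℚ) = (n:ℚ) * ((p.1:ℚ))^3 - ((p.1:ℚ))^4 := by
    intro p hp
    rw [Nat.mem_divisorsAntidiagonal] at hp
    obtain ⟨he, hn⟩ := hp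
    have h2 : 1 ≤ p.2 := by
      rcases Nat.eq_zero_or_pos p.2 with h | h
      · rw [h, Nat.mul_zero] at he; omega
      · exact h
    rw [Nat.cast_sub h2]
    have hc : ((p.1 : ℚ)) * p.2 = n := by exact_mod_cast congrArg (Nat.cast : ℕ → ℚ) he
    push_cast
    linear_combination ((p.1 : ℚ))^3 * hc
  rw [sum_congr rfl hpt, sum_sub_distrib, ← mul_sum, sigma_fst 3 n, sigma_fst 4 n]

def Gq : Quad → ℚ := fun t =>
  2*(t.2.2.2:ℚ)^4 + 4*(t.2.1:ℚ)*(t.2.2.2:ℚ)^3 + 3*(t.2.1:ℚ)^2*(t.2.2.2:ℚ)^2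

def Fq : Quad → ℚ := fun t => (t.2.1:ℚ)*(t.2.2.2:ℚ)^3 + (t.2.1:ℚ)^3*(t.2.2.2:ℚ)

/-- the diagonal b = d sums for Gq -/
lemma diag_bd_G (n : ℕ) :
    ∑ t ∈ (Tset n).filter (fun t => t.2.1 = t.2.2.2), Gq t
      = 9 * ((n : ℚ) * (sigmaFn 3 n : ℚ) - (sigmaFn 4 n : ℚ)) := by
  rw [sum_diag_bd n Gq]
  have hpt : ∀ p ∈ n.divisorsAntidiagonal,
      ∑ a ∈ Ico 1 p.2, Gq (a, p.1, p.2 - a, p.1)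
        = 9 * ((p.1 : ℚ))^4 * (((p.2:ℕ) - 1 : ℕ) : ℚ) := by
    intro p hp
    have hval : ∀ a, Gq (a, p.1, p.2 - a, p.1) = 9 * ((p.1:ℚ))^4 := by
      intro a; simp only [Gq]; ring
    rw [sum_congr rfl (fun a _ => hval a), sum_const, Nat.card_Ico, nsmul_eq_mul]
    ring
  rw [sum_congr rfl hpt]
  have : ∑ p ∈ n.divisorsAntidiagonal, 9 * ((p.1 : ℚ))^4 * (((p.2:ℕ) - 1 : ℕ) : ℚ)
      = 9 * ∑ p ∈ n.divisorsAntidiagonal, ((p.1 : ℚ))^4 * (((p.2:ℕ) - 1 : ℕ) : ℚ) := by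
    rw [mul_sum]; exact sum_congr rfl (fun p _ => by ring)
  rw [this, sum_bd_eval]

/-- the diagonal b = d sums for Fq -/
lemma diag_bd_F (n : ℕ) :
    ∑ t ∈ (Tset n).filter (fun t => t.2.1 = t.2.2.2), Fq t
      = 2 * ((n : ℚ) * (sigmaFn 3 n : ℚ) - (sigmaFn 4 n : ℚ)) := by
  rw [sum_diag_bd n Fq]
  have hpt : ∀ p ∈ n.divisorsAntidiagonal,
      ∑ a ∈ Ico 1 p.2, Fq (a, p.1, p.2 - a, p.1)
        = 2 * ((p.1 : ℚ))^4 * (((p.2:ℕ) - 1 : ℕ) : ℚ) := by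
    intro p hp
    have hval : ∀ a, Fq (a, p.1, p.2 - a, p.1) = 2 * ((p.1:ℚ))^4 := by
      intro a; simp only [Fq]; ring
    rw [sum_congr rfl (fun a _ => hval a), sum_const, Nat.card_Ico, nsmul_eq_mul]
    ring
  rw [sum_congr rfl hpt]
  have : ∑ p ∈ n.divisorsAntidiagonal, 2 * ((p.1 : ℚ))^4 * (((p.2:ℕ) - 1 : ℕ) : ℚ)
      = 2 * ∑ p ∈ n.divisorsAntidiagonal, ((p.1 : ℚ))^4 * (((p.2:ℕ) - 1 : ℕ) : ℚ) := by
    rw [mul_sum]; exact sum_congr rfl (fun p _ => by ring)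
  rw [this, sum_bd_eval]

/-- the diagonal a = c sum for Gq -/
lemma diag_ac_G (n : ℕ) :
    ∑ t ∈ (Tset n).filter (fun t => t.1 = t.2.2.1), Gq t
      = (21*(sigmaFn 5 n : ℚ) - 30*(sigmaFn 4 n : ℚ) + 10*(sigmaFn 3 n : ℚ)
          - (sigmaFn 1 n : ℚ))/30 := by
  rw [sum_diag_ac n Gq]
  have hpt : ∀ p ∈ n.divisorsAntidiagonal,
      ∑ b ∈ Ico 1 p.2, Gq (p.1, b, p.1, p.2 - b)
        = (21*((p.2:ℚ))^5 - 30*((p.2:ℚ))^4 + 10*((p.2:ℚ))^3 - (p.2:ℚ))/30 := by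
    intro p hp
    rw [Nat.mem_divisorsAntidiagonal] at hp
    obtain ⟨he, hn⟩ := hp
    have h2 : 1 ≤ p.2 := by
      rcases Nat.eq_zero_or_pos p.2 with h | h
      · rw [h, Nat.mul_zero] at he; omega
      · exact h
    rw [← faul p.2 h2]
    exact sum_congr rfl (fun b _ => by simp only [Gq])
  rw [sum_congr rfl hpt]
  rw [← sigma_snd 5 n, ← sigma_snd 4 n, ← sigma_snd 3 n, ← sigma_snd 1 n,
    mul_sum, mul_sum, mul_sum, ← sum_sub_distrib, ← sum_add_distrib, ← sum_sub_distrib,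
    ← sum_div]
  congr 1
  exact sum_congr rfl (fun p _ => by ring)


lemma key (n : ℕ) :
    240 * (∑ t ∈ Tset n, (t.2.1:ℚ) * (t.2.2.2:ℚ)^3)
      = 21 * (sigmaFn 5 n : ℚ) + 10 * (sigmaFn 3 n : ℚ) - (sigmaFn 1 n : ℚ)
        - 30 * (n:ℚ) * (sigmaFn 3 n : ℚ) := by
  -- region sums of Gq
  have h1 : ∑ t ∈ (Tset n).filter (fun t => t.2.2.2 < t.2.1),
      (Gq t - Gq (t.1, t.2.1 - t.2.2.2, t.2.2.1 + t.1, t.2.2.2))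
      = ∑ t ∈ (Tset n).filter (fun t => t.2.2.2 < t.2.1), Gq t
        - ∑ t ∈ (Tset n).filter (fun t => t.1 < t.2.2.1), Gq t := by
    rw [sum_sub_distrib, sum_M1 n Gq]
  have h2 : ∑ t ∈ (Tset n).filter (fun t => t.2.1 < t.2.2.2),
      (Gq t - Gq (t.1 + t.2.2.1, t.2.1, t.2.2.1, t.2.2.2 - t.2.1))
      = ∑ t ∈ (Tset n).filter (fun t => t.2.1 < t.2.2.2), Gq t
        - ∑ t ∈ (Tset n).filter (fun t => t.2.2.1 < t.1), Gq t := by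
    rw [sum_sub_distrib, sum_M2 n Gq]
  have hfilter : (Tset n).filter (fun t => (sw t).2.1 < (sw t).2.2.2)
      = (Tset n).filter (fun t => t.2.2.2 < t.2.1) :=
    filter_congr (fun t _ => Iff.rfl)
  have h3 : ∑ t ∈ (Tset n).filter (fun t => t.2.1 < t.2.2.2),
      (Gq t - Gq (t.1 + t.2.2.1, t.2.1, t.2.2.1, t.2.2.2 - t.2.1))
      = ∑ t ∈ (Tset n).filter (fun t => t.2.2.2 < t.2.1),
        (Gq (sw t) - Gq ((sw t).1 + (sw t).2.2.1, (sw t).2.1, (sw t).2.2.1,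
          (sw t).2.2.2 - (sw t).2.1)) := by
    rw [sum_sw n (fun t => t.2.1 < t.2.2.2)
      (fun t => Gq t - Gq (t.1 + t.2.2.1, t.2.1, t.2.2.1, t.2.2.2 - t.2.1)), hfilter]
  -- pointwise Liouville-type identity
  have h4 : ∀ t ∈ (Tset n).filter (fun t => t.2.2.2 < t.2.1),
      8 * Fq t = (Gq t - Gq (t.1, t.2.1 - t.2.2.2, t.2.2.1 + t.1, t.2.2.2))
        + (Gq (sw t) - Gq ((sw t).1 + (sw t).2.2.1, (sw t).2.1, (sw t).2.2.1,
          (sw t).2.2.2 - (sw t).2.1)) := by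
    rintro ⟨a,b,c,d⟩ ht
    simp only [mem_filter, mem_Tset] at ht
    obtain ⟨⟨ha,hb,hc,hd,he⟩, hlt⟩ := ht
    show 8 * Fq (a,b,c,d) = (Gq (a,b,c,d) - Gq (a, b - d, c + a, d))
      + (Gq (c,d,a,b) - Gq (c + a, d, a, b - d))
    have hcast : ((b - d : ℕ) : ℚ) = (b:ℚ) - (d:ℚ) := Nat.cast_sub (le_of_lt hlt)
    simp only [Gq, Fq, hcast]
    ring
  have h5 : ∑ t ∈ (Tset n).filter (fun t => t.2.2.2 < t.2.1), 8 * Fq t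
      = ∑ t ∈ (Tset n).filter (fun t => t.2.2.2 < t.2.1),
          ((Gq t - Gq (t.1, t.2.1 - t.2.2.2, t.2.2.1 + t.1, t.2.2.2))
          + (Gq (sw t) - Gq ((sw t).1 + (sw t).2.2.1, (sw t).2.1, (sw t).2.2.1,
            (sw t).2.2.2 - (sw t).2.1))) :=
    sum_congr rfl h4
  rw [sum_add_distrib, ← h3, h1, h2] at h5
  -- swap symmetry for Fq
  have hFswpt : ∀ t ∈ (Tset n).filter (fun t => (sw t).2.1 < (sw t).2.2.2),
      Fq (sw t) = Fq t := fun t _ => by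
    obtain ⟨a,b,c,d⟩ := t
    show (d:ℚ)*(b:ℚ)^3 + (d:ℚ)^3*(b:ℚ) = (b:ℚ)*(d:ℚ)^3 + (b:ℚ)^3*(d:ℚ)
    ring
  have hFsw : ∑ t ∈ (Tset n).filter (fun t => t.2.1 < t.2.2.2), Fq t
      = ∑ t ∈ (Tset n).filter (fun t => t.2.2.2 < t.2.1), Fq t := by
    rw [sum_sw n (fun t => t.2.1 < t.2.2.2) Fq]
    rw [sum_congr rfl hFswpt, hfilter]
  -- total Fq is twice the target sum
  have hWsw : ∑ t ∈ Tset n, (t.2.1:ℚ) * (t.2.2.2:ℚ)^3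
      = ∑ t ∈ Tset n, (t.2.2.2:ℚ) * (t.2.1:ℚ)^3 := by
    rw [sum_sw_all n (fun t => (t.2.1:ℚ) * (t.2.2.2:ℚ)^3)]
    rfl
  have hWF : ∑ t ∈ Tset n, Fq t = 2 * ∑ t ∈ Tset n, (t.2.1:ℚ) * (t.2.2.2:ℚ)^3 := by
    have : ∀ t ∈ Tset n, Fq t
        = (t.2.1:ℚ) * (t.2.2.2:ℚ)^3 + (t.2.2.2:ℚ) * (t.2.1:ℚ)^3 := fun t _ => by
      simp only [Fq]; ring
    rw [sum_congr rfl this, sum_add_distrib, ← hWsw]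
    ring
  -- assemble
  have htriG := sum_tri n Gq
  have htriG' := sum_tri' n Gq
  have htriF := sum_tri n Fq
  have hsumF : ∑ t ∈ (Tset n).filter (fun t => t.2.2.2 < t.2.1), 8 * Fq t
      = 8 * ∑ t ∈ (Tset n).filter (fun t => t.2.2.2 < t.2.1), Fq t := by
    rw [mul_sum]
  rw [hsumF] at h5
  have hbdG := diag_bd_G n
  have hbdF := diag_bd_F n
  have hacG := diag_ac_G n
  linarith [h5, htriG, htriG', htriF, hFsw, hWF, hbdG, hbdF, hacG]

lemma conv (n : ℕ) :
    ∑ k ∈ range (n+1), (sigmaFn 1 k : ℚ) * (sigmaFn 3 (n - k) : ℚ)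
      = ∑ t ∈ Tset n, (t.2.1:ℚ) * (t.2.2.2:ℚ)^3 := by
  have hpt : ∀ k ∈ range (n+1), (sigmaFn 1 k : ℚ) * (sigmaFn 3 (n - k) : ℚ)
      = ∑ x ∈ (k.divisorsAntidiagonal ×ˢ (n - k).divisorsAntidiagonal),
          ((x.1.2:ℚ))^1 * ((x.2.2:ℚ))^3 := by
    intro k _
    rw [← sigma_snd 1 k, ← sigma_snd 3 (n - k), sum_mul_sum]
    rw [sum_product]
  rw [sum_congr rfl hpt]
  have hs := sum_sigma' (β := ℚ) (range (n+1))
    (fun k => (k.divisorsAntidiagonal ×ˢ (n - k).divisorsAntidiagonal))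
    (fun k x => ((x.1.2:ℚ))^1 * ((x.2.2:ℚ))^3)
  rw [hs]
  refine sum_nbij' (fun (x : (_ : ℕ) × (ℕ × ℕ) × (ℕ × ℕ)) =>
      ((x.2.1.1, x.2.1.2, x.2.2.1, x.2.2.2) : Quad))
    (fun (t : Quad) => (⟨t.1 * t.2.1, ((t.1, t.2.1), (t.2.2.1, t.2.2.2))⟩ :
      (_ : ℕ) × (ℕ × ℕ) × (ℕ × ℕ))) ?_ ?_ ?_ ?_ ?_
  · rintro ⟨k, ⟨a,b⟩, ⟨c,d⟩⟩ h
    simp only [mem_sigma, mem_range, mem_product, Nat.mem_divisorsAntidiagonal] at h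
    obtain ⟨hk, ⟨hab, hk0⟩, ⟨hcd, hn0⟩⟩ := h
    simp only [mem_Tset]
    have h1 : a ≠ 0 ∧ b ≠ 0 := Nat.mul_ne_zero_iff.mp (by rw [hab]; exact hk0)
    have h2 : c ≠ 0 ∧ d ≠ 0 := Nat.mul_ne_zero_iff.mp (by rw [hcd]; exact hn0)
    exact ⟨by omega, by omega, by omega, by omega, by omega⟩
  · rintro ⟨a,b,c,d⟩ h
    simp only [mem_Tset] at h
    obtain ⟨ha, hb, hc, hd, he⟩ := h
    have hab : 0 < a * b := Nat.mul_pos ha hb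
    have hcd : 0 < c * d := Nat.mul_pos hc hd
    have he2 : a * b + c * d = n := he
    show (⟨a * b, ((a, b), (c, d))⟩ : (_ : ℕ) × (ℕ × ℕ) × (ℕ × ℕ))
      ∈ (range (n + 1)).sigma fun k => k.divisorsAntidiagonal ×ˢ (n - k).divisorsAntidiagonal
    rw [mem_sigma, mem_product]
    simp only [mem_range, Nat.mem_divisorsAntidiagonal]
    refine ⟨by omega, ⟨trivial, by omega⟩, by omega, by omega⟩
  · rintro ⟨k, ⟨a,b⟩, ⟨c,d⟩⟩ h
    simp only [mem_sigma, mem_range, mem_product, Nat.mem_divisorsAntidiagonal] at h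
    obtain ⟨hk, ⟨hab, hk0⟩, ⟨hcd, hn0⟩⟩ := h
    subst hab
    rfl
  · rintro ⟨a,b,c,d⟩ _
    rfl
  · rintro ⟨k, ⟨a,b⟩, ⟨c,d⟩⟩ _
    show ((b:ℚ))^1 * ((d:ℚ))^3 = (b:ℚ) * ((d:ℚ))^3
    rw [pow_one]

lemma sigma_zero (j : ℕ) : sigmaFn j 0 = 0 := by simp [sigmaFn]

lemma coeff_E2E4 (n : ℕ) (hn : 1 ≤ n) :
    PowerSeries.coeff n (E₂ * E₄)
      = 240 * (sigmaFn 3 n : ℚ) - 24 * (sigmaFn 1 n : ℚ)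
        - 5760 * ∑ t ∈ Tset n, (t.2.1:ℚ) * (t.2.2.2:ℚ)^3 := by
  rw [PowerSeries.coeff_mul, Nat.sum_antidiagonal_eq_sum_range_succ_mk]
  have hpt : ∀ k ∈ range (n+1),
      PowerSeries.coeff (k, n - k).1 E₂ * PowerSeries.coeff (k, n - k).2 E₄
        = -5760 * ((sigmaFn 1 k : ℚ) * (sigmaFn 3 (n - k) : ℚ))
          + ((if k = 0 then (240 : ℚ) * (sigmaFn 3 n : ℚ) else 0)
            + (if k = n then (-24 : ℚ) * (sigmaFn 1 n : ℚ) else 0)) := by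
    intro k hk
    rw [mem_range] at hk
    simp only [E₂, E₄, PowerSeries.coeff_mk]
    by_cases h0 : k = 0
    · subst h0
      have hnn : ¬ (n - 0 = 0) := by omega
      have hn0 : ¬ (0 = n) := by omega
      have hne : ¬ (n = 0) := by omega
      simp [hnn, hn0, hne, sigma_zero]
    · by_cases hkn : k = n
      · subst hkn
        have : k - k = 0 := by omega
        simp [h0, this, sigma_zero]
      · have h1 : ¬ (n - k = 0) := by omega
        simp only [h0, hkn, h1, if_false, if_neg]
        ring
  rw [sum_congr rfl hpt, sum_add_distrib, sum_add_distrib, ← mul_sum, conv n]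
  rw [sum_ite_eq' (range (n+1)) 0 (fun _ => (240 : ℚ) * (sigmaFn 3 n : ℚ))]
  rw [sum_ite_eq' (range (n+1)) n (fun _ => (-24 : ℚ) * (sigmaFn 1 n : ℚ))]
  have m0 : (0 : ℕ) ∈ range (n+1) := by simp
  have mn : n ∈ range (n+1) := by simp
  rw [if_pos m0, if_pos mn]
  ring

end Aux

/-- The quasimodular differentiation formula `D C₄ = -8 C₂ C₄ + 21 C₆`. -/
theorem stmt7 : Dop C₄ = -8 * C₂ * C₄ + 21 * C₆ := by
  have h8 : (-8 : PowerSeries ℚ) = PowerSeries.C (R := ℚ) (-8) := by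
    rw [map_neg, map_ofNat]
  have h21 : (21 : PowerSeries ℚ) = PowerSeries.C (R := ℚ) 21 := by
    rw [map_ofNat]
  have h1 : -8 * C₂ * C₄ + 21 * C₆
      = PowerSeries.C (R := ℚ) (1/8640) * (E₂ * E₄) + PowerSeries.C (R := ℚ) (-(1/8640)) * E₆ := by
    rw [C₂, C₄, C₆, PowerSeries.smul_eq_C_mul, PowerSeries.smul_eq_C_mul,
      PowerSeries.smul_eq_C_mul, h8, h21]
    have e1 : PowerSeries.C (R := ℚ) (-8) * (PowerSeries.C (R := ℚ) (-1/24) * E₂)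
        * (PowerSeries.C (R := ℚ) (1/2880) * E₄)
        + PowerSeries.C (R := ℚ) 21 * (PowerSeries.C (R := ℚ) (-1/181440) * E₆)
        = (PowerSeries.C (R := ℚ) (-8) * PowerSeries.C (R := ℚ) (-1/24) * PowerSeries.C (R := ℚ) (1/2880))
            * (E₂ * E₄)
          + (PowerSeries.C (R := ℚ) 21 * PowerSeries.C (R := ℚ) (-1/181440)) * E₆ := by ring
    rw [e1, ← map_mul, ← map_mul, ← map_mul]
    norm_num
  rw [h1]
  ext n
  rw [map_add, PowerSeries.coeff_C_mul, PowerSeries.coeff_C_mul]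
  rw [Dop, PowerSeries.coeff_mk, C₄, map_smul, smul_eq_mul]
  rcases Nat.eq_zero_or_pos n with h0 | hpos
  · subst h0
    simp [PowerSeries.coeff_mul, E₂, E₄, E₆, PowerSeries.coeff_mk]
  · rw [coeff_E2E4 n hpos]
    have hE4 : PowerSeries.coeff n E₄ = 240 * (sigmaFn 3 n : ℚ) := by
      rw [E₄, PowerSeries.coeff_mk, if_neg (by omega)]
    have hE6 : PowerSeries.coeff n E₆ = -504 * (sigmaFn 5 n : ℚ) := by
      rw [E₆, PowerSeries.coeff_mk, if_neg (by omega)]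
    rw [hE4, hE6]
    linear_combination (1/360 : ℚ) * key n
end

section
/- For every real number q with 0 < q < 1, the function q ↦ 1/Δ(q) is differentiable on (0,1) and satisfies q · (d/dq)(1/Δ(q)) = 24·C₂(q)/Δ(q), equivalently q·Δ′(q) = E₂(q)·Δ(q). (This is the paper's listed formula q·(d/dq)(1/Δ) = 24C₂/Δ for the discriminant modular form.) -/
/-- The Eisenstein series `E₂(q) = 1 - 24 ∑_{n≥1} σ₁(n) qⁿ` as a real function. -/
noncomputable def E2r (q : ℝ) : ℝ := 1 - 24 * ∑' n : ℕ, (sigmaFn 1 (n + 1) : ℝ) * q ^ (n + 1)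

/-- The Eisenstein series `E₄(q) = 1 + 240 ∑_{n≥1} σ₃(n) qⁿ` as a real function. -/
noncomputable def E4r (q : ℝ) : ℝ := 1 + 240 * ∑' n : ℕ, (sigmaFn 3 (n + 1) : ℝ) * q ^ (n + 1)

/-- The Eisenstein series `E₆(q) = 1 - 504 ∑_{n≥1} σ₅(n) qⁿ` as a real function. -/
noncomputable def E6r (q : ℝ) : ℝ := 1 - 504 * ∑' n : ℕ, (sigmaFn 5 (n + 1) : ℝ) * q ^ (n + 1)

/-- `C₂ = -E₂/24`. -/
noncomputable def C2r (q : ℝ) : ℝ := -E2r q / 24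

/-- `C₄ = E₄/2880`. -/
noncomputable def C4r (q : ℝ) : ℝ := E4r q / 2880

/-- `C₆ = -E₆/181440`. -/
noncomputable def C6r (q : ℝ) : ℝ := -E6r q / 181440

/-- The discriminant `Δ(q) = q ∏_{n≥1} (1-qⁿ)^{24}`. -/
noncomputable def DeltaR (q : ℝ) : ℝ := q * ∏' n : ℕ, (1 - q ^ (n + 1)) ^ 24

/-- The operator `q·d/dq` on real functions. -/
noncomputable def Dfun (f : ℝ → ℝ) : ℝ → ℝ := fun q => q * deriv f q






open Real


theorem one_sub_pow_pos' {x : ℝ} (h0 : 0 ≤ x) (h1 : x < 1) (n : ℕ) : 0 < 1 - x ^ (n+1) := by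
  have h2 : x ^ (n+1) < 1 := pow_lt_one₀ h0 h1 (Nat.succ_ne_zero n)
  linarith

theorem summable_logterm {x : ℝ} (h0 : 0 ≤ x) (h1 : x < 1) :
    Summable fun n : ℕ => Real.log (1 - x ^ (n+1)) := by
  have hx1 : 0 < 1 - x := by linarith
  refine Summable.of_norm ?_
  refine Summable.of_nonneg_of_le (fun n => norm_nonneg _) (fun n => ?_)
    ((summable_geometric_of_lt_one h0 h1).mul_right (1-x)⁻¹)
  set y := x ^ (n+1) with hy
  have hy0 : 0 ≤ y := pow_nonneg h0 _
  have hyx : y ≤ x := by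
    calc y ≤ x ^ 1 := pow_le_pow_of_le_one h0 h1.le (by omega)
      _ = x := pow_one x
  have hy1 : 0 < 1 - y := by linarith
  have hxn : y ≤ x ^ n := by
    rw [hy, pow_succ]
    nlinarith [pow_nonneg h0 n, pow_le_one₀ h0 h1.le (n := n)]
  have hlog : ‖Real.log (1 - y)‖ = - Real.log (1 - y) := by
    rw [Real.norm_eq_abs, abs_of_nonpos (Real.log_nonpos (by linarith) (by linarith))]
  rw [hlog]
  have h2 : Real.log (1 - y)⁻¹ ≤ (1 - y)⁻¹ - 1 := Real.log_le_sub_one_of_pos (by positivity)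
  rw [← Real.log_inv] at *
  have h3 : (1 - y)⁻¹ - 1 = y * (1 - y)⁻¹ := by field_simp; ring
  have h4 : y * (1 - y)⁻¹ ≤ x ^ n * (1 - x)⁻¹ :=
    mul_le_mul hxn (inv_anti₀ hx1 (by linarith)) (by positivity) (by positivity)
  linarith

theorem hasDerivAt_logterm (n : ℕ) {x : ℝ} (h0 : 0 ≤ x) (h1 : x < 1) :
    HasDerivAt (fun y : ℝ => Real.log (1 - y ^ (n+1)))
      (-(((n:ℝ)+1) * x ^ n) / (1 - x ^ (n+1))) x := by
  have h := ((hasDerivAt_pow (n+1) x).const_sub 1).log (ne_of_gt (one_sub_pow_pos' h0 h1 n))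
  convert h using 2
  push_cast [Nat.add_sub_cancel]
  ring



def lamEquiv : (Σ m : ℕ, {p : ℕ × ℕ // p ∈ Nat.divisorsAntidiagonal (m+1)}) ≃ ℕ × ℕ where
  toFun s := (s.2.1.1 - 1, s.2.1.2 - 1)
  invFun p := ⟨(p.1+1)*(p.2+1) - 1, ⟨(p.1+1, p.2+1), by
      rw [Nat.mem_divisorsAntidiagonal]
      have h : 0 < (p.1+1)*(p.2+1) := Nat.succ_mul_pos _ (Nat.succ_pos _)
      exact ⟨(Nat.succ_pred_eq_of_pos h).symm, by omega⟩⟩⟩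
  left_inv := by
    rintro ⟨m, ⟨⟨a, b⟩, hp⟩⟩
    rw [Nat.mem_divisorsAntidiagonal] at hp
    obtain ⟨h1, h2⟩ := hp
    have ha : 0 < a := Nat.pos_of_ne_zero (by rintro rfl; simp at h1)
    have hb : 0 < b := Nat.pos_of_ne_zero (by rintro rfl; simp at h1)
    have ha' : a - 1 + 1 = a := Nat.succ_pred_eq_of_pos ha
    have hb' : b - 1 + 1 = b := Nat.succ_pred_eq_of_pos hb
    have hm : m = (a - 1 + 1) * (b - 1 + 1) - 1 := by rw [ha', hb', h1]; simp
    simp only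
    obtain rfl := hm
    congr 1
    exact Subtype.ext (by rw [Prod.mk.injEq]; exact ⟨ha', hb'⟩)
  right_inv := by rintro ⟨n, k⟩; simp

theorem lambert {q : ℝ} (hq0 : 0 < q) (hq1 : q < 1) :
    (∑' n : ℕ, ((n : ℝ) + 1) * q ^ (n+1) / (1 - q ^ (n+1)) =
      ∑' n : ℕ, (sigmaFn 1 (n + 1) : ℝ) * q ^ (n + 1)) ∧
    Summable (fun n : ℕ => ((n : ℝ) + 1) * q ^ (n+1) / (1 - q ^ (n+1))) := by
  have hpow : ∀ n : ℕ, q ^ (n+1) < 1 := fun n => pow_lt_one₀ (le_of_lt hq0) hq1 (Nat.succ_ne_zero n)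
  have hden : ∀ n : ℕ, 0 < 1 - q ^ (n+1) := fun n => by linarith [hpow n]
  have hq1' : 0 < 1 - q := by linarith
  set W : ℕ × ℕ → ℝ := fun p => ((p.1 : ℝ) + 1) * q ^ ((p.1+1)*(p.2+1)) with hW
  have hWnn : 0 ≤ W := fun p => by positivity
  have hfib : ∀ n : ℕ, HasSum (fun k => W (n, k)) (((n:ℝ)+1) * q ^ (n+1) / (1 - q ^ (n+1))) := by
    intro n
    have hg : HasSum (fun k : ℕ => (q ^ (n+1)) ^ k) (1 - q ^ (n+1))⁻¹ :=
      hasSum_geometric_of_lt_one (by positivity) (hpow n)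
    have h2 := hg.mul_left (((n:ℝ)+1) * q ^ (n+1))
    have heq : (fun k => W (n, k)) = fun k : ℕ => ((n:ℝ)+1) * q ^ (n+1) * (q ^ (n+1)) ^ k := by
      funext k
      simp only [hW]
      rw [show (n+1)*(k+1) = (n+1) + (n+1)*k by ring, pow_add, pow_mul]
      ring
    rw [heq, div_eq_mul_inv]
    exact h2
  have hsumW : Summable W := by
    rw [summable_prod_of_nonneg hWnn]
    refine ⟨fun n => (hfib n).summable, ?_⟩
    refine Summable.of_nonneg_of_le (f := fun n : ℕ => ((n:ℝ)+1) * q ^ (n+1) * (1-q)⁻¹)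
      (fun n => ?_) (fun n => ?_) ?_
    · rw [(hfib n).tsum_eq]
      exact div_nonneg (by positivity) (hden n).le
    · have hq' : q ^ (n+1) ≤ q := by
        calc q^(n+1) ≤ q^1 := pow_le_pow_of_le_one hq0.le hq1.le (by omega)
          _ = q := pow_one q
      rw [(hfib n).tsum_eq, div_eq_mul_inv]
      exact mul_le_mul_of_nonneg_left (inv_anti₀ hq1' (by linarith)) (by positivity)
    · apply Summable.mul_right
      have h1 : Summable fun n : ℕ => ((n:ℝ))^1 * q ^ n :=
        summable_pow_mul_geometric_of_norm_lt_one 1 (by rwa [Real.norm_eq_abs, abs_of_pos hq0])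
      have h2 : Summable fun n : ℕ => q ^ n := summable_geometric_of_lt_one hq0.le hq1
      apply ((h1.add h2).mul_right q).congr
      intro n
      simp only [pow_one, pow_succ]
      ring
  have hL : ∑' n : ℕ, ((n : ℝ) + 1) * q ^ (n+1) / (1 - q ^ (n+1)) = ∑' p : ℕ × ℕ, W p := by
    rw [Summable.tsum_prod' hsumW (fun n => (hfib n).summable)]
    exact tsum_congr fun n => ((hfib n).tsum_eq).symm
  have hR : ∑' p : ℕ × ℕ, W p = ∑' n : ℕ, (sigmaFn 1 (n + 1) : ℝ) * q ^ (n + 1) := by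
    have hs : Summable (fun c : (Σ m : ℕ, {p : ℕ × ℕ // p ∈ Nat.divisorsAntidiagonal (m+1)}) =>
        W (lamEquiv c)) := (lamEquiv.summable_iff.2 hsumW).congr fun _ => rfl
    rw [← Equiv.tsum_eq lamEquiv W, Summable.tsum_sigma hs]
    apply tsum_congr
    intro m
    have key : ∀ p : {p : ℕ × ℕ // p ∈ Nat.divisorsAntidiagonal (m+1)},
        W (lamEquiv ⟨m, p⟩) = (fun p : ℕ × ℕ => (p.1 : ℝ) * q ^ (m+1)) (p : ℕ × ℕ) := by
      rintro ⟨⟨a, b⟩, hp⟩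
      rw [Nat.mem_divisorsAntidiagonal] at hp
      obtain ⟨h1, h2⟩ := hp
      have ha : 0 < a := Nat.pos_of_ne_zero (by rintro rfl; simp at h1)
      have hb : 0 < b := Nat.pos_of_ne_zero (by rintro rfl; simp at h1)
      have ha' : a - 1 + 1 = a := Nat.succ_pred_eq_of_pos ha
      have hb' : b - 1 + 1 = b := Nat.succ_pred_eq_of_pos hb
      have e1 : ((a - 1 : ℕ) : ℝ) + 1 = (a : ℝ) := by
        rw [show ((a:ℝ)) = ((a - 1 + 1 : ℕ) : ℝ) by rw [ha'], Nat.cast_add, Nat.cast_one]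
      simp only [lamEquiv, Equiv.coe_fn_mk, hW]
      rw [ha', hb', h1, e1]
    rw [tsum_congr key, Finset.tsum_subtype ((m+1).divisorsAntidiagonal) (fun p : ℕ × ℕ => (p.1:ℝ) * q^(m+1)), ← Finset.sum_mul]
    congr 1
    rw [Nat.sum_divisorsAntidiagonal (fun a _ => (a : ℝ)), sigmaFn]
    push_cast
    simp
  exact ⟨hL.trans hR, by
    rw [summable_prod_of_nonneg hWnn] at hsumW
    exact hsumW.2.congr fun n => (hfib n).tsum_eq⟩


/-- For `0 < q < 1`, `q ↦ 1/Δ(q)` is differentiable and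
`q (1/Δ)′(q) = 24 C₂(q)/Δ(q)`, equivalently `q Δ′(q) = E₂(q) Δ(q)`. -/
theorem stmt10 (q : ℝ) (hq0 : 0 < q) (hq1 : q < 1) :
    DifferentiableAt ℝ (fun x => 1 / DeltaR x) q ∧
    q * deriv (fun x => 1 / DeltaR x) q = 24 * C2r q / DeltaR q ∧
    q * deriv DeltaR q = E2r q * DeltaR q := by
  -- setup
  set b : ℝ := (1 + q) / 2 with hbdef
  have hqb : q < b := by rw [hbdef]; linarith
  have hb0 : 0 < b := by rw [hbdef]; linarith
  have hb1 : b < 1 := by rw [hbdef]; linarith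
  have hb1' : 0 < 1 - b := by linarith
  -- the log series L and its derivative
  set g' : ℕ → ℝ → ℝ := fun n x => -(((n:ℝ)+1) * x ^ n) / (1 - x ^ (n+1)) with hg'def
  set L : ℝ → ℝ := fun z => ∑' n : ℕ, Real.log (1 - z ^ (n+1)) with hLdef
  set S : ℝ := ∑' n : ℕ, g' n q with hSdef
  have hu : Summable (fun n : ℕ => ((n:ℝ)+1) * b ^ n * (1-b)⁻¹) := by
    apply Summable.mul_right
    have h1 : Summable fun n : ℕ => ((n:ℝ))^1 * b ^ n :=
      summable_pow_mul_geometric_of_norm_lt_one 1 (by rwa [Real.norm_eq_abs, abs_of_pos hb0])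
    have h2 : Summable fun n : ℕ => b ^ n := summable_geometric_of_lt_one hb0.le hb1
    apply (h1.add h2).congr
    intro n
    simp only [pow_one]
    ring
  have hLd : HasDerivAt L S q := by
    rw [hLdef, hSdef]
    apply hasDerivAt_tsum_of_isPreconnected hu isOpen_Ioo isPreconnected_Ioo
      (t := Set.Ioo (0:ℝ) b) (y₀ := q)
      (fun n y hy => hasDerivAt_logterm n hy.1.le (lt_trans hy.2 hb1))
      (fun n y hy => ?_) ⟨hq0, hqb⟩ (summable_logterm hq0.le hq1) ⟨hq0, hqb⟩
    -- bound
    obtain ⟨hy0, hyb⟩ := hy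
    have hy1 : y < 1 := lt_trans hyb hb1
    have hypow : y ^ (n+1) ≤ y := by
      calc y ^ (n+1) ≤ y ^ 1 := pow_le_pow_of_le_one hy0.le hy1.le (by omega)
        _ = y := pow_one y
    have hden : 0 < 1 - y ^ (n+1) := one_sub_pow_pos' hy0.le hy1 n
    rw [norm_div, Real.norm_eq_abs, Real.norm_eq_abs, abs_of_pos hden,
      abs_neg, abs_of_nonneg (by positivity)]
    rw [div_eq_mul_inv]
    apply mul_le_mul
    · have : y ^ n ≤ b ^ n := pow_le_pow_left₀ hy0.le hyb.le n
      nlinarith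
    · exact inv_anti₀ hb1' (by linarith)
    · positivity
    · positivity
  -- the product P
  set P : ℝ → ℝ := fun x => ∏' n : ℕ, (1 - x ^ (n+1)) ^ 24 with hPdef
  have hPeq : ∀ x, 0 ≤ x → x < 1 → P x = Real.exp (24 * L x) := by
    intro x hx0 hx1
    have hsum := summable_logterm hx0 hx1
    have h24 : HasSum (fun n : ℕ => 24 * Real.log (1 - x^(n+1))) (24 * L x) :=
      hsum.hasSum.mul_left 24
    have hprod := h24.rexp
    have hfun : (rexp ∘ fun n : ℕ => 24 * Real.log (1 - x^(n+1)))
        = fun n : ℕ => (1 - x^(n+1))^24 := by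
      funext n
      rw [Function.comp_apply, show (24:ℝ) = ((24:ℕ):ℝ) by norm_num, Real.exp_nat_mul,
        Real.exp_log (one_sub_pow_pos' hx0 hx1 n)]
    rw [hfun] at hprod
    exact hprod.tprod_eq
  have hPd : HasDerivAt P (P q * (24 * S)) q := by
    have hExpD : HasDerivAt (fun z => Real.exp (24 * L z)) (Real.exp (24 * L q) * (24 * S)) q :=
      (hLd.const_mul 24).exp
    have hev : P =ᶠ[nhds q] (fun z => Real.exp (24 * L z)) := by
      filter_upwards [IsOpen.mem_nhds isOpen_Ioo (⟨hq0, hq1⟩ : q ∈ Set.Ioo (0:ℝ) 1)] with z hz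
      exact hPeq z hz.1.le hz.2
    have h := hExpD.congr_of_eventuallyEq hev
    rwa [← hPeq q hq0.le hq1] at h
  have hPq_pos : 0 < P q := by rw [hPeq q hq0.le hq1]; exact Real.exp_pos _
  have hDq : DeltaR q = q * P q := rfl
  have hDpos : 0 < DeltaR q := by rw [hDq]; exact mul_pos hq0 hPq_pos
  have hΔd : HasDerivAt DeltaR (P q + q * (P q * (24 * S))) q := by
    have h := (hasDerivAt_id q).mul hPd
    have h2 : HasDerivAt (fun y => y * P y) (1 * P q + q * (P q * (24 * S))) q := h
    rw [one_mul] at h2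
    exact h2
  -- E₂ identity
  have hden : ∀ n : ℕ, 0 < 1 - q ^ (n+1) := fun n => one_sub_pow_pos' hq0.le hq1 n
  have hqS : q * S = - ∑' n : ℕ, ((n : ℝ) + 1) * q ^ (n+1) / (1 - q ^ (n+1)) := by
    rw [hSdef, ← tsum_mul_left, ← tsum_neg]
    apply tsum_congr
    intro n
    show q * (-(((n:ℝ)+1) * q^n) / (1 - q^(n+1))) = -(((n:ℝ)+1) * q^(n+1) / (1 - q^(n+1)))
    rw [pow_succ]
    ring
  have hE2 : E2r q = 1 + 24 * (q * S) := by
    rw [E2r, hqS, (lambert hq0 hq1).1]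
    ring
  -- part 3
  have h3 : q * deriv DeltaR q = E2r q * DeltaR q := by
    rw [hΔd.deriv, hE2, hDq]
    ring
  -- inverse function
  have hinv : HasDerivAt (fun x => 1 / DeltaR x)
      (-(P q + q * (P q * (24 * S))) / (DeltaR q) ^ 2) q := by
    have h := hΔd.inv hDpos.ne'
    simpa [one_div, Pi.inv_def] using h
  refine ⟨hinv.differentiableAt, ?_, h3⟩
  rw [hinv.deriv, C2r]
  have hΔ' : deriv DeltaR q = P q + q * (P q * (24 * S)) := hΔd.deriv
  rw [hΔ'] at h3
  field_simp
  nlinarith [h3, sq_nonneg (DeltaR q)]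
end
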